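/- arXiv:1805.02519 — 6 statements merged into one kernel-verified Lean document; each statement's English description precedes it below -/
import Mathlib

section
/- If T is a subcubic tree of order n with independence number α = n/2, then the number of maximum independent sets of T is at most f(α+2), where f is the Fibonacci sequence (f(0)=0, f(1)=1). -/
open SimpleGraph

/-- A set of vertices is independent if its vertices are pairwise non-adjacent. -/
def SimpleGraph.IsIndepSet' {V : Type*} (G : SimpleGraph V) (s : Set V) : Prop :=
  s.Pairwise (fun u v => ¬ G.Adj u v)

/-- The independence number of a graph. -/
noncomputable def indepNum {V : Type*} (G : SimpleGraph V) : ℕ :=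
  sSup {k | ∃ s : Finset V, G.IsIndepSet' ↑s ∧ s.card = k}

/-- The number of maximum independent sets of a graph. -/
noncomputable def numMaxIndep {V : Type*} (G : SimpleGraph V) : ℕ :=
  {s : Finset V | G.IsIndepSet' ↑s ∧ s.card = _root_.indepNum G}.ncard

open SimpleGraph Finset

set_option linter.unusedSectionVars false

noncomputable section

namespace Stmt9Aux

open scoped Classical

variable {V : Type*} [Fintype V] (T : SimpleGraph V)

/-- neighbors of `v` inside `S` -/
def nbrS (S : Finset V) (v : V) : Finset V := S.filter (fun y => T.Adj v y)

/-- one adjacency step inside `S` -/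
def stepR (S : Finset V) (a b : V) : Prop := a ∈ S ∧ b ∈ S ∧ T.Adj a b

/-- reachability inside `S` -/
def RIn (S : Finset V) : V → V → Prop := Relation.ReflTransGen (stepR T S)

/-- connected component of `x` inside `S` -/
def comp (S : Finset V) (x : V) : Finset V := S.filter (fun y => RIn T S x y)

/-- `S` is connected (in `T`) -/
def connF (S : Finset V) : Prop := ∀ a ∈ S, ∀ b ∈ S, RIn T S a b

/-- independent set -/
def indepF (s : Finset V) : Prop := ∀ a ∈ s, ∀ b ∈ s, ¬ T.Adj a b

/-- all independent subsets have size at most half -/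
def HH (S : Finset V) : Prop := ∀ s ⊆ S, indepF T s → 2 * s.card ≤ S.card

/-- `f` is a perfect matching of `S` -/
def PMF (S : Finset V) (f : V → V) : Prop :=
  ∀ x ∈ S, f x ∈ S ∧ T.Adj x (f x) ∧ f (f x) = x

/-- "counted" sets: independent subsets of `S` of size `|S|/2` avoiding `W` -/
def cset (S W : Finset V) : Finset (Finset V) :=
  S.powerset.filter (fun s => indepF T s ∧ 2 * s.card = S.card ∧ ∀ w ∈ W, w ∉ s)

/-- number of counted sets -/
def NAset (S W : Finset V) : ℕ := (cset T S W).card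

variable {T}

lemma stepR_symm {S : Finset V} {a b : V} (h : stepR T S a b) : stepR T S b a :=
  ⟨h.2.1, h.1, h.2.2.symm⟩

lemma RIn.symm {S : Finset V} {a b : V} (h : RIn T S a b) : RIn T S b a := by
  induction h with
  | refl => exact Relation.ReflTransGen.refl
  | tail h1 h2 ih => exact Relation.ReflTransGen.head (stepR_symm h2) ih

lemma RIn.trans {S : Finset V} {a b c : V} (h : RIn T S a b) (h2 : RIn T S b c) :
    RIn T S a c := Relation.ReflTransGen.trans h h2

lemma RIn.mono {S S' : Finset V} (hss : S ⊆ S') {a b : V} (h : RIn T S a b) :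
    RIn T S' a b :=
  Relation.ReflTransGen.mono ((fun _ _ hx => ⟨hss hx.1, hss hx.2.1, hx.2.2⟩ :
    ∀ x y, stepR T S x y → stepR T S' x y)) _ _ h

lemma mem_comp {S : Finset V} {x y : V} : y ∈ comp T S x ↔ y ∈ S ∧ RIn T S x y := by
  simp [comp]

lemma comp_subset {S : Finset V} {x : V} : comp T S x ⊆ S := filter_subset _ _

lemma mem_comp_self {S : Finset V} {x : V} (hx : x ∈ S) : x ∈ comp T S x :=
  mem_comp.2 ⟨hx, Relation.ReflTransGen.refl⟩

lemma comp_closed {S : Finset V} {x y z : V} (hy : y ∈ comp T S x) (hz : z ∈ S)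
    (hadj : T.Adj y z) : z ∈ comp T S x := by
  rw [mem_comp] at hy ⊢
  exact ⟨hz, hy.2.trans (Relation.ReflTransGen.single ⟨hy.1, hz, hadj⟩)⟩

lemma comp_eq_of_mem {S : Finset V} {x y : V} (hy : y ∈ comp T S x) :
    comp T S y = comp T S x := by
  rw [mem_comp] at hy
  ext z
  rw [mem_comp, mem_comp]
  exact ⟨fun hz => ⟨hz.1, hy.2.trans hz.2⟩, fun hz => ⟨hz.1, hy.2.symm.trans hz.2⟩⟩

lemma RIn_restrict {S : Finset V} {x y : V} (hx : x ∈ S) (h : RIn T S x y) :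
    y ∈ comp T S x ∧ RIn T (comp T S x) x y := by
  induction h with
  | refl => exact ⟨mem_comp_self hx, Relation.ReflTransGen.refl⟩
  | @tail b c h1 h2 ih =>
    have hc : c ∈ comp T S x := comp_closed ih.1 h2.2.1 h2.2.2
    exact ⟨hc, ih.2.trans (Relation.ReflTransGen.single ⟨ih.1, hc, h2.2.2⟩)⟩

lemma connF_comp {S : Finset V} {x : V} (hx : x ∈ S) : connF T (comp T S x) := by
  intro a ha b hb
  rw [mem_comp] at ha hb
  exact ((RIn_restrict hx ha.2).2.symm).trans (RIn_restrict hx hb.2).2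

lemma RIn.toWalk {S : Finset V} {a b : V} (h : RIn T S a b) (ha : a ∈ S) :
    ∃ p : T.Walk a b, ∀ z ∈ p.support, z ∈ S := by
  induction h using Relation.ReflTransGen.head_induction_on with
  | refl => exact ⟨Walk.nil, by simp [ha]⟩
  | @head a' b' hab h ih =>
    obtain ⟨p, hp⟩ := ih hab.2.1
    exact ⟨Walk.cons hab.2.2 p, by
      intro z hz
      rw [Walk.support_cons] at hz
      rcases List.mem_cons.mp hz with rfl | hz'
      · exact hab.1
      · exact hp _ hz'⟩


section Acyclic

variable (hT : T.IsTree)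
include hT

/-- If `a ∉ X` has two neighbors `y₁ y₂ ∈ X` that are connected within `X`,
then `y₁ = y₂` (otherwise there would be a cycle). -/
lemma keyA {X : Finset V} {a y₁ y₂ : V} (ha : a ∉ X) (hy₁ : y₁ ∈ X) (hy₂ : y₂ ∈ X)
    (h1 : T.Adj a y₁) (h2 : T.Adj a y₂) (hR : RIn T X y₁ y₂) : y₁ = y₂ := by
  by_contra hne
  obtain ⟨p, hp⟩ := hR.toWalk hy₁
  have hq : ∀ z ∈ p.toPath.1.support, z ∈ X := fun z hz =>
    hp z (Walk.support_toPath_subset p hz)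
  have hP2 : (Walk.cons h1 p.toPath.1).IsPath := by
    refine p.toPath.2.cons ?_
    intro hmem
    exact ha (hq a hmem)
  have hP1 : (Walk.cons h2 (Walk.nil : T.Walk y₂ y₂)).IsPath := by
    simp only [Walk.cons_isPath_iff, Walk.isPath_iff_eq_nil, Walk.support_nil,
      List.mem_singleton]
    exact ⟨trivial, fun h => ha (h ▸ hy₂)⟩
  have := (hT.existsUnique_path a y₂).unique hP2 hP1
  have hy1mem : y₁ ∈ (Walk.cons h2 (Walk.nil : T.Walk y₂ y₂)).support := by
    rw [← this]
    simp
  simp only [Walk.support_cons, Walk.support_nil, List.mem_cons, List.mem_singleton] at hy1mem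
  rcases hy1mem with rfl | rfl | h
  · exact ha hy₁
  · exact hne rfl
  · exact absurd h List.not_mem_nil

/-- If `a₁ ~ a₂` are adjacent outside `X`, and `y₁, y₂ ∈ X` with `a₁ ~ y₁`, `a₂ ~ y₂`
and `y₁, y₂` connected in `X`, we get a cycle: contradiction. -/
lemma keyB {X : Finset V} {a₁ a₂ y₁ y₂ : V} (h12 : T.Adj a₁ a₂) (ha₁ : a₁ ∉ X)
    (ha₂ : a₂ ∉ X) (hy₁ : y₁ ∈ X) (hy₂ : y₂ ∈ X) (h1 : T.Adj a₁ y₁) (h2 : T.Adj a₂ y₂)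
    (hR : RIn T X y₁ y₂) : False := by
  obtain ⟨p, hp⟩ := hR.toWalk hy₁
  have hq : ∀ z ∈ p.toPath.1.support, z ∈ X := fun z hz =>
    hp z (Walk.support_toPath_subset p hz)
  -- path 1 : a₂ → a₁ → y₁   ;   path 2 : a₂ → y₂ → ... → y₁ (reverse of p.toPath)
  have hP1 : (Walk.cons h12.symm (Walk.cons h1 (Walk.nil : T.Walk y₁ y₁))).IsPath := by
    simp only [Walk.cons_isPath_iff, Walk.support_cons, Walk.support_nil]
    refine ⟨⟨by simp, by simp; exact fun h => ha₁ (h ▸ hy₁)⟩, ?_⟩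
    simp only [List.mem_cons, List.mem_singleton]
    rintro (rfl | rfl | h)
    · exact T.loopless.irrefl _ h12
    · exact ha₂ hy₁
    · exact absurd h List.not_mem_nil
  have hP2 : (Walk.cons h2 p.toPath.1.reverse).IsPath := by
    refine (p.toPath.2.reverse).cons ?_
    rw [Walk.support_reverse]
    intro hmem
    exact ha₂ (hq a₂ (List.mem_reverse.mp hmem))
  have := (hT.existsUnique_path a₂ y₁).unique hP1 hP2
  have ha1mem : a₁ ∈ (Walk.cons h2 p.toPath.1.reverse).support := by
    rw [← this]; simp
  rw [Walk.support_cons] at ha1mem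
  rcases List.mem_cons.mp ha1mem with h' | h
  · exact T.loopless.irrefl _ (h' ▸ h12)
  · rw [Walk.support_reverse] at h
    exact ha₁ (hq a₁ (List.mem_reverse.mp h))

end Acyclic

section Fib

open Nat

lemma fib_mul_le {m n : ℕ} : fib (m + 1) * fib (n + 1) ≤ fib (m + n + 1) := by
  rw [Nat.fib_add]
  exact Nat.le_add_left _ _

lemma fib_ineq_1 (a b : ℕ) : fib (a + 1) * fib (b + 1) ≤ fib (a + b + 1) := fib_mul_le

lemma fib_ineq_2 (a b : ℕ) : fib (a + 2) * fib (b + 1) ≤ fib (a + b + 2) := by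
  have := fib_mul_le (m := a + 1) (n := b)
  convert this using 2 <;> omega

lemma fib_ineq_3 (a b : ℕ) : fib (a + 2) * fib (b + 2) ≤ fib (a + b + 3) := by
  have := fib_mul_le (m := a + 1) (n := b + 1)
  convert this using 2 <;> omega

lemma fib_identity (a b : ℕ) :
    fib (a + 2) * fib (b + 2) + fib (a + 1) * fib (b + 1) = fib (a + b + 3) := by
  have h := Nat.fib_add (a + 1) (b + 1)
  rw [show a + 1 + (b + 1) + 1 = a + b + 3 by omega,
    show a + 1 + 1 = a + 2 by rfl, show b + 1 + 1 = b + 2 by rfl] at h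
  omega

end Fib

section Leaf

lemma nbrS_subset {S : Finset V} {v : V} : nbrS T S v ⊆ S := filter_subset _ _

lemma mem_nbrS {S : Finset V} {v z : V} : z ∈ nbrS T S v ↔ z ∈ S ∧ T.Adj v z := by
  simp [nbrS]

/-- every connected set with ≥ 2 elements has a leaf different from any designated vertex -/
lemma leafEx (hT : T.IsTree) : ∀ (n : ℕ) (S : Finset V), S.card = n → connF T S →
    ∀ a ∈ S, 2 ≤ S.card → ∃ u ∈ S, u ≠ a ∧ ∃ v, nbrS T S u = {v} := by
  intro n
  induction n using Nat.strong_induction_on with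
  | _ n IH =>
  rintro S rfl hconn a ha hcard
  obtain ⟨b, hb, hba⟩ := Finset.exists_mem_ne (s := S) (by omega) a
  -- first step of a walk from a to b
  obtain ⟨y₀, hstep, -⟩ := (Relation.ReflTransGen.cases_head (hconn a ha b hb)).resolve_left
    (fun h => hba h.symm)
  have hay₀ : T.Adj a y₀ := hstep.2.2
  have hy₀S : y₀ ∈ S := hstep.2.1
  set X := S.erase a with hX
  have hy₀X : y₀ ∈ X := Finset.mem_erase.2 ⟨hay₀.ne', hy₀S⟩
  have haX : a ∉ X := Finset.notMem_erase _ _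
  have hXcard : X.card = S.card - 1 := Finset.card_erase_of_mem ha
  by_cases hCX : comp T X y₀ = X
  · have hconnX : connF T X := by
      intro i hi j hj
      have hi' : RIn T X y₀ i := (mem_comp.1 (show i ∈ comp T X y₀ by rw [hCX]; exact hi)).2
      have hj' : RIn T X y₀ j := (mem_comp.1 (show j ∈ comp T X y₀ by rw [hCX]; exact hj)).2
      exact hi'.symm.trans hj'
    by_cases hX1 : X.card = 1
    · -- S = {a, y₀}
      obtain ⟨z, hz0⟩ := Finset.card_eq_one.1 hX1
      have hz : X = {y₀} := by
        have := hy₀X; rw [hz0, Finset.mem_singleton] at this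
        rw [hz0, this]
      refine ⟨y₀, hy₀S, hay₀.ne', a, ?_⟩
      ext w
      simp only [mem_nbrS, Finset.mem_singleton]
      constructor
      · rintro ⟨hwS, hadj⟩
        by_contra hwa
        have hwX : w ∈ X := Finset.mem_erase.2 ⟨hwa, hwS⟩
        rw [hz, Finset.mem_singleton] at hwX
        exact T.loopless.irrefl _ (hwX ▸ hadj)
      · rintro rfl
        exact ⟨ha, hay₀.symm⟩
    · have hX2 : 2 ≤ X.card := by omega
      obtain ⟨u, huX, huy₀, v, hv⟩ := IH X.card (by omega) X rfl hconnX y₀ hy₀X hX2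
      have hnadj : ¬ T.Adj a u := by
        intro h
        exact huy₀ (keyA hT haX hy₀X huX hay₀ h
          (mem_comp.1 (show u ∈ comp T X y₀ by rw [hCX]; exact huX)).2).symm
      have huS : u ∈ S := Finset.mem_of_mem_erase huX
      refine ⟨u, huS, fun h => haX (h ▸ huX), v, ?_⟩
      rw [← hv]
      ext z
      simp only [mem_nbrS]
      constructor
      · rintro ⟨hzS, hadj⟩
        refine ⟨Finset.mem_erase.2 ⟨?_, hzS⟩, hadj⟩
        rintro rfl
        exact hnadj hadj.symm
      · rintro ⟨hzX, hadj⟩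
        exact ⟨Finset.mem_of_mem_erase hzX, hadj⟩
  · -- the component of y₀ is proper; recurse inside it together with a
    set C := comp T X y₀ with hC
    have hCsub : C ⊆ X := comp_subset
    have hCX' : C ⊂ X := ⟨hCsub, fun h => hCX (le_antisymm hCsub h)⟩
    have hy₀C : y₀ ∈ C := mem_comp_self hy₀X
    have haC : a ∉ C := fun h => haX (hCsub h)
    set S₀ := insert a C with hS₀
    have hS₀card : S₀.card = C.card + 1 := Finset.card_insert_of_notMem haC
    have hCcard : C.card < X.card := Finset.card_lt_card hCX'
    have hconn₀ : connF T S₀ := by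
      have key : ∀ z ∈ S₀, RIn T S₀ a z := by
        intro z hz
        rcases Finset.mem_insert.1 hz with rfl | hzC
        · exact Relation.ReflTransGen.refl
        · have h1 : RIn T C y₀ z := (RIn_restrict hy₀X (mem_comp.1 hzC).2).2
          have h2 : RIn T S₀ y₀ z := h1.mono (Finset.subset_insert _ _)
          exact Relation.ReflTransGen.head
            ⟨Finset.mem_insert_self _ _, Finset.mem_insert_of_mem hy₀C, hay₀⟩ h2
      intro i hi j hj
      exact (key i hi).symm.trans (key j hj)
    have h2S₀ : 2 ≤ S₀.card :=
      Finset.one_lt_card.2 ⟨a, Finset.mem_insert_self _ _,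
        y₀, Finset.mem_insert_of_mem hy₀C, hay₀.ne⟩
    obtain ⟨u, huS₀, hua, v, hv⟩ := IH S₀.card (by omega) S₀ rfl hconn₀ a
      (Finset.mem_insert_self _ _) h2S₀
    have huC : u ∈ C := (Finset.mem_insert.1 huS₀).resolve_left hua
    have huS : u ∈ S := Finset.mem_of_mem_erase (hCsub huC)
    refine ⟨u, huS, fun h => haC (h ▸ huC), v, ?_⟩
    rw [← hv]
    ext z
    simp only [mem_nbrS]
    constructor
    · rintro ⟨hzS, hadj⟩
      by_cases hza : z = a
      · exact ⟨hza ▸ Finset.mem_insert_self _ _, hadj⟩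
      · have hzX : z ∈ X := Finset.mem_erase.2 ⟨hza, hzS⟩
        exact ⟨Finset.mem_insert_of_mem (comp_closed huC hzX hadj), hadj⟩
    · rintro ⟨hzS₀, hadj⟩
      rcases Finset.mem_insert.1 hzS₀ with rfl | hzC
      · exact ⟨ha, hadj⟩
      · exact ⟨Finset.mem_of_mem_erase (hCsub hzC), hadj⟩

end Leaf


section Tools

lemma indepF_subset {s t : Finset V} (h : t ⊆ s) (hs : indepF T s) : indepF T t :=
  fun a ha b hb => hs a (h ha) b (h hb)

/-- any finset contains an independent subset of at least half its size -/
lemma LBgen (hT : T.IsTree) : ∀ (n : ℕ) (X : Finset V), X.card = n →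
    ∃ s ⊆ X, indepF T s ∧ X.card ≤ 2 * s.card := by
  intro n
  induction n using Nat.strong_induction_on with
  | _ n IH =>
  rintro X rfl
  rcases Finset.eq_empty_or_nonempty X with rfl | ⟨x, hx⟩
  · exact ⟨∅, Finset.Subset.refl _, fun a ha => absurd ha (Finset.notMem_empty _), by simp⟩
  by_cases hCX : comp T X x = X
  · have hconnX : connF T X := by
      intro i hi j hj
      have hi' : RIn T X x i := (mem_comp.1 (show i ∈ comp T X x by rw [hCX]; exact hi)).2
      have hj' : RIn T X x j := (mem_comp.1 (show j ∈ comp T X x by rw [hCX]; exact hj)).2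
      exact hi'.symm.trans hj'
    by_cases h1 : X.card < 2
    · refine ⟨{x}, Finset.singleton_subset_iff.2 hx, ?_, ?_⟩
      · intro a ha b hb
        rw [Finset.mem_singleton] at ha hb
        subst ha; subst hb; exact T.loopless.irrefl _
      · simp; omega
    · push_neg at h1
      obtain ⟨u, huX, -, v, hv⟩ := leafEx hT X.card X rfl hconnX x hx h1
      have hvX : v ∈ X ∧ T.Adj u v := by
        have : v ∈ nbrS T X u := by rw [hv]; exact Finset.mem_singleton_self _
        exact mem_nbrS.1 this
      have huv : u ≠ v := hvX.2.ne
      set X' := (X.erase u).erase v with hX'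
      have hvXu : v ∈ X.erase u := Finset.mem_erase.2 ⟨huv.symm, hvX.1⟩
      have hcard' : X'.card = X.card - 2 := by
        rw [hX', Finset.card_erase_of_mem hvXu, Finset.card_erase_of_mem huX]
        omega
      obtain ⟨t, htX', hti, htc⟩ := IH X'.card (by omega) X' rfl
      have hut : u ∉ t := fun h => (Finset.mem_erase.1 (Finset.mem_erase.1 (htX' h)).2).1 rfl
      refine ⟨insert u t, ?_, ?_, ?_⟩
      · intro z hz
        rcases Finset.mem_insert.1 hz with rfl | hzt
        · exact huX
        · exact Finset.mem_of_mem_erase (Finset.mem_of_mem_erase (htX' hzt))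
      · intro a ha b hb
        rcases Finset.mem_insert.1 ha with rfl | hat
        · rcases Finset.mem_insert.1 hb with rfl | hbt
          · exact T.loopless.irrefl _
          · intro hadj
            have hbX : b ∈ X := Finset.mem_of_mem_erase (Finset.mem_of_mem_erase (htX' hbt))
            have : b ∈ nbrS T X a := mem_nbrS.2 ⟨hbX, hadj⟩
            rw [hv, Finset.mem_singleton] at this
            exact (Finset.mem_erase.1 (htX' hbt)).1 this
        · rcases Finset.mem_insert.1 hb with rfl | hbt
          · intro hadj
            have haX : a ∈ X := Finset.mem_of_mem_erase (Finset.mem_of_mem_erase (htX' hat))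
            have : a ∈ nbrS T X b := mem_nbrS.2 ⟨haX, hadj.symm⟩
            rw [hv, Finset.mem_singleton] at this
            exact (Finset.mem_erase.1 (htX' hat)).1 this
          · exact hti a hat b hbt
      · rw [Finset.card_insert_of_notMem hut]
        omega
  · set C := comp T X x with hC
    have hCsub : C ⊆ X := comp_subset
    have hCX' : C ⊂ X := ⟨hCsub, fun h => hCX (le_antisymm hCsub h)⟩
    have hCcard : C.card < X.card := Finset.card_lt_card hCX'
    have hCne : C.Nonempty := ⟨x, mem_comp_self hx⟩
    have hXCcard : (X \ C).card < X.card := by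
      rw [Finset.card_sdiff_of_subset hCsub]
      have := Finset.card_pos.2 hCne
      omega
    obtain ⟨s₁, hs₁, hi₁, hc₁⟩ := IH C.card hCcard C rfl
    obtain ⟨s₂, hs₂, hi₂, hc₂⟩ := IH (X \ C).card hXCcard (X \ C) rfl
    have hdisj : Disjoint s₁ s₂ :=
      Finset.disjoint_left.2 fun {z} hz1 hz2 => (Finset.mem_sdiff.1 (hs₂ hz2)).2 (hs₁ hz1)
    refine ⟨s₁ ∪ s₂, ?_, ?_, ?_⟩
    · intro z hz
      rcases Finset.mem_union.1 hz with hz | hz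
      · exact hCsub (hs₁ hz)
      · exact (Finset.mem_sdiff.1 (hs₂ hz)).1
    · intro a ha b hb
      rcases Finset.mem_union.1 ha with ha' | ha' <;> rcases Finset.mem_union.1 hb with hb' | hb'
      · exact hi₁ a ha' b hb'
      · intro hadj
        exact (Finset.mem_sdiff.1 (hs₂ hb')).2 (comp_closed (hs₁ ha') (Finset.mem_sdiff.1 (hs₂ hb')).1 hadj)
      · intro hadj
        exact (Finset.mem_sdiff.1 (hs₂ ha')).2 (comp_closed (hs₁ hb') (Finset.mem_sdiff.1 (hs₂ ha')).1 hadj.symm)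
      · exact hi₂ a ha' b hb'
    · rw [Finset.card_union_of_disjoint hdisj, ← Finset.card_sdiff_add_card_eq_card hCsub]
      omega

/-- propagate the "independence number at most half" property to adjacency-closed subsets -/
lemma HH_closed (hT : T.IsTree) {X A : Finset V} (hHX : HH T X) (hAX : A ⊆ X)
    (hclosed : ∀ a ∈ A, ∀ b ∈ X, T.Adj a b → b ∈ A) : HH T A := by
  intro s hs hsi
  obtain ⟨t, htsub, hti, htc⟩ := LBgen hT (X \ A).card (X \ A) rfl
  have hdisj : Disjoint s t := Finset.disjoint_left.2 fun {z} hz1 hz2 =>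
    (Finset.mem_sdiff.1 (htsub hz2)).2 (hs hz1)
  have hind : indepF T (s ∪ t) := by
    intro a ha b hb
    rcases Finset.mem_union.1 ha with ha' | ha' <;> rcases Finset.mem_union.1 hb with hb' | hb'
    · exact hsi a ha' b hb'
    · intro hadj
      exact (Finset.mem_sdiff.1 (htsub hb')).2
        (hclosed a (hs ha') b (Finset.mem_sdiff.1 (htsub hb')).1 hadj)
    · intro hadj
      exact (Finset.mem_sdiff.1 (htsub ha')).2
        (hclosed b (hs hb') a (Finset.mem_sdiff.1 (htsub ha')).1 hadj.symm)
    · exact hti a ha' b hb'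
  have hsub : s ∪ t ⊆ X := by
    intro z hz
    rcases Finset.mem_union.1 hz with hz | hz
    · exact hAX (hs hz)
    · exact (Finset.mem_sdiff.1 (htsub hz)).1
  have := hHX (s ∪ t) hsub hind
  rw [Finset.card_union_of_disjoint hdisj] at this
  have hXA := Finset.card_sdiff_add_card_eq_card hAX
  omega

/-- a perfect matching forces independence number at most half -/
lemma HH_of_PM {S : Finset V} {f : V → V} (hpm : PMF T S f) : HH T S := by
  intro s hs hsi
  have hinj : Set.InjOn f s := by
    intro a ha b hb hab
    have h1 := (hpm a (hs ha)).2.2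
    have h2 := (hpm b (hs hb)).2.2
    rw [← h1, ← h2, hab]
  have hcard : (s.image f).card = s.card := Finset.card_image_of_injOn hinj
  have hdisj : Disjoint s (s.image f) := by
    rw [Finset.disjoint_left]
    rintro z hz1 hz2
    obtain ⟨w, hw, rfl⟩ := Finset.mem_image.1 hz2
    exact hsi w hw (f w) hz1 (hpm w (hs hw)).2.1
  have hsub : s ∪ s.image f ⊆ S := by
    intro z hz
    rcases Finset.mem_union.1 hz with hz | hz
    · exact hs hz
    · obtain ⟨w, hw, rfl⟩ := Finset.mem_image.1 hz
      exact (hpm w (hs hw)).1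
  have := Finset.card_le_card hsub
  rw [Finset.card_union_of_disjoint hdisj, hcard] at this
  omega

/-- for a counted set, each matched pair is hit exactly once -/
lemma PM_cover {S s : Finset V} {f : V → V} (hpm : PMF T S f) (hs : s ⊆ S)
    (hsi : indepF T s) (hc : 2 * s.card = S.card) : ∀ x ∈ S, x ∈ s ∨ f x ∈ s := by
  have hinj : Set.InjOn f s := by
    intro a ha b hb hab
    have h1 := (hpm a (hs ha)).2.2
    have h2 := (hpm b (hs hb)).2.2
    rw [← h1, ← h2, hab]
  have hcard : (s.image f).card = s.card := Finset.card_image_of_injOn hinj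
  have hdisj : Disjoint s (s.image f) := by
    rw [Finset.disjoint_left]
    rintro z hz1 hz2
    obtain ⟨w, hw, rfl⟩ := Finset.mem_image.1 hz2
    exact hsi w hw (f w) hz1 (hpm w (hs hw)).2.1
  have hsub : s ∪ s.image f ⊆ S := by
    intro z hz
    rcases Finset.mem_union.1 hz with hz | hz
    · exact hs hz
    · obtain ⟨w, hw, rfl⟩ := Finset.mem_image.1 hz
      exact (hpm w (hs hw)).1
  have hunion : s ∪ s.image f = S := by
    apply Finset.eq_of_subset_of_card_le hsub
    rw [Finset.card_union_of_disjoint hdisj, hcard]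
    omega
  intro x hx
  rw [← hunion] at hx
  rcases Finset.mem_union.1 hx with hx | hx
  · exact Or.inl hx
  · obtain ⟨w, hw, rfl⟩ := Finset.mem_image.1 hx
    right
    rw [(hpm w (hs hw)).2.2]
    exact hw

lemma PMF_sdiff_pair {S : Finset V} {f : V → V} {u : V} (hpm : PMF T S f) (hu : u ∈ S) :
    PMF T (S \ {u, f u}) f := by
  intro x hx
  rw [Finset.mem_sdiff, Finset.mem_insert, Finset.mem_singleton] at hx
  push_neg at hx
  obtain ⟨hxS, hxu, hxfu⟩ := hx
  obtain ⟨hfxS, hadj, hffx⟩ := hpm x hxS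
  refine ⟨?_, hadj, hffx⟩
  rw [Finset.mem_sdiff, Finset.mem_insert, Finset.mem_singleton]
  push_neg
  refine ⟨hfxS, ?_, ?_⟩
  · intro h
    exact hxfu (by rw [← hffx, h])
  · intro h
    apply hxu
    have := congrArg f h
    rw [hffx, (hpm u hu).2.2] at this
    exact this

lemma PMF_of_closed {S A : Finset V} {f : V → V} (hpm : PMF T S f) (hAS : A ⊆ S)
    (hcl : ∀ a ∈ A, f a ∈ A) : PMF T A f :=
  fun x hx => ⟨hcl x hx, (hpm x (hAS hx)).2.1, (hpm x (hAS hx)).2.2⟩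

lemma PMF_comp {X : Finset V} {f : V → V} (hpm : PMF T X f) (x : V) :
    PMF T (comp T X x) f :=
  PMF_of_closed hpm comp_subset fun a ha =>
    comp_closed ha (hpm a (comp_subset ha)).1 (hpm a (comp_subset ha)).2.1

lemma PMF_union {A B : Finset V} {f : V → V} (hA : PMF T A f) (hB : PMF T B f) :
    PMF T (A ∪ B) f := by
  intro x hx
  rcases Finset.mem_union.1 hx with hx | hx
  · exact ⟨Finset.mem_union_left _ (hA x hx).1, (hA x hx).2.1, (hA x hx).2.2⟩
  · exact ⟨Finset.mem_union_right _ (hB x hx).1, (hB x hx).2.1, (hB x hx).2.2⟩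

lemma even_of_PM : ∀ (n : ℕ) (C : Finset V) (f : V → V), C.card = n → PMF T C f →
    Even C.card := by
  intro n
  induction n using Nat.strong_induction_on with
  | _ n IH =>
  rintro C f rfl hpm
  rcases Finset.eq_empty_or_nonempty C with rfl | ⟨x, hx⟩
  · simp
  · obtain ⟨hfxC, hadj, hffx⟩ := hpm x hx
    have hxfx : x ≠ f x := hadj.ne
    set C' := C \ {x, f x} with hC'
    have hpm' : PMF T C' f := PMF_sdiff_pair hpm hx
    have hsub : {x, f x} ⊆ C := by
      intro z hz
      rcases Finset.mem_insert.1 hz with rfl | hz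
      · exact hx
      · rw [Finset.mem_singleton] at hz; subst hz; exact hfxC
    have hcard : C'.card = C.card - 2 := by
      rw [hC', Finset.card_sdiff_of_subset hsub, Finset.card_insert_of_notMem (by simp [hxfx]),
        Finset.card_singleton]
    have hC2 : 2 ≤ C.card := by
      calc 2 = ({x, f x} : Finset V).card := by
              rw [Finset.card_insert_of_notMem (by simp [hxfx]), Finset.card_singleton]
        _ ≤ C.card := Finset.card_le_card hsub
    have := IH C'.card (by omega) C' f rfl hpm'
    rw [hcard] at this
    obtain ⟨m, hm⟩ := this
    exact ⟨m + 1, by omega⟩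

/-- every component of `S \ B` has a vertex adjacent to `B` -/
lemma exists_attach {S B : Finset V} (hconn : connF T S) (hB : B ⊆ S) (hBne : B.Nonempty)
    {x : V} (hx : x ∈ S \ B) :
    ∃ y ∈ comp T (S \ B) x, ∃ b ∈ B, T.Adj b y := by
  obtain ⟨b₀, hb₀⟩ := hBne
  suffices H : ∀ c, RIn T S c b₀ → c ∈ comp T (S \ B) x →
      ∃ y ∈ comp T (S \ B) x, ∃ b ∈ B, T.Adj b y by
    exact H x (hconn x ((Finset.mem_sdiff.1 hx).1) b₀ (hB hb₀)) (mem_comp_self hx)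
  intro c hR
  induction hR using Relation.ReflTransGen.head_induction_on with
  | refl =>
    intro hc
    exact absurd hb₀ (Finset.mem_sdiff.1 (comp_subset hc)).2
  | @head a' d hstep hR' ih =>
    intro hc
    by_cases hd : d ∈ B
    · exact ⟨a', hc, d, hd, hstep.2.2.symm⟩
    · have hdX : d ∈ S \ B := Finset.mem_sdiff.2 ⟨hstep.2.1, hd⟩
      exact ih (comp_closed hc hdX hstep.2.2)

lemma mem_cset {S W s : Finset V} :
    s ∈ cset T S W ↔ s ⊆ S ∧ indepF T s ∧ 2 * s.card = S.card ∧ ∀ w ∈ W, w ∉ s := by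
  simp only [cset, Finset.mem_filter, Finset.mem_powerset, and_assoc]

lemma NAset_empty {W : Finset V} : NAset T ∅ W = 1 := by
  rw [NAset]
  have h : cset T ∅ W = {∅} := by
    ext s
    rw [mem_cset, Finset.mem_singleton]
    constructor
    · rintro ⟨hs, -, -, -⟩
      exact Finset.subset_empty.1 hs
    · rintro rfl
      exact ⟨Finset.Subset.refl _, fun a ha => absurd ha (Finset.notMem_empty _), by simp,
        fun w _ h => absurd h (Finset.notMem_empty _)⟩
  rw [h, Finset.card_singleton]

lemma NAset_anti {S W W' : Finset V} (h : W ⊆ W') : NAset T S W' ≤ NAset T S W := by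
  apply Finset.card_le_card
  intro s hs
  rw [mem_cset] at hs ⊢
  exact ⟨hs.1, hs.2.1, hs.2.2.1, fun w hw => hs.2.2.2 w (h hw)⟩

/-- splitting the count over two non-adjacent halves -/
lemma NAset_union_le {A B W : Finset V} (hdisj : Disjoint A B) (hA : HH T A) (hB : HH T B) :
    NAset T (A ∪ B) W ≤ NAset T A W * NAset T B W := by
  rw [NAset, NAset, NAset, ← Finset.card_product]
  apply Finset.card_le_card_of_injOn (fun s => (s ∩ A, s ∩ B))
  · intro s hs
    rw [Finset.mem_coe, mem_cset] at hs
    obtain ⟨hsub, hind, hcardeq, havoid⟩ := hs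
    have hcards : (s ∩ A).card + (s ∩ B).card = s.card := by
      rw [← Finset.card_union_of_disjoint
        (Finset.disjoint_of_subset_left Finset.inter_subset_right
          (Finset.disjoint_of_subset_right Finset.inter_subset_right hdisj))]
      congr 1
      rw [← Finset.inter_union_distrib_left]
      exact Finset.inter_eq_left.2 hsub
    have hAle := hA (s ∩ A) Finset.inter_subset_right (indepF_subset Finset.inter_subset_left hind)
    have hBle := hB (s ∩ B) Finset.inter_subset_right (indepF_subset Finset.inter_subset_left hind)
    have hABcard : (A ∪ B).card = A.card + B.card := Finset.card_union_of_disjoint hdisj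
    rw [Finset.mem_coe, Finset.mem_product]
    dsimp only
    constructor
    · rw [mem_cset]
      exact ⟨Finset.inter_subset_right, indepF_subset Finset.inter_subset_left hind,
        by omega, fun w hw h => havoid w hw (Finset.inter_subset_left h)⟩
    · rw [mem_cset]
      exact ⟨Finset.inter_subset_right, indepF_subset Finset.inter_subset_left hind,
        by omega, fun w hw h => havoid w hw (Finset.inter_subset_left h)⟩
  · intro s₁ h₁ s₂ h₂ heq
    rw [Finset.mem_coe, mem_cset] at h₁ h₂
    have e1 : s₁ ∩ A = s₂ ∩ A := congrArg Prod.fst heq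
    have e2 : s₁ ∩ B = s₂ ∩ B := congrArg Prod.snd heq
    have r1 : s₁ ∩ (A ∪ B) = s₁ := Finset.inter_eq_left.2 h₁.1
    have r2 : s₂ ∩ (A ∪ B) = s₂ := Finset.inter_eq_left.2 h₂.1
    rw [← r1, ← r2, Finset.inter_union_distrib_left, Finset.inter_union_distrib_left, e1, e2]

/-- existence of a perfect matching -/
lemma PMex (hT : T.IsTree) : ∀ (n : ℕ) (S : Finset V), S.card = n → connF T S → HH T S →
    ∃ f : V → V, PMF T S f := by
  intro n
  induction n using Nat.strong_induction_on with
  | _ n IH =>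
  rintro S rfl hconn hHH
  rcases Finset.eq_empty_or_nonempty S with rfl | ⟨x₀, hx₀⟩
  · exact ⟨id, fun x hx => absurd hx (Finset.notMem_empty _)⟩
  by_cases h1 : S.card < 2
  · exfalso
    have hs : ({x₀} : Finset V) ⊆ S := Finset.singleton_subset_iff.2 hx₀
    have := hHH {x₀} hs (by
      intro a ha b hb
      rw [Finset.mem_singleton] at ha hb
      subst ha; subst hb; exact T.loopless.irrefl _)
    simp at this
    omega
  push_neg at h1
  obtain ⟨u, huS, -, v, hv⟩ := leafEx hT S.card S rfl hconn x₀ hx₀ h1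
  have hvS : v ∈ S ∧ T.Adj u v := by
    have : v ∈ nbrS T S u := by rw [hv]; exact Finset.mem_singleton_self _
    exact mem_nbrS.1 this
  have huv : u ≠ v := hvS.2.ne
  set S' := S \ {u, v} with hS'
  have hpairsub : {u, v} ⊆ S := by
    intro z hz
    rcases Finset.mem_insert.1 hz with rfl | hz
    · exact huS
    · rw [Finset.mem_singleton] at hz; subst hz; exact hvS.1
  have hS'card : S'.card = S.card - 2 := by
    rw [hS', Finset.card_sdiff_of_subset hpairsub, Finset.card_insert_of_notMem (by simp [huv]),
      Finset.card_singleton]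
  -- u is adjacent only to v inside S
  have huonly : ∀ z ∈ S, T.Adj u z → z = v := by
    intro z hz hadj
    have : z ∈ nbrS T S u := mem_nbrS.2 ⟨hz, hadj⟩
    rw [hv, Finset.mem_singleton] at this; exact this
  have hHH' : HH T S' := by
    intro s hs hsi
    have hus : u ∉ s := fun h => (Finset.mem_sdiff.1 (hs h)).2 (Finset.mem_insert_self _ _)
    have hind : indepF T (insert u s) := by
      intro a ha b hb
      rcases Finset.mem_insert.1 ha with rfl | hat
      · rcases Finset.mem_insert.1 hb with rfl | hbt
        · exact T.loopless.irrefl _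
        · intro hadj
          have hbv := huonly b (Finset.mem_sdiff.1 (hs hbt)).1 hadj
          subst hbv
          exact (Finset.mem_sdiff.1 (hs hbt)).2 (by simp)
      · rcases Finset.mem_insert.1 hb with rfl | hbt
        · intro hadj
          have hav := huonly a (Finset.mem_sdiff.1 (hs hat)).1 hadj.symm
          subst hav
          exact (Finset.mem_sdiff.1 (hs hat)).2 (by simp)
        · exact hsi a hat b hbt
    have hsub : insert u s ⊆ S := by
      intro z hz
      rcases Finset.mem_insert.1 hz with rfl | hz
      · exact huS
      · exact (Finset.mem_sdiff.1 (hs hz)).1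
    have := hHH _ hsub hind
    rw [Finset.card_insert_of_notMem hus] at this
    omega
  -- matchings on each component of S'
  have hcompPM : ∀ C : Finset V, (∃ x ∈ S', C = comp T S' x) → ∃ f : V → V, PMF T C f := by
    rintro C ⟨x, hx, rfl⟩
    have hcs : comp T S' x ⊆ S' := comp_subset
    have hle : (comp T S' x).card < S.card := by
      have := Finset.card_le_card hcs
      omega
    refine IH (comp T S' x).card hle _ rfl (connF_comp hx) ?_
    refine HH_closed hT hHH' hcs ?_
    intro a ha b hb hadj
    exact comp_closed ha hb hadj
  set g : V → V := fun x =>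
    if hx : x ∈ S' then (hcompPM (comp T S' x) ⟨x, hx, rfl⟩).choose x else x with hg
  set F : V → V := fun y => if y = u then v else if y = v then u else g y with hF
  have hFu : F u = v := by rw [hF]; simp
  have hFv : F v = u := by rw [hF]; simp [huv.symm]
  have hFo : ∀ y, y ≠ u → y ≠ v → F y = g y := by
    intro y h1 h2; rw [hF]; simp [h1, h2]
  refine ⟨F, ?_⟩
  intro x hxS
  by_cases hxu : x = u
  · subst hxu
    rw [hFu, hFv]
    exact ⟨hvS.1, hvS.2, rfl⟩
  by_cases hxv : x = v
  · subst hxv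
    rw [hFv, hFu]
    exact ⟨huS, hvS.2.symm, rfl⟩
  have hxS' : x ∈ S' := Finset.mem_sdiff.2 ⟨hxS, by simp [hxu, hxv]⟩
  rw [hFo x hxu hxv]
  have hx1 : g x = (hcompPM (comp T S' x) ⟨x, hxS', rfl⟩).choose x := by
    simp only [hg]; rw [dif_pos hxS']
  have hpmx := (hcompPM (comp T S' x) ⟨x, hxS', rfl⟩).choose_spec
  have hgx : g x ∈ comp T S' x := hx1 ▸ (hpmx x (mem_comp_self hxS')).1
  have hgxS' : g x ∈ S' := comp_subset hgx
  have hgxu : g x ≠ u := fun h => (Finset.mem_sdiff.1 (h ▸ hgxS')).2 (Finset.mem_insert_self _ _)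
  have hgxv : g x ≠ v := fun h => (Finset.mem_sdiff.1 (h ▸ hgxS')).2 (by simp)
  rw [hFo (g x) hgxu hgxv]
  refine ⟨(Finset.mem_sdiff.1 hgxS').1, hx1 ▸ (hpmx x (mem_comp_self hxS')).2.1, ?_⟩
  have hceq : comp T S' (g x) = comp T S' x := comp_eq_of_mem hgx
  have hx2 : g (g x) = (hcompPM (comp T S' (g x)) ⟨g x, hgxS', rfl⟩).choose (g x) := by
    simp only [hg]; rw [dif_pos hgxS']
  have hkey : ∀ (C : Finset V) (hC : ∃ z ∈ S', C = comp T S' z), C = comp T S' x →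
      (hcompPM C hC).choose (g x) = (hcompPM (comp T S' x) ⟨x, hxS', rfl⟩).choose (g x) := by
    rintro C hC rfl
    rfl
  rw [hx2, hkey _ ⟨g x, hgxS', rfl⟩ hceq, hx1, (hpmx x (mem_comp_self hxS')).2.2]

/-- degree inside a subset drops when a neighbor is excluded -/
lemma nbrS_le_of_excl {S C : Finset V} {y e : V} (hC : C ⊆ S) (he : e ∈ nbrS T S y)
    (heC : e ∉ C) (hdeg : (nbrS T S y).card ≤ 3) : (nbrS T C y).card ≤ 2 := by
  have hsub : nbrS T C y ⊆ (nbrS T S y).erase e := by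
    intro z hz
    rw [mem_nbrS] at hz
    exact Finset.mem_erase.2 ⟨fun h => heC (h ▸ hz.1), mem_nbrS.2 ⟨hC hz.1, hz.2⟩⟩
  calc (nbrS T C y).card ≤ ((nbrS T S y).erase e).card := Finset.card_le_card hsub
    _ = (nbrS T S y).card - 1 := Finset.card_erase_of_mem he
    _ ≤ 2 := by omega

lemma comp_two {X : Finset V} {f : V → V} (hpm : PMF T X f) (x : V) :
    ∃ a, (comp T X x).card = 2 * a := by
  obtain ⟨r, hr⟩ := even_of_PM (comp T X x).card (comp T X x) f rfl (PMF_comp hpm x)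
  exact ⟨r, by omega⟩

lemma pair_sdiff_card {S : Finset V} {p q : V} (hp : p ∈ S) (hq : q ∈ S) (hpq : p ≠ q) :
    (S \ {p, q}).card = S.card - 2 := by
  have hsub : {p, q} ⊆ S := by
    intro z hz
    rcases Finset.mem_insert.1 hz with rfl | hz
    · exact hp
    · rw [Finset.mem_singleton] at hz; subst hz; exact hq
  rw [Finset.card_sdiff_of_subset hsub, Finset.card_insert_of_notMem (by simp [hpq]),
    Finset.card_singleton]

/-- key injection: counted sets selecting `q` inject into counted sets of
`S` minus the pair of `q`, avoiding the other neighbors of `q`. -/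
lemma count_sel_le {S W : Finset V} {f : V → V} {q : V} (hpm : PMF T S f) (hq : q ∈ S) :
    ((cset T S W).filter (fun s => q ∈ s)).card ≤
      NAset T (S \ {q, f q}) (nbrS T (S \ {q, f q}) q) := by
  obtain ⟨hfqS, hadj, hffq⟩ := hpm q hq
  rw [NAset]
  apply Finset.card_le_card_of_injOn (fun s => s.erase q)
  · intro s hs
    rw [Finset.mem_coe, Finset.mem_filter, mem_cset] at hs
    obtain ⟨⟨hsub, hind, hcardeq, -⟩, hqs⟩ := hs
    rw [Finset.mem_coe, mem_cset]
    refine ⟨?_, indepF_subset (Finset.erase_subset _ _) hind, ?_, ?_⟩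
    · intro z hz
      rw [Finset.mem_erase] at hz
      rw [Finset.mem_sdiff, Finset.mem_insert, Finset.mem_singleton]
      refine ⟨hsub hz.2, ?_⟩
      push_neg
      refine ⟨hz.1, ?_⟩
      rintro rfl
      exact hind q hqs (f q) hz.2 hadj
    · rw [Finset.card_erase_of_mem hqs, pair_sdiff_card hq hfqS hadj.ne]
      have : 1 ≤ s.card := Finset.card_pos.2 ⟨q, hqs⟩
      omega
    · intro z hz hz'
      rw [mem_nbrS] at hz
      rw [Finset.mem_erase] at hz'
      exact hind q hqs z hz'.2 hz.2
  · intro s₁ h₁ s₂ h₂ heq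
    rw [Finset.mem_coe, Finset.mem_filter] at h₁ h₂
    dsimp only at heq
    rw [← Finset.insert_erase h₁.2, ← Finset.insert_erase h₂.2, heq]

end Tools


section Main

theorem mainBound (hT : T.IsTree) (hdeg3 : ∀ (z : V) (Y : Finset V), (nbrS T Y z).card ≤ 3) :
    ∀ (k : ℕ) (S : Finset V) (f : V → V), S.card = 2 * k → connF T S → PMF T S f →
      NAset T S ∅ ≤ Nat.fib (k + 2) ∧
      ∀ w ∈ S, (nbrS T S w).card ≤ 2 → NAset T S {w} ≤ Nat.fib (k + 1) := by
  intro k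
  induction k using Nat.strong_induction_on with
  | _ k IH =>
  intro S f hScard hconn hpm
  rcases Nat.eq_zero_or_pos k with rfl | hk
  · have hS0 : S = ∅ := Finset.card_eq_zero.1 (by omega)
    subst hS0
    refine ⟨?_, fun w hw => absurd hw (Finset.notMem_empty _)⟩
    rw [NAset_empty]
    norm_num
  have hS2 : 2 ≤ S.card := by omega
  constructor
  · -- main bound via a leaf
    obtain ⟨x₀, hx₀⟩ := (Finset.card_pos (s := S)).1 (by omega)
    obtain ⟨u, huS, -, v, hv⟩ := leafEx hT S.card S rfl hconn x₀ hx₀ hS2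
    have hvmem : v ∈ nbrS T S u := by rw [hv]; exact Finset.mem_singleton_self _
    have hvS : v ∈ S := (mem_nbrS.1 hvmem).1
    have huvadj : T.Adj u v := (mem_nbrS.1 hvmem).2
    have hfu : f u = v := by
      have h1 := hpm u huS
      have h2 : f u ∈ nbrS T S u := mem_nbrS.2 ⟨h1.1, h1.2.1⟩
      rw [hv, Finset.mem_singleton] at h2
      exact h2
    set X := S \ {u, v} with hX
    have hXcard : X.card = 2 * k - 2 := by
      rw [hX, pair_sdiff_card huS hvS huvadj.ne]
      omega
    have hpmX : PMF T X f := by rw [hX, ← hfu]; exact PMF_sdiff_pair hpm huS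
    have huX : u ∉ X := by simp [hX]
    have hvX : v ∉ X := by simp [hX]
    have hXS : X ⊆ S := Finset.sdiff_subset
    set D := nbrS T X v with hD
    have hDX : D ⊆ X := nbrS_subset
    have hpairsub : ({u, v} : Finset V) ⊆ S := by
      intro z hz
      rcases Finset.mem_insert.1 hz with rfl | hz
      · exact huS
      · rw [Finset.mem_singleton] at hz; subst hz; exact hvS
    have huattach : ∀ y ∈ X, ¬ T.Adj u y := by
      intro y hy hadj
      have h2 : y ∈ nbrS T S u := mem_nbrS.2 ⟨hXS hy, hadj⟩
      rw [hv, Finset.mem_singleton] at h2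
      exact hvX (h2 ▸ hy)
    have hattach : ∀ x ∈ X, ∃ y ∈ comp T X x, y ∈ D := by
      intro x hx
      obtain ⟨y, hy, b, hb, hadj⟩ := exists_attach hconn hpairsub
        ⟨u, Finset.mem_insert_self _ _⟩ hx
      rcases Finset.mem_insert.1 hb with rfl | hb
      · exact absurd hadj (huattach y (comp_subset hy))
      · rw [Finset.mem_singleton] at hb; subst hb
        exact ⟨y, hy, mem_nbrS.2 ⟨comp_subset hy, hadj⟩⟩
    -- split the count according to whether v is selected
    have hsplit := Finset.card_filter_add_card_filter_not
      (s := cset T S ∅) (p := fun s => v ∈ s)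
    have hueq : (cset T S ∅).filter (fun s => ¬ v ∈ s) =
        (cset T S ∅).filter (fun s => u ∈ s) := by
      apply Finset.filter_congr
      intro s hs
      rw [mem_cset] at hs
      constructor
      · intro hvs
        rcases PM_cover hpm hs.1 hs.2.1 hs.2.2.1 u huS with h | h
        · exact h
        · rw [hfu] at h; exact absurd h hvs
      · intro hus hvs
        exact hs.2.1 u hus v hvs huvadj
    have hout : ((cset T S ∅).filter (fun s => u ∈ s)).card ≤ NAset T X ∅ := by
      have h0 := count_sel_le (W := ∅) hpm huS
      rw [hfu] at h0
      have hnb : nbrS T (S \ {u, v}) u = ∅ := by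
        rw [Finset.eq_empty_iff_forall_notMem]
        intro z hz
        rw [mem_nbrS] at hz
        exact huattach z hz.1 hz.2
      rwa [hnb] at h0
    have hin : ((cset T S ∅).filter (fun s => v ∈ s)).card ≤ NAset T X D := by
      have hfv : f v = u := by rw [← hfu, (hpm u huS).2.2]
      have h0 := count_sel_le (W := ∅) hpm hvS
      rw [hfv, show S \ {v, u} = X from by rw [hX, Finset.pair_comm]] at h0
      exact h0
    have hD2 : D.card ≤ 2 :=
      nbrS_le_of_excl hXS (mem_nbrS.2 ⟨huS, huvadj.symm⟩) huX (hdeg3 v S)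
    by_cases hD0 : D.card = 0
    · -- no components at all: S = {u, v}, k = 1
      have hDempty : D = ∅ := Finset.card_eq_zero.1 hD0
      have hXempty : X = ∅ := by
        rw [Finset.eq_empty_iff_forall_notMem]
        intro x hx
        obtain ⟨y, -, hyD⟩ := hattach x hx
        rw [hDempty] at hyD
        exact absurd hyD (Finset.notMem_empty _)
      have hk1 : k = 1 := by
        rw [hXempty] at hXcard
        simp at hXcard
        omega
      have e1 : NAset T X D = 1 := by rw [hXempty]; exact NAset_empty
      have e2 : NAset T X ∅ = 1 := by rw [hXempty]; exact NAset_empty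
      rw [e1] at hin
      rw [e2] at hout
      have htot : NAset T S ∅ ≤ 2 := by
        rw [NAset, ← hsplit, hueq]
        omega
      subst hk1
      have hf : Nat.fib (1 + 2) = 2 := by decide
      omega
    by_cases hD1 : D.card = 1
    · obtain ⟨y, hDy⟩ := Finset.card_eq_one.1 hD1
      have hyD : y ∈ D := by rw [hDy]; exact Finset.mem_singleton_self _
      have hyX : y ∈ X := hDX hyD
      have hXeq : X = comp T X y := by
        apply Finset.Subset.antisymm
        · intro x hx
          obtain ⟨y', hy', hy'D⟩ := hattach x hx
          rw [hDy, Finset.mem_singleton] at hy'D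
          subst hy'D
          rw [comp_eq_of_mem hy']
          exact mem_comp_self hx
        · exact comp_subset
      have hconnX : connF T X := by rw [hXeq]; exact connF_comp hyX
      obtain ⟨hB, hA⟩ := IH (k-1) (by omega) X f (by omega) hconnX hpmX
      have hydeg : (nbrS T X y).card ≤ 2 := by
        refine nbrS_le_of_excl hXS (mem_nbrS.2 ⟨hvS, ?_⟩) hvX (hdeg3 y S)
        exact (mem_nbrS.1 hyD).2.symm
      have hAy := hA y hyX hydeg
      have hfin : NAset T S ∅ ≤ Nat.fib (k-1+1) + Nat.fib (k-1+2) := by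
        rw [NAset, ← hsplit, hueq]
        have h1 : ((cset T S ∅).filter (fun s => v ∈ s)).card ≤ Nat.fib (k-1+1) := by
          refine le_trans hin ?_
          rw [hDy]
          exact hAy
        have h2 : ((cset T S ∅).filter (fun s => u ∈ s)).card ≤ Nat.fib (k-1+2) :=
          le_trans hout hB
        omega
      have e1 : k - 1 + 1 = k := by omega
      have e2 : k - 1 + 2 = k + 1 := by omega
      rw [e1, e2] at hfin
      rw [show k + 2 = k + 2 from rfl, Nat.fib_add_two]
      omega
    · have hD2' : D.card = 2 := by omega
      obtain ⟨y₁, y₂, hne, hDy⟩ := Finset.card_eq_two.1 hD2'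
      have hy₁D : y₁ ∈ D := by rw [hDy]; simp
      have hy₂D : y₂ ∈ D := by rw [hDy]; simp
      have hy₁X : y₁ ∈ X := hDX hy₁D
      have hy₂X : y₂ ∈ X := hDX hy₂D
      have hy₁adj : T.Adj v y₁ := (mem_nbrS.1 hy₁D).2
      have hy₂adj : T.Adj v y₂ := (mem_nbrS.1 hy₂D).2
      set C₁ := comp T X y₁ with hC₁
      set C₂ := comp T X y₂ with hC₂
      have hsep : y₂ ∉ C₁ := by
        intro h
        exact hne (keyA hT hvX hy₁X hy₂X hy₁adj hy₂adj (mem_comp.1 h).2)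
      have hdisj : Disjoint C₁ C₂ := by
        rw [Finset.disjoint_left]
        intro z hz1 hz2
        apply hsep
        rw [hC₁, ← comp_eq_of_mem hz1, comp_eq_of_mem hz2]
        exact mem_comp_self hy₂X
      have hXeq : X = C₁ ∪ C₂ := by
        apply Finset.Subset.antisymm
        · intro x hx
          obtain ⟨y', hy', hy'D⟩ := hattach x hx
          rw [hDy, Finset.mem_insert, Finset.mem_singleton] at hy'D
          rcases hy'D with rfl | rfl
          · exact Finset.mem_union_left _ (by rw [hC₁, comp_eq_of_mem hy']; exact mem_comp_self hx)
          · exact Finset.mem_union_right _ (by rw [hC₂, comp_eq_of_mem hy']; exact mem_comp_self hx)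
        · intro z hz
          rcases Finset.mem_union.1 hz with hz | hz
          · exact comp_subset hz
          · exact comp_subset hz
      have hpm₁ : PMF T C₁ f := PMF_comp hpmX y₁
      have hpm₂ : PMF T C₂ f := PMF_comp hpmX y₂
      obtain ⟨a, ha⟩ := comp_two hpmX y₁
      obtain ⟨b, hb⟩ := comp_two hpmX y₂
      have hab : a + b = k - 1 := by
        have hcu := Finset.card_union_of_disjoint hdisj
        rw [← hXeq] at hcu
        rw [← hC₁] at ha
        rw [← hC₂] at hb
        omega
      obtain ⟨hB₁, hA₁⟩ := IH a (by omega) C₁ f ha (connF_comp hy₁X) hpm₁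
      obtain ⟨hB₂, hA₂⟩ := IH b (by omega) C₂ f hb (connF_comp hy₂X) hpm₂
      have hy₁deg : (nbrS T C₁ y₁).card ≤ 2 :=
        nbrS_le_of_excl (comp_subset.trans hXS) (mem_nbrS.2 ⟨hvS, hy₁adj.symm⟩)
          (fun h => hvX (comp_subset h)) (hdeg3 y₁ S)
      have hy₂deg : (nbrS T C₂ y₂).card ≤ 2 :=
        nbrS_le_of_excl (comp_subset.trans hXS) (mem_nbrS.2 ⟨hvS, hy₂adj.symm⟩)
          (fun h => hvX (comp_subset h)) (hdeg3 y₂ S)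
      have hA₁y := hA₁ y₁ (mem_comp_self hy₁X) hy₁deg
      have hA₂y := hA₂ y₂ (mem_comp_self hy₂X) hy₂deg
      have hout2 : NAset T X ∅ ≤ Nat.fib (a+2) * Nat.fib (b+2) := by
        calc NAset T X ∅ ≤ NAset T C₁ ∅ * NAset T C₂ ∅ := by
              rw [hXeq]
              exact NAset_union_le hdisj (HH_of_PM hpm₁) (HH_of_PM hpm₂)
          _ ≤ Nat.fib (a+2) * Nat.fib (b+2) := Nat.mul_le_mul hB₁ hB₂
      have hin2 : NAset T X D ≤ Nat.fib (a+1) * Nat.fib (b+1) := by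
        calc NAset T X D ≤ NAset T C₁ D * NAset T C₂ D := by
              rw [hXeq]
              exact NAset_union_le hdisj (HH_of_PM hpm₁) (HH_of_PM hpm₂)
          _ ≤ NAset T C₁ {y₁} * NAset T C₂ {y₂} := by
              refine Nat.mul_le_mul (NAset_anti ?_) (NAset_anti ?_)
              · rw [hDy]; intro z hz; rw [Finset.mem_singleton] at hz; subst hz; simp
              · rw [hDy]; intro z hz; rw [Finset.mem_singleton] at hz; subst hz; simp
          _ ≤ Nat.fib (a+1) * Nat.fib (b+1) := Nat.mul_le_mul hA₁y hA₂y
      have hiden := fib_identity a b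
      have heq : a + b + 3 = k + 2 := by omega
      rw [heq] at hiden
      rw [NAset, ← hsplit, hueq]
      have t1 := le_trans hin hin2
      have t2 := le_trans hout hout2
      omega
  · -- auxiliary bound with an avoided vertex
    intro w hwS hwdeg
    obtain ⟨hw'S, hadjw, hffw⟩ := hpm w hwS
    set w' := f w with hw'def
    set X := S \ {w, w'} with hX
    have hXcard : X.card = 2 * k - 2 := by
      rw [hX, pair_sdiff_card hwS hw'S hadjw.ne]
      omega
    have hpmX : PMF T X f := PMF_sdiff_pair hpm hwS
    have hwX : w ∉ X := by simp [hX]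
    have hw'X : w' ∉ X := by simp [hX]
    have hXS : X ⊆ S := Finset.sdiff_subset
    set D₁ := nbrS T X w with hD₁def
    set D₂ := nbrS T X w' with hD₂def
    have hD₁X : D₁ ⊆ X := nbrS_subset
    have hD₂X : D₂ ⊆ X := nbrS_subset
    have hww' : w ≠ w' := hadjw.ne
    have hpairsub : ({w, w'} : Finset V) ⊆ S := by
      intro z hz
      rcases Finset.mem_insert.1 hz with rfl | hz
      · exact hwS
      · rw [Finset.mem_singleton] at hz; subst hz; exact hw'S
    have hD₁c : D₁.card ≤ 1 := by
      have hsub : D₁ ⊆ (nbrS T S w).erase w' := by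
        intro z hz
        rw [hD₁def, mem_nbrS] at hz
        refine Finset.mem_erase.2 ⟨?_, mem_nbrS.2 ⟨hXS hz.1, hz.2⟩⟩
        intro h
        exact hw'X (h ▸ hz.1)
      have hmem : w' ∈ nbrS T S w := mem_nbrS.2 ⟨hw'S, hadjw⟩
      calc D₁.card ≤ ((nbrS T S w).erase w').card := Finset.card_le_card hsub
        _ = (nbrS T S w).card - 1 := Finset.card_erase_of_mem hmem
        _ ≤ 1 := by omega
    have hD₂c : D₂.card ≤ 2 :=
      nbrS_le_of_excl hXS (mem_nbrS.2 ⟨hwS, hadjw.symm⟩) hwX (hdeg3 w' S)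
    -- reduce to counting in X avoiding D₂
    have hsel : NAset T S {w} ≤ NAset T X D₂ := by
      have h1 : cset T S {w} = (cset T S {w}).filter (fun s => w' ∈ s) := by
        ext s
        rw [Finset.mem_filter]
        constructor
        · intro hs
          refine ⟨hs, ?_⟩
          rw [mem_cset] at hs
          rcases PM_cover hpm hs.1 hs.2.1 hs.2.2.1 w hwS with h | h
          · exact absurd h (hs.2.2.2 w (Finset.mem_singleton_self _))
          · exact h
        · exact And.left
      have h0 := count_sel_le (W := {w}) hpm hw'S
      rw [hffw, show S \ {w', w} = X from by rw [hX, Finset.pair_comm]] at h0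
      rw [NAset, h1]
      exact h0
    -- attachment structure
    have hattach : ∀ x ∈ X, ∃ y ∈ comp T X x, y ∈ D₁ ∪ D₂ := by
      intro x hx
      obtain ⟨y, hy, b, hb, hadj⟩ := exists_attach hconn hpairsub
        ⟨w, Finset.mem_insert_self _ _⟩ hx
      rcases Finset.mem_insert.1 hb with rfl | hb
      · exact ⟨y, hy, Finset.mem_union_left _ (mem_nbrS.2 ⟨comp_subset hy, hadj⟩)⟩
      · rw [Finset.mem_singleton] at hb; subst hb
        exact ⟨y, hy, Finset.mem_union_right _ (mem_nbrS.2 ⟨comp_subset hy, hadj⟩)⟩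
    have hadj₁ : ∀ y ∈ D₁, T.Adj w y := fun y hy => (mem_nbrS.1 hy).2
    have hadj₂ : ∀ y ∈ D₂, T.Adj w' y := fun y hy => (mem_nbrS.1 hy).2
    have hsame₁ : ∀ y ∈ D₁, ∀ y' ∈ D₁, y' ∈ comp T X y → y = y' := by
      intro y hy y' hy' hcomp
      exact keyA hT hwX (hD₁X hy) (hD₁X hy') (hadj₁ y hy) (hadj₁ y' hy')
        (mem_comp.1 hcomp).2
    have hsame₂ : ∀ y ∈ D₂, ∀ y' ∈ D₂, y' ∈ comp T X y → y = y' := by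
      intro y hy y' hy' hcomp
      exact keyA hT hw'X (hD₂X hy) (hD₂X hy') (hadj₂ y hy) (hadj₂ y' hy')
        (mem_comp.1 hcomp).2
    have hcross : ∀ y ∈ D₁, ∀ y' ∈ D₂, y' ∉ comp T X y := by
      intro y hy y' hy' hcomp
      exact keyB hT hadjw hwX hw'X (hD₁X hy) (hD₂X hy') (hadj₁ y hy) (hadj₂ y' hy')
        (mem_comp.1 hcomp).2
    -- now the case analysis
    by_cases h10 : D₁.card = 0
    · have hD₁e : D₁ = ∅ := Finset.card_eq_zero.1 h10
      by_cases h20 : D₂.card = 0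
      · -- X is empty
        have hD₂e : D₂ = ∅ := Finset.card_eq_zero.1 h20
        have hXe : X = ∅ := by
          rw [Finset.eq_empty_iff_forall_notMem]
          intro x hx
          obtain ⟨y, -, hyD⟩ := hattach x hx
          rw [hD₁e, hD₂e] at hyD
          simp at hyD
        have : NAset T X D₂ = 1 := by rw [hXe]; exact NAset_empty
        have hfpos : 0 < Nat.fib (k+1) := Nat.fib_pos.2 (by omega)
        omega
      by_cases h21 : D₂.card = 1
      · obtain ⟨y, hDy⟩ := Finset.card_eq_one.1 h21
        have hyD : y ∈ D₂ := by rw [hDy]; exact Finset.mem_singleton_self _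
        have hyX : y ∈ X := hD₂X hyD
        have hXeq : X = comp T X y := by
          apply Finset.Subset.antisymm
          · intro x hx
            obtain ⟨y', hy', hy'D⟩ := hattach x hx
            rcases Finset.mem_union.1 hy'D with h | h
            · rw [hD₁e] at h; simp at h
            · rw [hDy, Finset.mem_singleton] at h
              subst h
              rw [comp_eq_of_mem hy']
              exact mem_comp_self hx
          · exact comp_subset
        have hconnX : connF T X := by rw [hXeq]; exact connF_comp hyX
        obtain ⟨-, hA⟩ := IH (k-1) (by omega) X f (by omega) hconnX hpmX
        have hydeg : (nbrS T X y).card ≤ 2 :=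
          nbrS_le_of_excl hXS (mem_nbrS.2 ⟨hw'S, (hadj₂ y hyD).symm⟩) hw'X (hdeg3 y S)
        have hAy := hA y hyX hydeg
        have h2 : NAset T X D₂ ≤ Nat.fib (k-1+1) := by
          rw [hDy]
          exact hAy
        have hmono : Nat.fib (k-1+1) ≤ Nat.fib (k+1) := by
          apply Nat.fib_mono
          omega
        omega
      · have h22 : D₂.card = 2 := by omega
        obtain ⟨y₁, y₂, hne, hDy⟩ := Finset.card_eq_two.1 h22
        have hy₁D : y₁ ∈ D₂ := by rw [hDy]; simp
        have hy₂D : y₂ ∈ D₂ := by rw [hDy]; simp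
        have hy₁X : y₁ ∈ X := hD₂X hy₁D
        have hy₂X : y₂ ∈ X := hD₂X hy₂D
        set C₁ := comp T X y₁ with hC₁
        set C₂ := comp T X y₂ with hC₂
        have hsep : y₂ ∉ C₁ := fun h => hne (hsame₂ y₁ hy₁D y₂ hy₂D h)
        have hdisj : Disjoint C₁ C₂ := by
          rw [Finset.disjoint_left]
          intro z hz1 hz2
          apply hsep
          rw [hC₁, ← comp_eq_of_mem hz1, comp_eq_of_mem hz2]
          exact mem_comp_self hy₂X
        have hXeq : X = C₁ ∪ C₂ := by
          apply Finset.Subset.antisymm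
          · intro x hx
            obtain ⟨y', hy', hy'D⟩ := hattach x hx
            rcases Finset.mem_union.1 hy'D with h | h
            · rw [hD₁e] at h; simp at h
            · rw [hDy, Finset.mem_insert, Finset.mem_singleton] at h
              rcases h with rfl | rfl
              · exact Finset.mem_union_left _
                  (by rw [hC₁, comp_eq_of_mem hy']; exact mem_comp_self hx)
              · exact Finset.mem_union_right _
                  (by rw [hC₂, comp_eq_of_mem hy']; exact mem_comp_self hx)
          · intro z hz
            rcases Finset.mem_union.1 hz with hz | hz
            · exact comp_subset hz
            · exact comp_subset hz
        have hpm₁ : PMF T C₁ f := PMF_comp hpmX y₁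
        have hpm₂ : PMF T C₂ f := PMF_comp hpmX y₂
        obtain ⟨a, ha⟩ := comp_two hpmX y₁
        obtain ⟨b, hb⟩ := comp_two hpmX y₂
        have hab : a + b = k - 1 := by
          have hcu := Finset.card_union_of_disjoint hdisj
          rw [← hXeq] at hcu
          rw [← hC₁] at ha
          rw [← hC₂] at hb
          omega
        obtain ⟨-, hA₁⟩ := IH a (by omega) C₁ f ha (connF_comp hy₁X) hpm₁
        obtain ⟨-, hA₂⟩ := IH b (by omega) C₂ f hb (connF_comp hy₂X) hpm₂
        have hy₁deg : (nbrS T C₁ y₁).card ≤ 2 :=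
          nbrS_le_of_excl (comp_subset.trans hXS)
            (mem_nbrS.2 ⟨hw'S, (hadj₂ y₁ hy₁D).symm⟩)
            (fun h => hw'X (comp_subset h)) (hdeg3 y₁ S)
        have hy₂deg : (nbrS T C₂ y₂).card ≤ 2 :=
          nbrS_le_of_excl (comp_subset.trans hXS)
            (mem_nbrS.2 ⟨hw'S, (hadj₂ y₂ hy₂D).symm⟩)
            (fun h => hw'X (comp_subset h)) (hdeg3 y₂ S)
        have hA₁y := hA₁ y₁ (mem_comp_self hy₁X) hy₁deg
        have hA₂y := hA₂ y₂ (mem_comp_self hy₂X) hy₂deg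
        have hbound : NAset T X D₂ ≤ Nat.fib (a+1) * Nat.fib (b+1) := by
          calc NAset T X D₂ ≤ NAset T C₁ D₂ * NAset T C₂ D₂ := by
                rw [hXeq]
                exact NAset_union_le hdisj (HH_of_PM hpm₁) (HH_of_PM hpm₂)
            _ ≤ NAset T C₁ {y₁} * NAset T C₂ {y₂} := by
                refine Nat.mul_le_mul (NAset_anti ?_) (NAset_anti ?_)
                · rw [hDy]; intro z hz; rw [Finset.mem_singleton] at hz; subst hz; simp
                · rw [hDy]; intro z hz; rw [Finset.mem_singleton] at hz; subst hz; simp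
            _ ≤ Nat.fib (a+1) * Nat.fib (b+1) := Nat.mul_le_mul hA₁y hA₂y
        have hchain : Nat.fib (a+1) * Nat.fib (b+1) ≤ Nat.fib (a+b+1) := fib_ineq_1 a b
        have hmono : Nat.fib (a+b+1) ≤ Nat.fib (k+1) := by
          apply Nat.fib_mono
          omega
        omega
    · have h11 : D₁.card = 1 := by omega
      obtain ⟨z, hDz⟩ := Finset.card_eq_one.1 h11
      have hzD : z ∈ D₁ := by rw [hDz]; exact Finset.mem_singleton_self _
      have hzX : z ∈ X := hD₁X hzD
      set C₀ := comp T X z with hC₀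
      have hpm₀ : PMF T C₀ f := PMF_comp hpmX z
      obtain ⟨a, ha⟩ := comp_two hpmX z
      rw [← hC₀] at ha
      by_cases h20 : D₂.card = 0
      · have hD₂e : D₂ = ∅ := Finset.card_eq_zero.1 h20
        have hXeq : X = C₀ := by
          apply Finset.Subset.antisymm
          · intro x hx
            obtain ⟨y', hy', hy'D⟩ := hattach x hx
            rcases Finset.mem_union.1 hy'D with h | h
            · rw [hDz, Finset.mem_singleton] at h
              subst h
              rw [hC₀, comp_eq_of_mem hy']
              exact mem_comp_self hx
            · rw [hD₂e] at h; simp at h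
          · exact comp_subset
        have hconnX : connF T X := by rw [hXeq]; exact connF_comp hzX
        obtain ⟨hB, -⟩ := IH (k-1) (by omega) X f (by omega) hconnX hpmX
        have h2 : NAset T X D₂ ≤ Nat.fib (k-1+2) := by
          calc NAset T X D₂ ≤ NAset T X ∅ := NAset_anti (Finset.empty_subset _)
            _ ≤ Nat.fib (k-1+2) := hB
        have he : k - 1 + 2 = k + 1 := by omega
        rw [he] at h2
        omega
      by_cases h21 : D₂.card = 1
      · obtain ⟨y, hDy⟩ := Finset.card_eq_one.1 h21
        have hyD : y ∈ D₂ := by rw [hDy]; exact Finset.mem_singleton_self _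
        have hyX : y ∈ X := hD₂X hyD
        set C₁ := comp T X y with hC₁
        have hsep : y ∉ C₀ := hcross z hzD y hyD
        have hdisj : Disjoint C₀ C₁ := by
          rw [Finset.disjoint_left]
          intro q hq1 hq2
          apply hsep
          rw [hC₀, ← comp_eq_of_mem hq1, comp_eq_of_mem hq2]
          exact mem_comp_self hyX
        have hXeq : X = C₀ ∪ C₁ := by
          apply Finset.Subset.antisymm
          · intro x hx
            obtain ⟨y', hy', hy'D⟩ := hattach x hx
            rcases Finset.mem_union.1 hy'D with h | h
            · rw [hDz, Finset.mem_singleton] at h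
              subst h
              exact Finset.mem_union_left _
                (by rw [hC₀, comp_eq_of_mem hy']; exact mem_comp_self hx)
            · rw [hDy, Finset.mem_singleton] at h
              subst h
              exact Finset.mem_union_right _
                (by rw [hC₁, comp_eq_of_mem hy']; exact mem_comp_self hx)
          · intro q hq
            rcases Finset.mem_union.1 hq with hq | hq
            · exact comp_subset hq
            · exact comp_subset hq
        have hpm₁ : PMF T C₁ f := PMF_comp hpmX y
        obtain ⟨b, hb⟩ := comp_two hpmX y
        rw [← hC₁] at hb
        have hab : a + b = k - 1 := by
          have hcu := Finset.card_union_of_disjoint hdisj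
          rw [← hXeq] at hcu
          omega
        obtain ⟨hB₀, -⟩ := IH a (by omega) C₀ f ha (connF_comp hzX) hpm₀
        obtain ⟨-, hA₁⟩ := IH b (by omega) C₁ f hb (connF_comp hyX) hpm₁
        have hydeg : (nbrS T C₁ y).card ≤ 2 :=
          nbrS_le_of_excl (comp_subset.trans hXS)
            (mem_nbrS.2 ⟨hw'S, (hadj₂ y hyD).symm⟩)
            (fun h => hw'X (comp_subset h)) (hdeg3 y S)
        have hA₁y := hA₁ y (mem_comp_self hyX) hydeg
        have hbound : NAset T X D₂ ≤ Nat.fib (a+2) * Nat.fib (b+1) := by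
          calc NAset T X D₂ ≤ NAset T C₀ D₂ * NAset T C₁ D₂ := by
                rw [hXeq]
                exact NAset_union_le hdisj (HH_of_PM hpm₀) (HH_of_PM hpm₁)
            _ ≤ NAset T C₀ ∅ * NAset T C₁ {y} := by
                refine Nat.mul_le_mul (NAset_anti (Finset.empty_subset _)) (NAset_anti ?_)
                rw [hDy]
            _ ≤ Nat.fib (a+2) * Nat.fib (b+1) := Nat.mul_le_mul hB₀ hA₁y
        have hchain : Nat.fib (a+2) * Nat.fib (b+1) ≤ Nat.fib (a+b+2) := fib_ineq_2 a b
        have he : a + b + 2 = k + 1 := by omega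
        rw [he] at hchain
        omega
      · have h22 : D₂.card = 2 := by omega
        obtain ⟨y₁, y₂, hne, hDy⟩ := Finset.card_eq_two.1 h22
        have hy₁D : y₁ ∈ D₂ := by rw [hDy]; simp
        have hy₂D : y₂ ∈ D₂ := by rw [hDy]; simp
        have hy₁X : y₁ ∈ X := hD₂X hy₁D
        have hy₂X : y₂ ∈ X := hD₂X hy₂D
        set C₁ := comp T X y₁ with hC₁
        set C₂ := comp T X y₂ with hC₂
        have hsep₁ : y₁ ∉ C₀ := hcross z hzD y₁ hy₁D
        have hsep₂ : y₂ ∉ C₀ := hcross z hzD y₂ hy₂D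
        have hsep₁₂ : y₂ ∉ C₁ := fun h => hne (hsame₂ y₁ hy₁D y₂ hy₂D h)
        have hdisj₁₂ : Disjoint C₁ C₂ := by
          rw [Finset.disjoint_left]
          intro q hq1 hq2
          apply hsep₁₂
          rw [hC₁, ← comp_eq_of_mem hq1, comp_eq_of_mem hq2]
          exact mem_comp_self hy₂X
        have hdisj₀ : Disjoint C₀ (C₁ ∪ C₂) := by
          rw [Finset.disjoint_left]
          intro q hq1 hq2
          rcases Finset.mem_union.1 hq2 with hq2 | hq2
          · apply hsep₁
            rw [hC₀, ← comp_eq_of_mem hq1, comp_eq_of_mem hq2]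
            exact mem_comp_self hy₁X
          · apply hsep₂
            rw [hC₀, ← comp_eq_of_mem hq1, comp_eq_of_mem hq2]
            exact mem_comp_self hy₂X
        have hXeq : X = C₀ ∪ (C₁ ∪ C₂) := by
          apply Finset.Subset.antisymm
          · intro x hx
            obtain ⟨y', hy', hy'D⟩ := hattach x hx
            rcases Finset.mem_union.1 hy'D with h | h
            · rw [hDz, Finset.mem_singleton] at h
              subst h
              exact Finset.mem_union_left _
                (by rw [hC₀, comp_eq_of_mem hy']; exact mem_comp_self hx)
            · rw [hDy, Finset.mem_insert, Finset.mem_singleton] at h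
              rcases h with rfl | rfl
              · exact Finset.mem_union_right _ (Finset.mem_union_left _
                  (by rw [hC₁, comp_eq_of_mem hy']; exact mem_comp_self hx))
              · exact Finset.mem_union_right _ (Finset.mem_union_right _
                  (by rw [hC₂, comp_eq_of_mem hy']; exact mem_comp_self hx))
          · intro q hq
            rcases Finset.mem_union.1 hq with hq | hq
            · exact comp_subset hq
            · rcases Finset.mem_union.1 hq with hq | hq
              · exact comp_subset hq
              · exact comp_subset hq
        have hpm₁ : PMF T C₁ f := PMF_comp hpmX y₁
        have hpm₂ : PMF T C₂ f := PMF_comp hpmX y₂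
        obtain ⟨b, hb⟩ := comp_two hpmX y₁
        obtain ⟨c, hc⟩ := comp_two hpmX y₂
        rw [← hC₁] at hb
        rw [← hC₂] at hc
        have habc : a + b + c = k - 1 := by
          have hcu := Finset.card_union_of_disjoint hdisj₀
          have hcu' := Finset.card_union_of_disjoint hdisj₁₂
          rw [← hXeq] at hcu
          omega
        obtain ⟨hB₀, -⟩ := IH a (by omega) C₀ f ha (connF_comp hzX) hpm₀
        obtain ⟨-, hA₁⟩ := IH b (by omega) C₁ f hb (connF_comp hy₁X) hpm₁
        obtain ⟨-, hA₂⟩ := IH c (by omega) C₂ f hc (connF_comp hy₂X) hpm₂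
        have hy₁deg : (nbrS T C₁ y₁).card ≤ 2 :=
          nbrS_le_of_excl (comp_subset.trans hXS)
            (mem_nbrS.2 ⟨hw'S, (hadj₂ y₁ hy₁D).symm⟩)
            (fun h => hw'X (comp_subset h)) (hdeg3 y₁ S)
        have hy₂deg : (nbrS T C₂ y₂).card ≤ 2 :=
          nbrS_le_of_excl (comp_subset.trans hXS)
            (mem_nbrS.2 ⟨hw'S, (hadj₂ y₂ hy₂D).symm⟩)
            (fun h => hw'X (comp_subset h)) (hdeg3 y₂ S)
        have hA₁y := hA₁ y₁ (mem_comp_self hy₁X) hy₁deg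
        have hA₂y := hA₂ y₂ (mem_comp_self hy₂X) hy₂deg
        have hbound : NAset T X D₂ ≤
            Nat.fib (a+2) * (Nat.fib (b+1) * Nat.fib (c+1)) := by
          calc NAset T X D₂ ≤ NAset T C₀ D₂ * NAset T (C₁ ∪ C₂) D₂ := by
                rw [hXeq]
                exact NAset_union_le hdisj₀ (HH_of_PM hpm₀)
                  (HH_of_PM (PMF_union hpm₁ hpm₂))
            _ ≤ NAset T C₀ ∅ * (NAset T C₁ D₂ * NAset T C₂ D₂) := by
                refine Nat.mul_le_mul (NAset_anti (Finset.empty_subset _)) ?_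
                exact NAset_union_le hdisj₁₂ (HH_of_PM hpm₁) (HH_of_PM hpm₂)
            _ ≤ NAset T C₀ ∅ * (NAset T C₁ {y₁} * NAset T C₂ {y₂}) := by
                refine Nat.mul_le_mul (le_refl _)
                  (Nat.mul_le_mul (NAset_anti ?_) (NAset_anti ?_))
                · rw [hDy]; intro q hq; rw [Finset.mem_singleton] at hq; subst hq; simp
                · rw [hDy]; intro q hq; rw [Finset.mem_singleton] at hq; subst hq; simp
            _ ≤ Nat.fib (a+2) * (Nat.fib (b+1) * Nat.fib (c+1)) :=
                Nat.mul_le_mul hB₀ (Nat.mul_le_mul hA₁y hA₂y)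
        have hch1 : Nat.fib (b+1) * Nat.fib (c+1) ≤ Nat.fib (b+c+1) := fib_ineq_1 b c
        have hch2 : Nat.fib (a+2) * Nat.fib (b+c+1) ≤ Nat.fib (a+(b+c)+2) :=
          fib_ineq_2 a (b+c)
        have hch3 : Nat.fib (a+2) * (Nat.fib (b+1) * Nat.fib (c+1)) ≤
            Nat.fib (a+(b+c)+2) :=
          le_trans (Nat.mul_le_mul (le_refl _) hch1) hch2
        have he : a + (b+c) + 2 = k + 1 := by omega
        rw [he] at hch3
        omega

end Main


section Glue

lemma indepF_iff_isIndepSet' {s : Finset V} :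
    indepF T s ↔ T.IsIndepSet' ↑s := by
  constructor
  · intro h a ha b hb _
    exact h a ha b hb
  · intro h a ha b hb
    by_cases hab : a = b
    · subst hab; exact T.loopless.irrefl a
    · exact h ha hb hab

lemma walk_to_RIn {a b : V} (p : T.Walk a b) : RIn T Finset.univ a b := by
  induction p with
  | nil => exact Relation.ReflTransGen.refl
  | cons h p ih =>
    exact Relation.ReflTransGen.head ⟨Finset.mem_univ _, Finset.mem_univ _, h⟩ ih

lemma connF_univ (hT : T.IsTree) : connF T (Finset.univ : Finset V) := by
  intro a _ b _
  obtain ⟨p⟩ := hT.isConnected a b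
  exact walk_to_RIn p

end Glue

end Stmt9Aux

open Stmt9Aux in
theorem stmt9 {V : Type*} [Fintype V] (T : SimpleGraph V) (hT : T.IsTree)
    (hsub : ∀ v : V, (T.neighborSet v).ncard ≤ 3) (n α : ℕ)
    (hn : Fintype.card V = n) (hα : _root_.indepNum T = α) (h : 2 * α = n) :
    numMaxIndep T ≤ Nat.fib (α + 2) := by
  classical
  -- degree bound in subset form
  have hdeg3 : ∀ (z : V) (Y : Finset V), (nbrS T Y z).card ≤ 3 := by
    intro z Y
    have hsub' : nbrS T Y z ⊆ T.neighborFinset z := by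
      intro y hy
      rw [mem_nbrS] at hy
      rw [SimpleGraph.mem_neighborFinset]
      exact hy.2
    calc (nbrS T Y z).card ≤ (T.neighborFinset z).card := Finset.card_le_card hsub'
      _ = (T.neighborSet z).ncard := by
          rw [Set.ncard_eq_toFinset_card', SimpleGraph.neighborFinset_def]
      _ ≤ 3 := hsub z
  -- every independent set has size at most α
  have hHH : HH T (Finset.univ : Finset V) := by
    intro s _ hs
    have hmem : s.card ∈ {k | ∃ s : Finset V, T.IsIndepSet' ↑s ∧ s.card = k} :=
      ⟨s, (indepF_iff_isIndepSet' (T := T)).1 hs, rfl⟩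
    have hbdd : BddAbove {k | ∃ s : Finset V, T.IsIndepSet' ↑s ∧ s.card = k} := by
      refine ⟨Fintype.card V, ?_⟩
      rintro k ⟨s, -, rfl⟩
      exact Finset.card_le_univ s
    have hle : s.card ≤ _root_.indepNum T := le_csSup hbdd hmem
    rw [hα] at hle
    rw [Finset.card_univ, hn]
    omega
  have hconn : connF T (Finset.univ : Finset V) := connF_univ hT
  have hucard : (Finset.univ : Finset V).card = 2 * α := by
    rw [Finset.card_univ, hn]; omega
  obtain ⟨f, hpm⟩ := PMex hT (Finset.univ : Finset V).card _ rfl hconn hHH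
  have hmain := (mainBound hT hdeg3 α (Finset.univ : Finset V) f hucard hconn hpm).1
  -- identify numMaxIndep with the counted sets
  have hset : {s : Finset V | T.IsIndepSet' ↑s ∧ s.card = _root_.indepNum T} =
      ↑(cset T (Finset.univ : Finset V) ∅) := by
    ext s
    simp only [Set.mem_setOf_eq, Finset.mem_coe, mem_cset]
    constructor
    · rintro ⟨h1, h2⟩
      refine ⟨Finset.subset_univ _, (indepF_iff_isIndepSet' (T := T)).2 h1, ?_,
        fun w hw => absurd hw (Finset.notMem_empty _)⟩
      rw [Finset.card_univ, hn, h2, hα]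
      omega
    · rintro ⟨-, h1, h2, -⟩
      refine ⟨(indepF_iff_isIndepSet' (T := T)).1 h1, ?_⟩
      rw [Finset.card_univ, hn] at h2
      rw [hα]
      omega
  rw [numMaxIndep, hset, Set.ncard_coe_finset]
  exact hmain
end
end

section
/- For every positive integer k, the number of maximum independent sets of the tree T(k), obtained by attaching a new endvertex to every vertex of a path of order k, equals the Fibonacci number f(k+2). -/
open SimpleGraph

/-- The caterpillar `T(k)`: a path on the vertices `inl 0, …, inl (k-1)`, with a pendant
vertex `inr i` attached to each path vertex `inl i`. -/
def caterpillar (k : ℕ) : SimpleGraph (Fin k ⊕ Fin k) :=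
  SimpleGraph.fromRel (fun u v =>
    (∃ i j : Fin k, u = Sum.inl i ∧ v = Sum.inl j ∧ (i : ℕ) + 1 = (j : ℕ)) ∨
    (∃ i : Fin k, u = Sum.inl i ∧ v = Sum.inr i))


def NoTwo (k : ℕ) (f : Fin k → Bool) : Prop :=
  ∀ i j : Fin k, (i : ℕ) + 1 = (j : ℕ) → ¬(f i = true ∧ f j = true)

instance (k : ℕ) : DecidablePred (NoTwo k) := fun f => by
  unfold NoTwo; infer_instance

def g (k : ℕ) : ℕ := (Finset.univ.filter (NoTwo k)).card

lemma g0 : g 0 = 1 := by decide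
lemma g1 : g 1 = 2 := by decide

lemma noTwo_iff (k : ℕ) (f : Fin k → Bool) :
    NoTwo k f ↔ ∀ i : ℕ, ∀ h : i + 1 < k,
      ¬(f ⟨i, Nat.lt_of_succ_lt h⟩ = true ∧ f ⟨i + 1, h⟩ = true) := by
  constructor
  · intro H i h
    exact H ⟨i, Nat.lt_of_succ_lt h⟩ ⟨i + 1, h⟩ rfl
  · intro H i j hij
    have hlt : (i : ℕ) + 1 < k := hij ▸ j.isLt
    rintro ⟨hfi, hfj⟩
    apply H i hlt
    refine ⟨hfi, ?_⟩
    have hj : (⟨(i : ℕ) + 1, hlt⟩ : Fin k) = j := by ext; simp [hij]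
    rw [hj]; exact hfj

def psi (k : ℕ) (f : Fin (k + 2) → Bool) : (Fin (k + 1) → Bool) ⊕ (Fin k → Bool) :=
  if f (Fin.last (k + 1)) = true then Sum.inr (fun i => f ⟨i, by omega⟩)
  else Sum.inl (fun i => f ⟨i, by omega⟩)

def phi (k : ℕ) : (Fin (k + 1) → Bool) ⊕ (Fin k → Bool) → (Fin (k + 2) → Bool) :=
  Sum.elim (fun f j => if h : (j : ℕ) < k + 1 then f ⟨j, h⟩ else false)
    (fun f j => if h : (j : ℕ) < k then f ⟨j, h⟩ else
      if (j : ℕ) = k + 1 then true else false)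

lemma g_rec (k : ℕ) : g (k + 2) = g (k + 1) + g k := by
  classical
  rw [g, g, g, ← Finset.card_disjSum]
  refine Finset.card_nbij' (psi k) (phi k) ?_ ?_ ?_ ?_
  · -- hi
    intro f hf
    simp only [Finset.mem_coe, Finset.mem_filter, Finset.mem_univ, true_and] at hf
    rw [noTwo_iff] at hf
    unfold psi
    by_cases hl : f (Fin.last (k + 1)) = true
    · rw [if_pos hl]
      simp only [Finset.mem_coe, Finset.inr_mem_disjSum, Finset.mem_filter, Finset.mem_univ, true_and]
      rw [noTwo_iff]
      intro i h hc
      exact hf i (by omega) (by exact_mod_cast hc)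
    · rw [if_neg hl]
      simp only [Finset.mem_coe, Finset.inl_mem_disjSum, Finset.mem_filter, Finset.mem_univ, true_and]
      rw [noTwo_iff]
      intro i h hc
      exact hf i (by omega) (by exact_mod_cast hc)
  · -- hj
    intro p hp
    rcases p with f | f
    · rw [Finset.mem_coe, Finset.inl_mem_disjSum, Finset.mem_filter] at hp
      have hp := hp.2
      simp only [Finset.mem_coe, Finset.mem_filter, Finset.mem_univ, true_and]
      rw [noTwo_iff] at hp ⊢
      intro i h hc
      rcases hc with ⟨h1, h2⟩
      unfold phi at h1 h2; simp only [Sum.elim_inl, Sum.elim_inr] at h1 h2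
      by_cases hi1 : i + 1 < k + 1
      · rw [dif_pos (by omega : (i : ℕ) < k + 1)] at h1
        rw [dif_pos hi1] at h2
        exact hp i hi1 ⟨h1, h2⟩
      · rw [dif_neg (by omega : ¬ (i + 1 < k + 1))] at h2
        exact Bool.false_ne_true h2
    · rw [Finset.mem_coe, Finset.inr_mem_disjSum, Finset.mem_filter] at hp
      have hp := hp.2
      simp only [Finset.mem_coe, Finset.mem_filter, Finset.mem_univ, true_and]
      rw [noTwo_iff] at hp ⊢
      intro i h hc
      rcases hc with ⟨h1, h2⟩
      unfold phi at h1 h2; simp only [Sum.elim_inl, Sum.elim_inr] at h1 h2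
      by_cases hi1 : i + 1 < k
      · rw [dif_pos (by omega : (i : ℕ) < k)] at h1
        rw [dif_pos hi1] at h2
        exact hp i hi1 ⟨h1, h2⟩
      · by_cases hik : i < k
        · rw [dif_neg (by omega : ¬ (i + 1 < k)), if_neg (by omega : ¬ (i + 1 = k + 1))] at h2
          exact Bool.false_ne_true h2
        · rw [dif_neg hik, if_neg (by omega : ¬ (i = k + 1))] at h1
          exact Bool.false_ne_true h1
  · -- left inverse
    intro f hf
    simp only [Finset.mem_coe, Finset.mem_filter, Finset.mem_univ, true_and] at hf
    rw [noTwo_iff] at hf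
    unfold psi
    by_cases hl : f (Fin.last (k + 1)) = true
    · have hsub : f ⟨k, by omega⟩ = false := by
        by_contra hne
        have htrue : f ⟨k, by omega⟩ = true := by simpa using hne
        exact hf k (by omega) ⟨htrue, by simpa [Fin.last] using hl⟩
      rw [if_pos hl]
      funext j
      show phi k (Sum.inr _) j = f j
      unfold phi; simp only [Sum.elim_inl, Sum.elim_inr]
      by_cases hj : (j : ℕ) < k
      · rw [dif_pos hj]
      · rw [dif_neg hj]
        by_cases hj1 : (j : ℕ) = k + 1
        · rw [if_pos hj1]
          have hje : j = Fin.last (k + 1) := by ext; simpa [Fin.last] using hj1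
          rw [hje, hl]
        · rw [if_neg hj1]
          have hjk : (j : ℕ) = k := by omega
          have hje : j = ⟨k, by omega⟩ := by ext; simp [hjk]
          rw [hje, hsub]
    · rw [if_neg hl]
      funext j
      show phi k (Sum.inl _) j = f j
      unfold phi; simp only [Sum.elim_inl, Sum.elim_inr]
      by_cases hj : (j : ℕ) < k + 1
      · rw [dif_pos hj]
      · rw [dif_neg hj]
        have hje : j = Fin.last (k + 1) := by
          ext; simp only [Fin.last]; omega
        rw [hje]
        exact ((Bool.not_eq_true _).mp hl).symm
  · -- right inverse
    intro p hp
    rcases p with f | f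
    · show psi k (phi k (Sum.inl f)) = Sum.inl f
      unfold psi
      rw [if_neg]
      · congr 1
        funext i
        show phi k (Sum.inl f) _ = f i
        unfold phi; simp only [Sum.elim_inl, Sum.elim_inr]
        rw [dif_pos (by exact i.isLt)]
      · show ¬ (phi k (Sum.inl f) (Fin.last (k + 1)) = true)
        unfold phi; simp only [Sum.elim_inl, Sum.elim_inr]
        rw [dif_neg (by simp [Fin.last])]
        simp
    · show psi k (phi k (Sum.inr f)) = Sum.inr f
      unfold psi
      rw [if_pos]
      · congr 1
        funext i
        show phi k (Sum.inr f) _ = f i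
        unfold phi; simp only [Sum.elim_inl, Sum.elim_inr]
        rw [dif_pos (show ((⟨(i : ℕ), by omega⟩ : Fin (k + 2)) : ℕ) < k from i.isLt)]
      · show phi k (Sum.inr f) (Fin.last (k + 1)) = true
        unfold phi; simp only [Sum.elim_inl, Sum.elim_inr]
        rw [dif_neg (by simp [Fin.last]), if_pos (by simp [Fin.last])]

lemma g_fib (k : ℕ) : g k = Nat.fib (k + 2) := by
  induction k using Nat.strong_induction_on with
  | _ k ih =>
    match k with
    | 0 => simpa using g0
    | 1 => simpa using g1.trans (by decide : (2:ℕ) = Nat.fib 3)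
    | n + 2 =>
      rw [g_rec, ih (n + 1) (by omega), ih n (by omega),
        Nat.fib_add_two (n := n + 2)]
      ring

section Cat
variable {k : ℕ}

lemma cat_adj_iff (u v : Fin k ⊕ Fin k) :
    (caterpillar k).Adj u v ↔ u ≠ v ∧
      ((∃ i j : Fin k, u = Sum.inl i ∧ v = Sum.inl j ∧ (i : ℕ) + 1 = (j : ℕ)) ∨
       (∃ i : Fin k, u = Sum.inl i ∧ v = Sum.inr i) ∨
       (∃ i j : Fin k, v = Sum.inl i ∧ u = Sum.inl j ∧ (i : ℕ) + 1 = (j : ℕ)) ∨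
       (∃ i : Fin k, v = Sum.inl i ∧ u = Sum.inr i)) := by
  simp only [caterpillar, SimpleGraph.fromRel_adj]
  constructor
  · rintro ⟨hne, (h | h) | (h | h)⟩
    · exact ⟨hne, Or.inl h⟩
    · exact ⟨hne, Or.inr (Or.inl h)⟩
    · exact ⟨hne, Or.inr (Or.inr (Or.inl h))⟩
    · exact ⟨hne, Or.inr (Or.inr (Or.inr h))⟩
  · rintro ⟨hne, h | h | h | ⟨i, hv, hu⟩⟩
    · exact ⟨hne, Or.inl (Or.inl h)⟩
    · exact ⟨hne, Or.inl (Or.inr h)⟩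
    · exact ⟨hne, Or.inr (Or.inl h)⟩
    · exact ⟨hne, Or.inr (Or.inr ⟨i, hv, hu⟩)⟩

lemma cat_adj_inl_inr (i : Fin k) : (caterpillar k).Adj (Sum.inl i) (Sum.inr i) := by
  rw [cat_adj_iff]
  exact ⟨by simp, Or.inr (Or.inl ⟨i, rfl, rfl⟩)⟩

lemma cat_adj_inl_inl {i j : Fin k} (h : (i : ℕ) + 1 = (j : ℕ)) :
    (caterpillar k).Adj (Sum.inl i) (Sum.inl j) := by
  rw [cat_adj_iff]
  refine ⟨?_, Or.inl ⟨i, j, rfl, rfl, h⟩⟩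
  intro he
  have hij2 : i = j := by injection he
  subst hij2
  omega

lemma cat_not_adj_inr_inr (i j : Fin k) :
    ¬ (caterpillar k).Adj (Sum.inr i) (Sum.inr j) := by
  rw [cat_adj_iff]
  rintro ⟨-, (⟨a, b, h, -⟩ | ⟨a, h, -⟩ | ⟨a, b, -, h, -⟩ | ⟨a, h, -⟩)⟩ <;> simp at h

/-- index map -/
def idx : Fin k ⊕ Fin k → Fin k := Sum.elim id id

lemma indep_injOn_idx {s : Finset (Fin k ⊕ Fin k)}
    (hs : (caterpillar k).IsIndepSet' (s : Set (Fin k ⊕ Fin k))) : Set.InjOn idx (s : Set (Fin k ⊕ Fin k)) := by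
  rintro x hx y hy hxy
  rcases x with i | i <;> rcases y with j | j <;>
    simp only [idx, Sum.elim_inl, Sum.elim_inr, id] at hxy <;> subst hxy
  · rfl
  · exact absurd (cat_adj_inl_inr i) (hs hx hy (by simp))
  · exact absurd ((cat_adj_inl_inr i).symm) (hs hx hy (by simp))
  · rfl

lemma indep_card_le {s : Finset (Fin k ⊕ Fin k)}
    (hs : (caterpillar k).IsIndepSet' (s : Set (Fin k ⊕ Fin k))) : s.card ≤ k := by
  have := Finset.card_le_card_of_injOn idx (fun a _ => Finset.mem_univ (idx a))
    (indep_injOn_idx hs)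
  simpa using this

lemma allinr_indep : (caterpillar k).IsIndepSet' (((Finset.univ.image (Sum.inr : Fin k → Fin k ⊕ Fin k)) : Finset (Fin k ⊕ Fin k)) : Set (Fin k ⊕ Fin k)) := by
  rintro x hx y hy hxy
  simp only [Finset.coe_image, Finset.coe_univ, Set.image_univ, Set.mem_range] at hx hy
  obtain ⟨i, rfl⟩ := hx
  obtain ⟨j, rfl⟩ := hy
  exact cat_not_adj_inr_inr i j

lemma indepNum_cat : _root_.indepNum (caterpillar k) = k := by
  have hmem : k ∈ {n | ∃ s : Finset (Fin k ⊕ Fin k),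
      (caterpillar k).IsIndepSet' ↑s ∧ s.card = n} := by
    refine ⟨Finset.univ.image Sum.inr, allinr_indep, ?_⟩
    rw [Finset.card_image_of_injective _ Sum.inr_injective, Finset.card_univ, Fintype.card_fin]
  have hub : ∀ n ∈ {n | ∃ s : Finset (Fin k ⊕ Fin k),
      (caterpillar k).IsIndepSet' ↑s ∧ s.card = n}, n ≤ k := by
    rintro n ⟨s, hs, rfl⟩
    exact indep_card_le hs
  refine le_antisymm (csSup_le ⟨k, hmem⟩ hub) (le_csSup ⟨k, hub⟩ hmem)

/-- Characterization of maximum independent sets. -/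
lemma max_indep_char (s : Finset (Fin k ⊕ Fin k)) :
    ((caterpillar k).IsIndepSet' ↑s ∧ s.card = k) ↔
      ((∀ i : Fin k, (Sum.inl i ∈ s ↔ Sum.inr i ∉ s)) ∧
       (∀ i j : Fin k, (i : ℕ) + 1 = (j : ℕ) → ¬(Sum.inl i ∈ s ∧ Sum.inl j ∈ s))) := by
  constructor
  · rintro ⟨hind, hcard⟩
    have hsurj : ∀ i : Fin k, Sum.inl i ∈ s ∨ Sum.inr i ∈ s := by
      intro i
      have himg : s.image idx = Finset.univ := by
        apply Finset.eq_univ_of_card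
        rw [Finset.card_image_of_injOn (indep_injOn_idx hind), hcard, Fintype.card_fin]
      have : i ∈ s.image idx := himg ▸ Finset.mem_univ i
      obtain ⟨x, hx, hxi⟩ := Finset.mem_image.mp this
      rcases x with a | a <;> simp only [idx, Sum.elim_inl, Sum.elim_inr, id] at hxi <;>
        subst hxi
      · exact Or.inl hx
      · exact Or.inr hx
    constructor
    · intro i
      constructor
      · intro h1 h2
        exact hind (by exact_mod_cast h1) (by exact_mod_cast h2) (by simp) (cat_adj_inl_inr i)
      · intro h2
        rcases hsurj i with h | h
        · exact h
        · exact absurd h h2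
    · rintro i j hij ⟨h1, h2⟩
      have hne : (Sum.inl i : Fin k ⊕ Fin k) ≠ Sum.inl j := by
        intro he
        have : i = j := by injection he
        subst this; omega
      exact hind (by exact_mod_cast h1) (by exact_mod_cast h2) hne (cat_adj_inl_inl hij)
  · rintro ⟨h1, h2⟩
    constructor
    · rintro x hx y hy hxy hadj
      rw [cat_adj_iff] at hadj
      rcases hadj with ⟨-, (⟨a, b, rfl, rfl, hab⟩ | ⟨a, rfl, rfl⟩ | ⟨a, b, rfl, rfl, hab⟩ |
        ⟨a, rfl, rfl⟩)⟩
      · exact h2 a b hab ⟨by exact_mod_cast hx, by exact_mod_cast hy⟩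
      · exact ((h1 a).mp (by exact_mod_cast hx)) (by exact_mod_cast hy)
      · exact h2 a b hab ⟨by exact_mod_cast hy, by exact_mod_cast hx⟩
      · exact ((h1 a).mp (by exact_mod_cast hy)) (by exact_mod_cast hx)
    · have : s.card = (Finset.univ : Finset (Fin k)).card := by
        apply Finset.card_nbij idx (fun a _ => Finset.mem_univ _)
        · rintro x hx y hy hxy
          rcases x with a | a <;> rcases y with b | b <;>
            simp only [idx, Sum.elim_inl, Sum.elim_inr, id] at hxy <;> subst hxy
          · rfl
          · exact absurd (by exact_mod_cast hy) (((h1 a).mp (by exact_mod_cast hx)))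
          · exact absurd (by exact_mod_cast hx) (((h1 a).mp (by exact_mod_cast hy)))
          · rfl
        · intro i _
          by_cases h : Sum.inl i ∈ s
          · exact ⟨Sum.inl i, by exact_mod_cast h, rfl⟩
          · refine ⟨Sum.inr i, ?_, rfl⟩
            have := (h1 i)
            exact_mod_cast not_not.mp (fun hc => h (this.mpr hc))
      simpa using this

end Cat

section Final
variable {k : ℕ}

def encode (k : ℕ) (s : Finset (Fin k ⊕ Fin k)) : Fin k → Bool :=
  fun i => decide (Sum.inl i ∈ s)

def decode (k : ℕ) (f : Fin k → Bool) : Finset (Fin k ⊕ Fin k) :=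
  Finset.univ.filter (fun x => Sum.elim f (fun i => !(f i)) x = true)

lemma mem_decode_inl (f : Fin k → Bool) (i : Fin k) :
    Sum.inl i ∈ decode k f ↔ f i = true := by simp [decode]

lemma mem_decode_inr (f : Fin k → Bool) (i : Fin k) :
    Sum.inr i ∈ decode k f ↔ f i = false := by simp [decode]

lemma ncard_eq (k : ℕ) :
    {s : Finset (Fin k ⊕ Fin k) |
      (caterpillar k).IsIndepSet' ↑s ∧ s.card = k}.ncard = g k := by
  classical
  have hset : {s : Finset (Fin k ⊕ Fin k) |
      (caterpillar k).IsIndepSet' ↑s ∧ s.card = k} =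
      ↑(Finset.univ.filter fun s : Finset (Fin k ⊕ Fin k) =>
        (caterpillar k).IsIndepSet' ↑s ∧ s.card = k) := by
    ext s; simp
  rw [hset, Set.ncard_coe_finset, g]
  refine Finset.card_nbij' (encode k) (decode k) ?_ ?_ ?_ ?_
  · intro s hs
    simp only [Finset.mem_coe, Finset.mem_filter, Finset.mem_univ, true_and] at hs ⊢
    obtain ⟨-, h2⟩ := (max_indep_char s).mp hs
    intro i j hij hc
    rcases hc with ⟨hc1, hc2⟩
    rw [encode, decide_eq_true_eq] at hc1 hc2
    exact h2 i j hij ⟨hc1, hc2⟩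
  · intro f hf
    simp only [Finset.mem_coe, Finset.mem_filter, Finset.mem_univ, true_and] at hf ⊢
    refine (max_indep_char _).mpr ⟨?_, ?_⟩
    · intro i
      rw [mem_decode_inl, mem_decode_inr]
      simp
    · intro i j hij hc
      rcases hc with ⟨hc1, hc2⟩
      rw [mem_decode_inl] at hc1 hc2
      exact hf i j hij ⟨hc1, hc2⟩
  · intro s hs
    simp only [Finset.mem_coe, Finset.mem_filter, Finset.mem_univ, true_and] at hs
    obtain ⟨h1, -⟩ := (max_indep_char s).mp hs
    ext x
    rcases x with i | i
    · rw [mem_decode_inl, encode, decide_eq_true_eq]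
    · rw [mem_decode_inr, encode, decide_eq_false_iff_not, h1 i]
      exact not_not
  · intro f hf
    funext i
    rw [encode]
    rcases hfi : f i with _ | _
    · simp [mem_decode_inl, hfi]
    · simp [mem_decode_inl, hfi]

end Final

theorem stmt11 (k : ℕ) (hk : 0 < k) :
    numMaxIndep (caterpillar k) = Nat.fib (k + 2) := by
  rw [numMaxIndep, indepNum_cat, ncard_eq, g_fib]
end

section
/- If T is a subcubic tree of order n, then its independence number α(T) is at most (2n+1)/3. -/
open SimpleGraph

theorem stmt12 {V : Type*} [Fintype V] (T : SimpleGraph V) (hT : T.IsTree)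
    (hsub : ∀ v : V, (T.neighborSet v).ncard ≤ 3) (n : ℕ)
    (hn : Fintype.card V = n) :
    3 * _root_.indepNum T ≤ 2 * n + 1 := by
  classical
  have hne : {k | ∃ s : Finset V, T.IsIndepSet' ↑s ∧ s.card = k}.Nonempty :=
    ⟨0, ∅, by simp [SimpleGraph.IsIndepSet'], by simp⟩
  have hbdd : BddAbove {k | ∃ s : Finset V, T.IsIndepSet' ↑s ∧ s.card = k} :=
    ⟨Fintype.card V, fun k ⟨s, _, hs⟩ => hs ▸ Finset.card_le_univ s⟩
  obtain ⟨s, hsind, hscard⟩ := Nat.sSup_mem hne hbdd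
  -- degree bound
  have hdeg : ∀ v : V, T.degree v ≤ 3 := by
    intro v
    have h := hsub v
    rwa [Set.ncard_eq_toFinset_card' (T.neighborSet v)] at h
  -- every edge is incident to a vertex outside s
  have hsubset : T.edgeFinset ⊆ sᶜ.biUnion (fun v => T.incidenceFinset v) := by
    intro e he
    rw [mem_edgeFinset] at he
    induction e with
    | h a b =>
      have hadj : T.Adj a b := he
      have hnot : a ∉ s ∨ b ∉ s := by
        by_contra h
        push_neg at h
        exact hsind h.1 h.2 hadj.ne hadj
      rcases hnot with h | h
      · exact Finset.mem_biUnion.2 ⟨a, Finset.mem_compl.2 h,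
          (T.mem_incidenceFinset _ _).2 ⟨he, Sym2.mem_mk_left a b⟩⟩
      · exact Finset.mem_biUnion.2 ⟨b, Finset.mem_compl.2 h,
          (T.mem_incidenceFinset _ _).2 ⟨he, Sym2.mem_mk_right a b⟩⟩
  have hcount : T.edgeFinset.card ≤ 3 * sᶜ.card := by
    calc T.edgeFinset.card ≤ (sᶜ.biUnion (fun v => T.incidenceFinset v)).card :=
          Finset.card_le_card hsubset
      _ ≤ ∑ v ∈ sᶜ, (T.incidenceFinset v).card := Finset.card_biUnion_le
      _ ≤ ∑ v ∈ sᶜ, 3 := Finset.sum_le_sum (fun v _ => by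
          rw [T.card_incidenceFinset_eq_degree v]; exact hdeg v)
      _ = 3 * sᶜ.card := by rw [Finset.sum_const, smul_eq_mul, mul_comm]
  have hedges : T.edgeFinset.card + 1 = Fintype.card V := hT.card_edgeFinset
  have hcompl : s.card + sᶜ.card = Fintype.card V := by
    rw [Finset.card_add_card_compl]
  have : _root_.indepNum T = s.card := hscard.symm
  rw [this]
  omega
end

section
/- If T is a subcubic tree of order n with independence number exactly (2n+1)/3, then T has a unique maximum independent set. -/
open SimpleGraph

/-- If a path starting at `v` contains the edge `{w,v}`, then `w` is the second vertex. -/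
lemma aux_edge_start {V : Type*} {T : SimpleGraph V} {v u w : V} (p : T.Walk v u)
    (hp : p.IsPath) (he : s(w, v) ∈ p.edges) : w = p.getVert 1 := by
  cases p with
  | nil => simp at he
  | cons h' q =>
    rename_i y
    rw [SimpleGraph.Walk.edges_cons, List.mem_cons] at he
    rcases he with he | he
    · rw [Sym2.eq_iff] at he
      have hwy : w = y := by rcases he with ⟨h1, h2⟩ | ⟨h1, h2⟩ <;> simp [h1, h2]
      rw [SimpleGraph.Walk.getVert_cons_succ, SimpleGraph.Walk.getVert_zero, hwy]
    · exfalso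
      have hv := q.snd_mem_support_of_mem_edges he
      exact ((SimpleGraph.Walk.cons_isPath_iff _ _).1 hp).2 hv


/-- In an acyclic graph, a neighbor of the start of a path that is not the second
vertex is not on the path. -/
lemma aux_not_mem_support {V : Type*} [DecidableEq V] {T : SimpleGraph V} (hac : T.IsAcyclic) {v u w : V}
    (p : T.Walk v u) (hp : p.IsPath) (hadj : T.Adj w v) (hne : w ≠ p.getVert 1) :
    w ∉ p.support := by
  intro hw
  have hq : (p.takeUntil w hw).IsPath := hp.takeUntil hw
  have hcyc := hac (SimpleGraph.Walk.cons hadj (p.takeUntil w hw))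
  rw [SimpleGraph.Walk.cons_isCycle_iff] at hcyc
  push_neg at hcyc
  have he : s(w, v) ∈ (p.takeUntil w hw).edges := hcyc hq
  exact hne (aux_edge_start p hp (p.edges_takeUntil_subset hw he))

/-- An acyclic finite graph cannot contain a nonempty set `D` in which every
vertex has two distinct neighbors inside `D`. -/
lemma aux_grow {V : Type*} [Fintype V] {T : SimpleGraph V} (hac : T.IsAcyclic) (D : Set V)
    (hne : D.Nonempty)
    (hD : ∀ x ∈ D, ∃ w1 w2, w1 ≠ w2 ∧ T.Adj x w1 ∧ T.Adj x w2 ∧ w1 ∈ D ∧ w2 ∈ D) :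
    False := by
  classical
  obtain ⟨v0, hv0⟩ := hne
  have key : ∀ k, ∃ (v u : V) (p : T.Walk v u), p.IsPath ∧ p.length = k ∧
      ∀ x ∈ p.support, x ∈ D := by
    intro k
    induction k with
    | zero =>
      refine ⟨v0, v0, SimpleGraph.Walk.nil, by simp, by simp, ?_⟩
      intro x hx
      simp only [SimpleGraph.Walk.support_nil, List.mem_singleton] at hx
      exact hx ▸ hv0
    | succ k ih =>
      obtain ⟨v, u, p, hp, hl, hsupp⟩ := ih
      have hv : v ∈ D := hsupp v p.start_mem_support
      obtain ⟨w1, w2, h12, ha1, ha2, hd1, hd2⟩ := hD v hv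
      obtain ⟨w, hwadj, hwD, hwne⟩ : ∃ w, T.Adj v w ∧ w ∈ D ∧ w ≠ p.getVert 1 := by
        by_cases h1 : w1 = p.getVert 1
        · exact ⟨w2, ha2, hd2, by rw [← h1]; exact fun hh => h12 hh.symm⟩
        · exact ⟨w1, ha1, hd1, h1⟩
      have hws : w ∉ p.support := aux_not_mem_support hac p hp hwadj.symm hwne
      refine ⟨w, u, SimpleGraph.Walk.cons hwadj.symm p,
        (SimpleGraph.Walk.cons_isPath_iff _ _).2 ⟨hp, hws⟩, by simp [hl], ?_⟩
      intro x hx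
      rw [SimpleGraph.Walk.support_cons, List.mem_cons] at hx
      rcases hx with rfl | hx
      · exact hwD
      · exact hsupp x hx
  obtain ⟨v, u, p, hp, hl, -⟩ := key (Fintype.card V)
  have := hp.length_lt
  omega


/-- Complement of an independent set of size `(2n+1)/3` in a subcubic tree:
every outside vertex has degree 3 and all its neighbors inside the set. -/
lemma aux_key {V : Type*} [Fintype V] [DecidableEq V] {T : SimpleGraph V}
    [DecidableRel T.Adj] (hT : T.IsTree) (hsub : ∀ v : V, (T.neighborSet v).ncard ≤ 3)
    (S : Finset V) (hind : T.IsIndepSet' ↑S) (hcard : 3 * S.card = 2 * Fintype.card V + 1) :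
    ∀ v, v ∉ S → T.degree v = 3 ∧ ∀ w, T.Adj v w → w ∈ S := by
  set C : Finset V := Sᶜ with hCdef
  have hCcard : C.card = Fintype.card V - S.card := Finset.card_compl S
  have hSle : S.card ≤ Fintype.card V := Finset.card_le_univ S
  have hE : T.edgeFinset.card + 1 = Fintype.card V := hT.card_edgeFinset
  have hdeg3 : ∀ v : V, T.degree v ≤ 3 := by
    intro v
    have h1 := hsub v
    rwa [Set.ncard_eq_toFinset_card', ← SimpleGraph.neighborFinset_def] at h1
  have hnotboth : ∀ a b : V, T.Adj a b → a ∉ S ∨ b ∉ S := by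
    intro a b hadj
    by_contra hc
    push_neg at hc
    exact hind (Finset.mem_coe.2 hc.1) (Finset.mem_coe.2 hc.2) hadj.ne hadj
  have hinc : ∀ a b : V, T.Adj a b → s(a, b) ∈ T.incidenceFinset a := by
    intro a b hadj
    rw [SimpleGraph.mem_incidenceFinset]
    exact ⟨(SimpleGraph.mem_edgeSet T).2 hadj, Sym2.mem_mk_left a b⟩
  have hcover : T.edgeFinset ⊆ C.biUnion (fun x => T.incidenceFinset x) := by
    intro e
    induction e using Sym2.ind with
    | _ a b =>
      intro he
      have hadj : T.Adj a b := by rwa [SimpleGraph.mem_edgeFinset, SimpleGraph.mem_edgeSet] at he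
      rcases hnotboth a b hadj with hh | hh
      · exact Finset.mem_biUnion.2 ⟨a, Finset.mem_compl.2 hh, hinc a b hadj⟩
      · exact Finset.mem_biUnion.2 ⟨b, Finset.mem_compl.2 hh, Sym2.eq_swap ▸ hinc b a hadj.symm⟩
  have hcount : T.edgeFinset.card ≤ ∑ x ∈ C, T.degree x := by
    calc T.edgeFinset.card ≤ (C.biUnion (fun x => T.incidenceFinset x)).card :=
          Finset.card_le_card hcover
      _ ≤ ∑ x ∈ C, (T.incidenceFinset x).card := Finset.card_biUnion_le
      _ = ∑ x ∈ C, T.degree x := by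
          refine Finset.sum_congr rfl fun x _ => ?_
          exact T.card_incidenceFinset_eq_degree _
  have hsum_le : ∑ x ∈ C, T.degree x ≤ C.card * 3 := by
    simpa using Finset.sum_le_card_nsmul C _ 3 (fun x _ => hdeg3 x)
  have hsum_eq : ∑ x ∈ C, T.degree x = C.card * 3 := by omega
  have hEeq : T.edgeFinset.card = C.card * 3 := by omega
  have hdeg_eq : ∀ x ∈ C, T.degree x = 3 := by
    intro x hx
    by_contra hne
    have hlt : T.degree x < 3 := lt_of_le_of_ne (hdeg3 x) hne
    have : ∑ y ∈ C, T.degree y < ∑ y ∈ C, 3 :=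
      Finset.sum_lt_sum (fun i _ => hdeg3 i) ⟨x, hx, hlt⟩
    rw [Finset.sum_const, smul_eq_mul] at this
    omega
  have hCindep : ∀ a ∈ C, ∀ b, T.Adj a b → b ∈ S := by
    intro a ha b hadj
    by_contra hb
    have hbC : b ∈ C := Finset.mem_compl.2 hb
    have hba : b ≠ a := fun hh => hadj.ne hh.symm
    have heE : s(a, b) ∈ T.incidenceFinset a := hinc a b hadj
    have hsubset2 : T.edgeFinset ⊆
        ((C.erase a).biUnion fun x => T.incidenceFinset x) ∪
          (T.incidenceFinset a).erase s(a, b) := by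
      intro e
      induction e using Sym2.ind with
      | _ x y =>
        intro he
        have hadj' : T.Adj x y := by
          rwa [SimpleGraph.mem_edgeFinset, SimpleGraph.mem_edgeSet] at he
        by_cases hee : s(x, y) = s(a, b)
        · refine Finset.mem_union_left _ (Finset.mem_biUnion.2 ⟨b, Finset.mem_erase.2 ⟨hba, hbC⟩, ?_⟩)
          rw [hee, Sym2.eq_swap]
          exact hinc b a hadj.symm
        · rcases hnotboth x y hadj' with hh | hh
          · by_cases hxa : x = a
            · subst hxa
              exact Finset.mem_union_right _ (Finset.mem_erase.2 ⟨hee, hinc x y hadj'⟩)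
            · exact Finset.mem_union_left _
                (Finset.mem_biUnion.2 ⟨x, Finset.mem_erase.2 ⟨hxa, Finset.mem_compl.2 hh⟩,
                  hinc x y hadj'⟩)
          · by_cases hya : y = a
            · subst hya
              refine Finset.mem_union_right _ (Finset.mem_erase.2 ⟨hee, ?_⟩)
              rw [Sym2.eq_swap]
              exact hinc y x hadj'.symm
            · exact Finset.mem_union_left _
                (Finset.mem_biUnion.2 ⟨y, Finset.mem_erase.2 ⟨hya, Finset.mem_compl.2 hh⟩,
                  Sym2.eq_swap ▸ hinc y x hadj'.symm⟩)
    have hchain : T.edgeFinset.card ≤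
        (∑ x ∈ C.erase a, T.degree x) + (T.degree a - 1) := by
      calc T.edgeFinset.card ≤ _ := Finset.card_le_card hsubset2
        _ ≤ ((C.erase a).biUnion fun x => T.incidenceFinset x).card +
            ((T.incidenceFinset a).erase s(a, b)).card := Finset.card_union_le _ _
        _ ≤ (∑ x ∈ C.erase a, (T.incidenceFinset x).card) +
            ((T.incidenceFinset a).erase s(a, b)).card :=
          Nat.add_le_add_right Finset.card_biUnion_le _
        _ = (∑ x ∈ C.erase a, T.degree x) + (T.degree a - 1) := by
          rw [Finset.card_erase_of_mem heE, T.card_incidenceFinset_eq_degree _]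
          congr 1
          refine Finset.sum_congr rfl fun x _ => T.card_incidenceFinset_eq_degree _
    have hsplit : (∑ x ∈ C.erase a, T.degree x) + T.degree a = ∑ x ∈ C, T.degree x :=
      Finset.sum_erase_add C _ ha
    have hda : T.degree a = 3 := hdeg_eq a ha
    omega
  intro v hv
  exact ⟨hdeg_eq v (Finset.mem_compl.2 hv), fun w hw => hCindep v (Finset.mem_compl.2 hv) w hw⟩

theorem stmt13 {V : Type*} [Fintype V] (T : SimpleGraph V) (hT : T.IsTree)
    (hsub : ∀ v : V, (T.neighborSet v).ncard ≤ 3) (n : ℕ)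
    (hn : Fintype.card V = n) (h : 3 * _root_.indepNum T = 2 * n + 1) :
    ∃! s : Finset V, T.IsIndepSet' ↑s ∧ s.card = _root_.indepNum T := by
  classical
  have hK : _root_.indepNum T ∈ {k | ∃ s : Finset V, T.IsIndepSet' ↑s ∧ s.card = k} := by
    apply Nat.sSup_mem
    · exact ⟨0, ∅, by simp [SimpleGraph.IsIndepSet'], by simp⟩
    · refine ⟨Fintype.card V, ?_⟩
      rintro k ⟨s, -, hs⟩
      exact hs ▸ Finset.card_le_univ s
  obtain ⟨S, hSind, hScard⟩ := hK
  refine ⟨S, ⟨hSind, hScard⟩, ?_⟩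
  rintro s' ⟨h1', h2'⟩
  by_contra hne
  have hv : ∃ v, v ∈ s' ∧ v ∉ S := by
    by_contra hc
    push_neg at hc
    exact hne (Finset.eq_of_subset_of_card_le (fun v hv => hc v hv) (by rw [hScard, h2']))
  obtain ⟨v0, hv0s, hv0S⟩ := hv
  have hkS := aux_key hT hsub S hSind (by omega)
  have hks' := aux_key hT hsub s' h1' (by omega)
  set D : Set V := {x : V | (x ∈ S ∧ x ∉ s') ∨ (x ∈ s' ∧ x ∉ S)} with hDdef
  refine aux_grow hT.2 D ⟨v0, Or.inr ⟨hv0s, hv0S⟩⟩ ?_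
  intro x hx
  have main : ∃ A : Finset V, A.card = 3 ∧ ∀ w ∈ A, T.Adj x w ∧ w ∈ D := by
    rcases hx with ⟨hxS, hxs'⟩ | ⟨hxs', hxS⟩
    · obtain ⟨hdeg, hnb⟩ := hks' x hxs'
      refine ⟨T.neighborFinset x, hdeg, fun w hw => ?_⟩
      have hadj : T.Adj x w := (T.mem_neighborFinset _ _).1 hw
      have hws' : w ∈ s' := hnb w hadj
      have hwS : w ∉ S := fun hwS =>
        hSind (Finset.mem_coe.2 hxS) (Finset.mem_coe.2 hwS) hadj.ne hadj
      exact ⟨hadj, Or.inr ⟨hws', hwS⟩⟩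
    · obtain ⟨hdeg, hnb⟩ := hkS x hxS
      refine ⟨T.neighborFinset x, hdeg, fun w hw => ?_⟩
      have hadj : T.Adj x w := (T.mem_neighborFinset _ _).1 hw
      have hwS : w ∈ S := hnb w hadj
      have hws' : w ∉ s' := fun hws' =>
        h1' (Finset.mem_coe.2 hxs') (Finset.mem_coe.2 hws') hadj.ne hadj
      exact ⟨hadj, Or.inl ⟨hwS, hws'⟩⟩
  obtain ⟨A, hA3, hAprop⟩ := main
  obtain ⟨w1, hw1, w2, hw2, hne12⟩ := Finset.one_lt_card.1 (by omega : 1 < A.card)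
  exact ⟨w1, w2, hne12, (hAprop w1 hw1).1, (hAprop w2 hw2).1, (hAprop w1 hw1).2,
    (hAprop w2 hw2).2⟩
end

section
/- A subcubic tree T of order n has independence number equal to (2n+1)/3 if and only if T arises from a single vertex by iteratively attaching paths P_3: attaching a P_3 to a tree T0 means adding three new vertices x, y, z with edges uy, xy, yz for some vertex u of T0. -/
open SimpleGraph

/-- Attaching a path `P_3` with new vertices `x = inr 0`, `y = inr 1`, `z = inr 2`
to the vertex `u` of `G`, adding the edges `uy`, `xy`, and `yz`. -/
def attachP3 {V : Type} (G : SimpleGraph V) (u : V) : SimpleGraph (V ⊕ Fin 3) :=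
  SimpleGraph.fromRel (fun a b =>
    (∃ x y : V, a = Sum.inl x ∧ b = Sum.inl y ∧ G.Adj x y) ∨
    (a = Sum.inl u ∧ b = Sum.inr 1) ∨
    (a = Sum.inr 0 ∧ b = Sum.inr 1) ∨
    (a = Sum.inr 1 ∧ b = Sum.inr 2))

/-- The graphs arising from a single vertex by iteratively attaching `P_3`s. -/
inductive BuiltByP3 : ∀ (V : Type), SimpleGraph V → Prop
  | base : BuiltByP3 PUnit ⊥
  | step {V : Type} (G : SimpleGraph V) (u : V) (h : BuiltByP3 V G) :
      BuiltByP3 (V ⊕ Fin 3) (attachP3 G u)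

lemma indep_map {A B : Type} {GA : SimpleGraph A} {GB : SimpleGraph B} (e : GA ≃g GB)
    (s : Finset A) (hs : GA.IsIndepSet' ↑s) :
    GB.IsIndepSet' ↑(s.map e.toEquiv.toEmbedding) := by
  intro u hu v hv huv
  simp only [Finset.coe_map, Set.mem_image, Finset.mem_coe] at hu hv
  obtain ⟨a, ha, rfl⟩ := hu
  obtain ⟨b, hb, rfl⟩ := hv
  have hab : a ≠ b := fun h => huv (by simp [h])
  have := hs ha hb hab
  simpa [e.map_adj_iff] using this

lemma indepNum_iso {A B : Type} {GA : SimpleGraph A} {GB : SimpleGraph B} (e : GA ≃g GB) :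
    _root_.indepNum GA = _root_.indepNum GB := by
  unfold _root_.indepNum
  congr 1
  ext k
  constructor
  · rintro ⟨s, hs, rfl⟩
    exact ⟨s.map e.toEquiv.toEmbedding, indep_map e s hs, by simp⟩
  · rintro ⟨s, hs, rfl⟩
    exact ⟨s.map e.symm.toEquiv.toEmbedding, indep_map e.symm s hs, by simp⟩


section basics
variable {V : Type*} [Fintype V] (G : SimpleGraph V)
lemma indepSet_bdd : BddAbove {k | ∃ s : Finset V, G.IsIndepSet' ↑s ∧ s.card = k} := by
  refine ⟨Fintype.card V, ?_⟩; rintro k ⟨s, _, rfl⟩; exact Finset.card_le_univ s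
omit [Fintype V] in
lemma indepSet_nonempty : Set.Nonempty {k | ∃ s : Finset V, G.IsIndepSet' ↑s ∧ s.card = k} :=
  ⟨0, ∅, by simp [SimpleGraph.IsIndepSet'], rfl⟩
lemma exists_max_indep : ∃ s : Finset V, G.IsIndepSet' ↑s ∧ s.card = _root_.indepNum G :=
  Nat.sSup_mem (indepSet_nonempty G) (indepSet_bdd G)
lemma card_le_indepNum {s : Finset V} (hs : G.IsIndepSet' ↑s) : s.card ≤ _root_.indepNum G :=
  le_csSup (indepSet_bdd G) ⟨s, hs, rfl⟩
end basics

section adj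
variable {V : Type} {G : SimpleGraph V} {u : V}
@[simp] lemma attachP3_adj_inl_inl {a b : V} :
    (attachP3 G u).Adj (Sum.inl a) (Sum.inl b) ↔ G.Adj a b := by
  constructor
  · rintro ⟨hne, h | h⟩ <;>
      rcases h with ⟨x, y, hx, hy, hadj⟩ | ⟨h1, h2⟩ | ⟨h1, h2⟩ | ⟨h1, h2⟩ <;> simp_all
    · exact hadj.symm
  · intro h
    exact ⟨by simpa using h.ne, Or.inl (Or.inl ⟨a, b, rfl, rfl, h⟩)⟩
@[simp] lemma attachP3_adj_inl_inr {a : V} {i : Fin 3} :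
    (attachP3 G u).Adj (Sum.inl a) (Sum.inr i) ↔ (a = u ∧ i = 1) := by
  constructor
  · rintro ⟨hne, h | h⟩ <;>
      rcases h with ⟨x, y, hx, hy, hadj⟩ | ⟨h1, h2⟩ | ⟨h1, h2⟩ | ⟨h1, h2⟩ <;> simp_all
  · rintro ⟨rfl, rfl⟩
    exact ⟨by simp, Or.inl (Or.inr (Or.inl ⟨rfl, rfl⟩))⟩
@[simp] lemma attachP3_adj_inr_inl {a : V} {i : Fin 3} :
    (attachP3 G u).Adj (Sum.inr i) (Sum.inl a) ↔ (a = u ∧ i = 1) := by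
  rw [SimpleGraph.adj_comm]; exact attachP3_adj_inl_inr
@[simp] lemma attachP3_adj_inr_inr {i j : Fin 3} :
    (attachP3 G u).Adj (Sum.inr i) (Sum.inr j) ↔
      ((i = 0 ∧ j = 1) ∨ (i = 1 ∧ j = 0) ∨ (i = 1 ∧ j = 2) ∨ (i = 2 ∧ j = 1)) := by
  constructor
  · rintro ⟨hne, h | h⟩ <;>
      rcases h with ⟨x, y, hx, hy, hadj⟩ | ⟨h1, h2⟩ | ⟨h1, h2⟩ | ⟨h1, h2⟩ <;> simp_all
  · rintro (⟨rfl, rfl⟩ | ⟨rfl, rfl⟩ | ⟨rfl, rfl⟩ | ⟨rfl, rfl⟩)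
    · exact ⟨by simp, Or.inl (Or.inr (Or.inr (Or.inl ⟨rfl, rfl⟩)))⟩
    · exact ⟨by simp, Or.inr (Or.inr (Or.inr (Or.inl ⟨rfl, rfl⟩)))⟩
    · exact ⟨by simp, Or.inl (Or.inr (Or.inr (Or.inr ⟨rfl, rfl⟩)))⟩
    · exact ⟨by simp, Or.inr (Or.inr (Or.inr (Or.inr ⟨rfl, rfl⟩)))⟩
end adj

open Sum in
lemma indepNum_attachP3 {V : Type} [Fintype V] (G : SimpleGraph V) (u : V) :
    _root_.indepNum (attachP3 G u) = _root_.indepNum G + 2 := by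
  classical
  apply le_antisymm
  · apply csSup_le (indepSet_nonempty _)
    rintro k ⟨s, hs, rfl⟩
    set t : Finset V := s.preimage Sum.inl (Set.injOn_of_injective Sum.inl_injective) with ht
    have htmap : t.map ⟨Sum.inl, Sum.inl_injective⟩ = s.filter (·.isLeft) := by
      ext x
      cases x with
      | inl a => simp [ht]
      | inr i => simp [ht]
    have hsplit : (s.filter (·.isLeft)).card + (s.filter (fun x => ¬ x.isLeft)).card = s.card :=
      Finset.card_filter_add_card_filter_not _
    have ht_indep : G.IsIndepSet' ↑t := by
      intro a ha b hb hab
      have := hs (by simpa [ht] using ha) (by simpa [ht] using hb)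
        (fun h => hab (by simp_all))
      simp only [attachP3_adj_inl_inl] at this
      exact this
    have h1 : (s.filter (·.isLeft)).card ≤ _root_.indepNum G := by
      rw [← htmap, Finset.card_map]
      exact card_le_indepNum G ht_indep
    have h2 : (s.filter (fun x => ¬ x.isLeft)).card ≤ 2 := by
      by_cases h1mem : Sum.inr (1 : Fin 3) ∈ s
      · have h0 : Sum.inr (0 : Fin 3) ∉ s := fun h0 =>
          hs (Finset.mem_coe.2 h0) (Finset.mem_coe.2 h1mem) (by simp) (by simp)
        have h2' : Sum.inr (2 : Fin 3) ∉ s := fun h0 =>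
          hs (Finset.mem_coe.2 h1mem) (Finset.mem_coe.2 h0) (by simp) (by simp)
        have : s.filter (fun x => ¬ x.isLeft) ⊆ {Sum.inr 1} := by
          intro x hx
          simp only [Finset.mem_filter] at hx
          obtain ⟨hxs, hxr⟩ := hx
          cases x with
          | inl a => simp at hxr
          | inr i =>
            fin_cases i <;> simp_all
        calc _ ≤ ({Sum.inr 1} : Finset (V ⊕ Fin 3)).card := Finset.card_le_card this
        _ ≤ 2 := by simp
      · have : s.filter (fun x => ¬ x.isLeft) ⊆ {Sum.inr 0, Sum.inr 2} := by
          intro x hx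
          simp only [Finset.mem_filter] at hx
          obtain ⟨hxs, hxr⟩ := hx
          cases x with
          | inl a => simp at hxr
          | inr i => fin_cases i <;> simp_all
        calc _ ≤ ({Sum.inr 0, Sum.inr 2} : Finset (V ⊕ Fin 3)).card := Finset.card_le_card this
        _ ≤ 2 := Finset.card_le_two
    omega
  · obtain ⟨s, hs, hcard⟩ := exists_max_indep G
    set s' : Finset (V ⊕ Fin 3) :=
      s.map ⟨Sum.inl, Sum.inl_injective⟩ ∪ {Sum.inr 0, Sum.inr 2} with hs'
    have hcard' : s'.card = s.card + 2 := by
      rw [hs', Finset.card_union_of_disjoint (by simp), Finset.card_map]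
      congr 1
    have hindep : (attachP3 G u).IsIndepSet' ↑s' := by
      intro a ha b hb hab
      simp only [hs', Finset.coe_union, Set.mem_union, Finset.coe_map, Set.mem_image,
        Finset.coe_insert, Set.mem_insert_iff, Finset.coe_singleton, Set.mem_singleton_iff,
        Finset.mem_coe] at ha hb
      rcases ha with ⟨a', ha', rfl⟩ | (rfl | rfl) <;>
        rcases hb with ⟨b', hb', rfl⟩ | (rfl | rfl) <;>
          simp_all
      · exact hs ha' hb' (fun h => hab (by simp [h]))
    rw [← hcard, ← hcard']
    exact card_le_indepNum _ hindep

lemma indepNum_bot_punit : _root_.indepNum (⊥ : SimpleGraph PUnit) = 1 := by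
  apply le_antisymm
  · apply csSup_le (indepSet_nonempty _)
    rintro k ⟨s, _, rfl⟩
    simpa using Finset.card_le_univ s
  · exact card_le_indepNum _ (s := {PUnit.unit}) (by simp [SimpleGraph.IsIndepSet'])

lemma built_finite_card {W : Type} {G : SimpleGraph W} (h : BuiltByP3 W G) :
    Finite W ∧ 3 * _root_.indepNum G = 2 * Nat.card W + 1 := by
  induction h with
  | base => exact ⟨inferInstance, by simp [indepNum_bot_punit]⟩
  | step G u h ih =>
    obtain ⟨hfin, hcard⟩ := ih
    have : Fintype _ := @Fintype.ofFinite _ hfin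
    refine ⟨inferInstance, ?_⟩
    rw [indepNum_attachP3, Nat.card_sum]
    simp only [Nat.card_eq_fintype_card, Fintype.card_fin] at *
    omega


section tree
variable {V : Type} {T : SimpleGraph V}


lemma tree_path_length_eq_dist (hT : T.IsTree) {a b : V} (p : T.Walk a b) (hp : p.IsPath) :
    p.length = T.dist a b := by
  classical
  apply le_antisymm ?_ (dist_le p)
  obtain ⟨q, hq⟩ := hT.isConnected.exists_walk_length_eq_dist a b
  have huniq := hT.existsUnique_path a b
  have : p = q.bypass := huniq.unique hp q.bypass_isPath
  calc p.length = q.bypass.length := by rw [this]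
  _ ≤ q.length := q.length_bypass_le
  _ = T.dist a b := hq

lemma tree_unique_parent (hT : T.IsTree) {r w v₁ v₂ : V}
    (h1 : T.Adj v₁ w) (h2 : T.Adj v₂ w)
    (hd1 : T.dist r v₁ + 1 = T.dist r w) (hd2 : T.dist r v₂ + 1 = T.dist r w) : v₁ = v₂ := by
  classical
  obtain ⟨p₁, hp₁, hl₁⟩ : ∃ p : T.Walk r v₁, p.IsPath ∧ p.length = T.dist r v₁ := by
    obtain ⟨p, hp⟩ := hT.isConnected.exists_walk_length_eq_dist r v₁
    exact ⟨p.bypass, p.bypass_isPath, le_antisymm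
      (by calc p.bypass.length ≤ p.length := p.length_bypass_le
          _ = _ := hp) (dist_le _)⟩
  obtain ⟨p₂, hp₂, hl₂⟩ : ∃ p : T.Walk r v₂, p.IsPath ∧ p.length = T.dist r v₂ := by
    obtain ⟨p, hp⟩ := hT.isConnected.exists_walk_length_eq_dist r v₂
    exact ⟨p.bypass, p.bypass_isPath, le_antisymm
      (by calc p.bypass.length ≤ p.length := p.length_bypass_le
          _ = _ := hp) (dist_le _)⟩
  have hw₁ : w ∉ p₁.support := by
    intro hmem
    have := p₁.length_takeUntil_le hmem
    have hd : T.dist r w ≤ (p₁.takeUntil w hmem).length := dist_le _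
    omega
  have hw₂ : w ∉ p₂.support := by
    intro hmem
    have := p₂.length_takeUntil_le hmem
    have hd : T.dist r w ≤ (p₂.takeUntil w hmem).length := dist_le _
    omega
  have hq₁ : (Walk.cons h1.symm p₁.reverse).IsPath := by
    apply hp₁.reverse.cons
    simpa using hw₁
  have hq₂ : (Walk.cons h2.symm p₂.reverse).IsPath := by
    apply hp₂.reverse.cons
    simpa using hw₂
  have := (hT.existsUnique_path w r).unique hq₁ hq₂
  injection this

lemma walk_parity (C : Set V) (hC : ∀ a b, T.Adj a b → (a ∈ C ↔ b ∉ C))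
    {a b : V} (p : T.Walk a b) : ((a ∈ C) ↔ (b ∈ C)) ↔ Even p.length := by
  induction p with
  | nil => simp
  | cons h q ih =>
    have := hC _ _ h
    simp only [Walk.length_cons, Nat.even_add_one, ← ih]
    tauto

end tree

lemma ncard_neighborSet_eq_degree {V : Type} [Fintype V] [DecidableEq V]
    (T : SimpleGraph V) [DecidableRel T.Adj] (v : V) :
    (T.neighborSet v).ncard = T.degree v := by
  rw [Set.ncard_eq_toFinset_card', ← SimpleGraph.neighborFinset_def,
    SimpleGraph.card_neighborFinset_eq_degree]

lemma good_of_count {V : Type} [Fintype V] (T : SimpleGraph V) (hT : T.IsTree)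
    (hsub : ∀ v : V, (T.neighborSet v).ncard ≤ 3)
    (h : 3 * _root_.indepNum T = 2 * Fintype.card V + 1) :
    ∃ C : Finset V, (∀ c ∈ C, (T.neighborSet c).ncard = 3) ∧
      T.IsIndepSet' ↑C ∧ T.IsIndepSet' (↑C)ᶜ := by
  classical
  obtain ⟨s, hs, hscard⟩ := exists_max_indep T
  set n := Fintype.card V with hn
  have hsle : s.card ≤ n := Finset.card_le_univ s
  set C : Finset V := sᶜ with hC
  have hCcard : 3 * C.card = n - 1 := by
    rw [hC, Finset.card_compl]
    omega
  have hedge : T.edgeFinset.card + 1 = n := hT.card_edgeFinset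
  -- every edge has an endpoint in C
  have hcover : ∀ e ∈ T.edgeFinset, ∃ v, v ∈ C ∧ v ∈ e := by
    intro e he
    induction e with
    | h a b =>
      rw [SimpleGraph.mem_edgeFinset, SimpleGraph.mem_edgeSet] at he
      by_cases ha : a ∈ C
      · exact ⟨a, ha, by simp⟩
      · refine ⟨b, ?_, by simp⟩
        rw [hC, Finset.mem_compl, not_not] at ha
        rw [hC, Finset.mem_compl]
        intro hb
        exact hs (Finset.mem_coe.2 ha) (Finset.mem_coe.2 hb) he.ne he
  have hne : Nonempty V := hT.isConnected.nonempty
  set f : Sym2 V → V := fun e =>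
    if h : ∃ v, v ∈ C ∧ v ∈ e then h.choose else Classical.arbitrary V with hf
  have hfspec : ∀ e ∈ T.edgeFinset, f e ∈ C ∧ f e ∈ e := by
    intro e he
    have hx := hcover e he
    rw [hf]
    simp only [dif_pos hx]
    exact hx.choose_spec
  have hmaps : ∀ e ∈ T.edgeFinset, f e ∈ C := fun e he => (hfspec e he).1
  have hsum : ∑ c ∈ C, (T.edgeFinset.filter (fun e => f e = c)).card = T.edgeFinset.card :=
    (Finset.card_eq_sum_card_fiberwise hmaps).symm
  have hfibsub : ∀ c ∈ C, T.edgeFinset.filter (fun e => f e = c) ⊆ T.incidenceFinset c := by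
    intro c _ e he
    rw [Finset.mem_filter] at he
    obtain ⟨hee, hfe⟩ := he
    rw [SimpleGraph.mem_incidenceFinset]
    exact ⟨SimpleGraph.mem_edgeFinset.1 hee, hfe ▸ (hfspec e hee).2⟩
  have hfible : ∀ c ∈ C, (T.edgeFinset.filter (fun e => f e = c)).card ≤ 3 := by
    intro c hc
    calc (T.edgeFinset.filter (fun e => f e = c)).card
        ≤ (T.incidenceFinset c).card := Finset.card_le_card (hfibsub c hc)
      _ = T.degree c := T.card_incidenceFinset_eq_degree c
      _ = (T.neighborSet c).ncard := (ncard_neighborSet_eq_degree T c).symm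
      _ ≤ 3 := hsub c
  -- each fiber has exactly 3 elements
  have hfib3 : ∀ c ∈ C, (T.edgeFinset.filter (fun e => f e = c)).card = 3 := by
    by_contra hcon
    push_neg at hcon
    obtain ⟨c₀, hc₀, hne₀⟩ := hcon
    have hlt : ∑ c ∈ C, (T.edgeFinset.filter (fun e => f e = c)).card < ∑ c ∈ C, 3 :=
      Finset.sum_lt_sum hfible ⟨c₀, hc₀, lt_of_le_of_ne (hfible c₀ hc₀) hne₀⟩
    rw [hsum, Finset.sum_const, smul_eq_mul] at hlt
    omega
  have hfibeq : ∀ c ∈ C, T.edgeFinset.filter (fun e => f e = c) = T.incidenceFinset c := by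
    intro c hc
    apply Finset.eq_of_subset_of_card_le (hfibsub c hc)
    rw [hfib3 c hc]
    calc (T.incidenceFinset c).card = T.degree c := T.card_incidenceFinset_eq_degree c
      _ = (T.neighborSet c).ncard := (ncard_neighborSet_eq_degree T c).symm
      _ ≤ 3 := hsub c
  refine ⟨C, ?_, ?_, ?_⟩
  · intro c hc
    have h1 : (T.incidenceFinset c).card = 3 := by
      rw [← hfibeq c hc, hfib3 c hc]
    rw [ncard_neighborSet_eq_degree, ← T.card_incidenceFinset_eq_degree c, h1]
  · intro c₁ hc₁ c₂ hc₂ hne₁₂ hadj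
    have he : s(c₁, c₂) ∈ T.edgeFinset := by
      rw [SimpleGraph.mem_edgeFinset, SimpleGraph.mem_edgeSet]; exact hadj
    have h1 : s(c₁, c₂) ∈ T.incidenceFinset c₁ := by
      rw [SimpleGraph.mem_incidenceFinset]
      exact ⟨SimpleGraph.mem_edgeFinset.1 he, by simp⟩
    have h2 : s(c₁, c₂) ∈ T.incidenceFinset c₂ := by
      rw [SimpleGraph.mem_incidenceFinset]
      exact ⟨SimpleGraph.mem_edgeFinset.1 he, by simp⟩
    rw [← hfibeq c₁ hc₁, Finset.mem_filter] at h1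
    rw [← hfibeq c₂ hc₂, Finset.mem_filter] at h2
    exact hne₁₂ (h1.2.symm.trans h2.2)
  · intro a ha b hb hne' hadj
    simp only [Set.mem_compl_iff, Finset.mem_coe, hC, Finset.mem_compl, not_not] at ha hb
    exact hs (Finset.mem_coe.2 ha) (Finset.mem_coe.2 hb) hne' hadj

section part2
variable {V : Type} {T : SimpleGraph V}

lemma reachable_induce {s : Set V} {a b : V} (p : T.Walk a b)
    (hsup : ∀ v ∈ p.support, v ∈ s) (ha : a ∈ s) (hb : b ∈ s) :
    (T.induce s).Reachable ⟨a, ha⟩ ⟨b, hb⟩ := by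
  induction p with
  | nil => exact Reachable.refl _
  | @cons a c b h q ih =>
    have hc : c ∈ s := hsup c (by simp)
    have hadj : (T.induce s).Adj ⟨a, ha⟩ ⟨c, hc⟩ := by
      simpa using h
    exact hadj.reachable.trans (ih (fun v hv => hsup v (by simp [hv])) hc hb)

lemma isAcyclic_induce (h : T.IsAcyclic) (s : Set V) : (T.induce s).IsAcyclic := by
  intro v p hp
  exact h (p.map (Embedding.induce (G := T) s).toHom)
    ((Walk.map_isCycle_iff_of_injective (Embedding.induce (G := T) s).injective).2 hp)

lemma ncard_neighborSet_induce {s : Set V} {v : V} (hv : v ∈ s)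
    (hnb : ∀ w, T.Adj v w → w ∈ s) :
    ((T.induce s).neighborSet ⟨v, hv⟩).ncard = (T.neighborSet v).ncard := by
  have himg : Subtype.val '' ((T.induce s).neighborSet ⟨v, hv⟩) = T.neighborSet v := by
    ext w
    simp only [Set.mem_image, SimpleGraph.mem_neighborSet]
    constructor
    · rintro ⟨⟨w', hw'⟩, hadj, rfl⟩
      exact hadj
    · intro hadj
      exact ⟨⟨w, hnb w hadj⟩, by simpa using hadj, rfl⟩
  rw [← himg, Set.ncard_image_of_injective _ Subtype.val_injective]

lemma leaf_not_mem_path {x y : V} (hnx : T.neighborSet x = {y}) {a b : V} (p : T.Walk a b)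
    (hp : p.IsPath) (ha : a ≠ x) (hb : b ≠ x) : x ∉ p.support := by
  induction p with
  | nil => simpa using fun h => ha h.symm
  | @cons a c b h q ih =>
    rw [Walk.support_cons, List.mem_cons]
    push_neg
    refine ⟨fun hx => ha hx.symm, ?_⟩
    by_cases hc : c = x
    · subst hc
      cases q with
      | nil => exact absurd rfl hb
      | @cons _ c' _ h' q' =>
        exfalso
        have hc' : c' = y := by
          have h2 := h'
          rw [← SimpleGraph.mem_neighborSet, hnx, Set.mem_singleton_iff] at h2
          exact h2
        have ha' : a = y := by
          have h2 := h.symm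
          rw [← SimpleGraph.mem_neighborSet, hnx, Set.mem_singleton_iff] at h2
          exact h2
        subst hc'
        have hnodup := hp.support_nodup
        rw [Walk.support_cons, Walk.support_cons] at hnodup
        have := List.nodup_cons.1 hnodup
        exact this.1 (by simp [ha', Walk.start_mem_support])
    · exact ih (hp.of_cons) hc hb

lemma center_not_mem_path {x y z u : V} (hnx : T.neighborSet x = {y})
    (hnz : T.neighborSet z = {y}) (hny : T.neighborSet y = {x, z, u}) (hu : u ≠ y)
    {a b : V} (p : T.Walk a b) (hp : p.IsPath)
    (hax : a ≠ x) (hay : a ≠ y) (haz : a ≠ z)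
    (hbx : b ≠ x) (hby : b ≠ y) (hbz : b ≠ z) : y ∉ p.support := by
  classical
  intro hy
  have hxs := leaf_not_mem_path hnx p hp hax hbx
  have hzs := leaf_not_mem_path hnz p hp haz hbz
  set p₁ := p.takeUntil y hy with hp₁def
  set p₂ := p.dropUntil y hy with hp₂def
  have hp₁ : p₁.IsPath := hp.takeUntil hy
  have hp₂ : p₂.IsPath := hp.dropUntil hy
  -- second vertex of p₂ is u
  obtain ⟨c₂, h₂, q₂, hq₂⟩ := p₂.exists_eq_cons_of_ne (Ne.symm hby)
  have hc₂ : c₂ = u := by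
    have hmem : c₂ ∈ T.neighborSet y := h₂
    rw [hny] at hmem
    rcases hmem with rfl | rfl | rfl
    · exact absurd ((p.support_dropUntil_subset hy) (by show _ ∈ p₂.support; rw [hq₂]; simp [Walk.start_mem_support]))
        hxs
    · exact absurd ((p.support_dropUntil_subset hy) (by show _ ∈ p₂.support; rw [hq₂]; simp [Walk.start_mem_support]))
        hzs
    · rfl
  -- second vertex of p₁.reverse is u
  obtain ⟨c₁, h₁, q₁, hq₁⟩ := p₁.reverse.exists_eq_cons_of_ne (Ne.symm hay)
  have hc₁ : c₁ = u := by
    have hmem : c₁ ∈ T.neighborSet y := h₁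
    rw [hny] at hmem
    rcases hmem with rfl | rfl | rfl
    · exact absurd ((p.support_takeUntil_subset hy)
        (by have : c₁ ∈ p₁.reverse.support := by rw [hq₁]; simp [Walk.start_mem_support]
            simpa using this)) (by simpa using hxs)
    · exact absurd ((p.support_takeUntil_subset hy)
        (by have : c₁ ∈ p₁.reverse.support := by rw [hq₁]; simp [Walk.start_mem_support]
            simpa using this)) (by simpa using hzs)
    · rfl
  -- contradiction with nodup
  have hu₁ : u ∈ p₁.support := by
    have : u ∈ p₁.reverse.support := by rw [hq₁, ← hc₁]; simp [Walk.start_mem_support]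
    simpa using this
  have hu₂ : u ∈ p₂.support.tail := by
    rw [hq₂, ← hc₂]
    simp [Walk.support_cons, Walk.start_mem_support]
  have hnodup := hp.support_nodup
  rw [← p.take_spec hy, Walk.support_append] at hnodup
  exact (List.disjoint_of_nodup_append hnodup) hu₁ hu₂

lemma walk_parity' (C : Set V) (hC : ∀ a b, T.Adj a b → (a ∈ C ↔ b ∉ C))
    {a b : V} (p : T.Walk a b) : ((a ∈ C) ↔ (b ∈ C)) ↔ Even p.length := by
  induction p with
  | nil => simp
  | cons h q ih =>
    have := hC _ _ h
    simp only [Walk.length_cons, Nat.even_add_one, ← ih]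
    tauto

lemma induce_connected_of_leaves (hT : T.IsTree) {x y z u : V}
    (hnx : T.neighborSet x = {y}) (hnz : T.neighborSet z = {y})
    (hny : T.neighborSet y = {x, z, u})
    (hux : u ≠ x) (huy : u ≠ y) (huz : u ≠ z) :
    (T.induce ({x, y, z} : Set V)ᶜ).Connected := by
  classical
  have hnonempty : Nonempty ↥(({x, y, z} : Set V)ᶜ) :=
    ⟨⟨u, by simp [hux, huy, huz]⟩⟩
  rw [SimpleGraph.connected_iff]
  refine ⟨?_, hnonempty⟩
  rintro ⟨a, ha⟩ ⟨b, hb⟩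
  simp only [Set.mem_compl_iff, Set.mem_insert_iff, Set.mem_singleton_iff, not_or] at ha hb
  obtain ⟨hax, hay, haz⟩ := ha
  obtain ⟨hbx, hby, hbz⟩ := hb
  obtain ⟨p0⟩ := hT.isConnected a b
  have hp : p0.bypass.IsPath := p0.bypass_isPath
  set p := p0.bypass
  have hxs := leaf_not_mem_path hnx p hp hax hbx
  have hzs := leaf_not_mem_path hnz p hp haz hbz
  have hys := center_not_mem_path hnx hnz hny huy p hp hax hay haz hbx hby hbz
  refine reachable_induce p (fun v hv => ?_) _ _
  simp only [Set.mem_compl_iff, Set.mem_insert_iff, Set.mem_singleton_iff, not_or]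
  exact ⟨fun h => hxs (h ▸ hv), fun h => hys (h ▸ hv), fun h => hzs (h ▸ hv)⟩

lemma even_dist_iff (hT : T.IsTree) (C : Set V)
    (hcross : ∀ a b, T.Adj a b → (a ∈ C ↔ b ∉ C)) (r v : V) :
    (Even (T.dist r v) ↔ (r ∈ C ↔ v ∈ C)) := by
  obtain ⟨p, hp⟩ := hT.isConnected.exists_walk_length_eq_dist r v
  rw [← hp, ← walk_parity' C hcross p]

lemma adj_dist_cases (hT : T.IsTree) (C : Set V)
    (hcross : ∀ a b, T.Adj a b → (a ∈ C ↔ b ∉ C)) (r v w : V) (h : T.Adj v w) :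
    T.dist r w + 1 = T.dist r v ∨ T.dist r w = T.dist r v + 1 := by
  have h1 : T.dist r w ≤ T.dist r v + 1 := by
    obtain ⟨p, hp⟩ := hT.isConnected.exists_walk_length_eq_dist r v
    have := SimpleGraph.dist_le (p.concat h)
    rwa [Walk.length_concat, hp] at this
  have h2 : T.dist r v ≤ T.dist r w + 1 := by
    obtain ⟨p, hp⟩ := hT.isConnected.exists_walk_length_eq_dist r w
    have := SimpleGraph.dist_le (p.concat h.symm)
    rwa [Walk.length_concat, hp] at this
  have hne : T.dist r v ≠ T.dist r w := by
    intro heq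
    have hv := even_dist_iff hT C hcross r v
    have hw := even_dist_iff hT C hcross r w
    have := hcross v w h
    rw [heq] at hv
    tauto
  omega

end part2


noncomputable def attachP3Iso {A B : Type} {GA : SimpleGraph A} {GB : SimpleGraph B} (e : GA ≃g GB)
    (u : A) : attachP3 GA u ≃g attachP3 GB (e u) where
  toEquiv := Equiv.sumCongr e.toEquiv (Equiv.refl (Fin 3))
  map_rel_iff' := by
    rintro (a | i) (b | j) <;>
      simp [e.map_adj_iff, EmbeddingLike.apply_eq_iff_eq]

noncomputable def peelIso {V : Type} (T : SimpleGraph V) (x y z u : V)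
    (hnx : T.neighborSet x = {y}) (hnz : T.neighborSet z = {y})
    (hny : T.neighborSet y = {x, z, u})
    (hxz : x ≠ z) (hux : u ≠ x) (huy : u ≠ y) (huz : u ≠ z) :
    T ≃g attachP3 (T.induce ({x, y, z} : Set V)ᶜ)
      ⟨u, by simp [Ne.symm, hux, huy, huz]⟩ := by
  classical
  have haX : ∀ v, T.Adj x v ↔ v = y := by
    intro v
    rw [← SimpleGraph.mem_neighborSet, hnx, Set.mem_singleton_iff]
  have haZ : ∀ v, T.Adj z v ↔ v = y := by
    intro v
    rw [← SimpleGraph.mem_neighborSet, hnz, Set.mem_singleton_iff]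
  have haY : ∀ v, T.Adj y v ↔ (v = x ∨ v = z ∨ v = u) := by
    intro v
    rw [← SimpleGraph.mem_neighborSet, hny]
    simp
  have hxy : x ≠ y := ((haX y).2 rfl).ne
  have hzy : z ≠ y := ((haZ y).2 rfl).ne
  refine
    { toFun := fun v =>
        if hvx : v = x then Sum.inr 0
        else if hvy : v = y then Sum.inr 1
        else if hvz : v = z then Sum.inr 2
        else Sum.inl ⟨v, by simp [hvx, hvy, hvz]⟩
      invFun := fun w =>
        match w with
        | Sum.inl w => ↑w
        | Sum.inr i => if i = 0 then x else if i = 1 then y else z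
      left_inv := ?_
      right_inv := ?_
      map_rel_iff' := ?_ }
  · intro v
    by_cases hvx : v = x
    · simp [hvx]
    · by_cases hvy : v = y
      · simp [hvx, hvy, Ne.symm hxy]
      · by_cases hvz : v = z
        · simp [hvx, hvy, hvz, Ne.symm hxz, hzy]
        · simp [hvx, hvy, hvz]
  · rintro (w | i)
    · have hw := w.2
      simp only [Set.mem_compl_iff, Set.mem_insert_iff, Set.mem_singleton_iff, not_or] at hw
      simp [hw.1, hw.2.1, hw.2.2]
    · fin_cases i
      · simp [hxy, hxz]
      · simp [Ne.symm hxy, hzy]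
      · simp [Ne.symm hxz, Ne.symm hzy, hzy]
  · intro a b
    have haX' : ∀ v, T.Adj v x ↔ v = y := fun v => by rw [SimpleGraph.adj_comm]; exact haX v
    have haZ' : ∀ v, T.Adj v z ↔ v = y := fun v => by rw [SimpleGraph.adj_comm]; exact haZ v
    have haY' : ∀ v, T.Adj v y ↔ (v = x ∨ v = z ∨ v = u) := fun v => by
      rw [SimpleGraph.adj_comm]; exact haY v
    have ha : a = x ∨ a = y ∨ a = z ∨ (a ≠ x ∧ a ≠ y ∧ a ≠ z) := by tauto
    have hb : b = x ∨ b = y ∨ b = z ∨ (b ≠ x ∧ b ≠ y ∧ b ≠ z) := by tauto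
    obtain rfl | rfl | rfl | ⟨hax, hay, haz⟩ := ha <;>
      obtain rfl | rfl | rfl | ⟨hbx, hby, hbz⟩ := hb <;>
        simp [*, Subtype.ext_iff, Ne.symm hxy, Ne.symm hzy, Ne.symm hxz,
          Ne.symm hux, Ne.symm huy, Ne.symm huz]

lemma build_of_good : ∀ (n : ℕ) (V : Type) [Fintype V] (T : SimpleGraph V),
    Fintype.card V = n → T.IsTree →
    (∃ C : Finset V, (∀ c ∈ C, (T.neighborSet c).ncard = 3) ∧
      T.IsIndepSet' ↑C ∧ T.IsIndepSet' (↑C)ᶜ) →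
    ∃ (W : Type) (G : SimpleGraph W), BuiltByP3 W G ∧ Nonempty (T ≃g G) := by
  intro n
  induction n using Nat.strong_induction_on with
  | _ n ih =>
  intro V _ T hcard hT hgood
  classical
  obtain ⟨C, hdeg, hCind, hCcind⟩ := hgood
  rcases Finset.eq_empty_or_nonempty C with rfl | hCne
  · -- base case : no edges, single vertex
    have hnoadj : ∀ a b : V, ¬ T.Adj a b := by
      intro a b hab
      exact hCcind (by simp) (by simp) hab.ne hab
    have hsingle : ∀ a b : V, a = b := by
      intro a b
      obtain ⟨p⟩ := hT.isConnected a b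
      cases p with
      | nil => rfl
      | cons h q => exact absurd h (hnoadj _ _)
    have hnev : Nonempty V := hT.isConnected.nonempty
    haveI : Subsingleton V := ⟨hsingle⟩
    haveI : Unique V := uniqueOfSubsingleton (Classical.arbitrary V)
    refine ⟨PUnit, ⊥, BuiltByP3.base, ⟨{ toEquiv := Equiv.equivPUnit V, map_rel_iff' := ?_ }⟩⟩
    intro a b
    simp [hnoadj a b]
  · have hnev : Nonempty V := hT.isConnected.nonempty
    have hnpos : 0 < n := hcard ▸ Fintype.card_pos
    set r := Classical.arbitrary V with hr
    obtain ⟨y, hyC, hymax⟩ := C.exists_max_image (fun c => T.dist r c) hCne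
    have hcross : ∀ a b, T.Adj a b → ((a ∈ (↑C : Set V)) ↔ (b ∉ (↑C : Set V))) := by
      intro a b hab
      constructor
      · intro haC hbC
        exact hCind haC hbC hab.ne hab
      · intro hbC
        by_contra haC
        exact hCcind haC hbC hab.ne hab
    set d := T.dist r y with hd
    have hdc : ∀ w ∈ T.neighborSet y, T.dist r w + 1 = d ∨ T.dist r w = d + 1 :=
      fun w hw => adj_dist_cases hT _ hcross r y w hw
    have hpar : ∀ w₁ ∈ T.neighborSet y, ∀ w₂ ∈ T.neighborSet y,
        T.dist r w₁ + 1 = d → T.dist r w₂ + 1 = d → w₁ = w₂ := by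
      intro w₁ hw₁ w₂ hw₂ h1 h2
      have hw₁' : T.Adj y w₁ := hw₁
      have hw₂' : T.Adj y w₂ := hw₂
      exact tree_unique_parent hT hw₁'.symm hw₂'.symm h1 h2
    have hleaf : ∀ w, T.Adj y w → T.dist r w = d + 1 → T.neighborSet w = {y} := by
      intro w hyw hwd
      ext c'
      simp only [SimpleGraph.mem_neighborSet, Set.mem_singleton_iff]
      constructor
      · intro hwc'
        by_contra hc'y
        have hwC : (w : V) ∉ (↑C : Set V) := (hcross y w hyw).1 hyC
        have hc'C : c' ∈ (↑C : Set V) := by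
          by_contra h
          exact hwC ((hcross w c' hwc').2 h)
        have hle : T.dist r c' ≤ d := hymax c' hc'C
        rcases adj_dist_cases hT _ hcross r w c' hwc' with h1 | h1
        · exact hc'y (tree_unique_parent hT (r := r) hwc'.symm hyw (by omega) (by omega))
        · omega
      · rintro rfl
        exact hyw.symm
    obtain ⟨a₁, a₂, a₃, h12, h13, h23, hN⟩ := Set.ncard_eq_three.1 (hdeg y hyC)
    have hmem1 : a₁ ∈ T.neighborSet y := by rw [hN]; simp
    have hmem2 : a₂ ∈ T.neighborSet y := by rw [hN]; simp
    have hmem3 : a₃ ∈ T.neighborSet y := by rw [hN]; simp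
    have main : ∀ x z u' : V, T.neighborSet y = {x, z, u'} → x ≠ z → x ≠ u' → z ≠ u' →
        T.dist r x = d + 1 → T.dist r z = d + 1 →
        ∃ (W : Type) (G : SimpleGraph W), BuiltByP3 W G ∧ Nonempty (T ≃g G) := by
      intro x z u' hN' hxz hxu hzu hdx hdz
      have hyx : T.Adj y x := by rw [← SimpleGraph.mem_neighborSet, hN']; simp
      have hyz : T.Adj y z := by rw [← SimpleGraph.mem_neighborSet, hN']; simp
      have hyu : T.Adj y u' := by rw [← SimpleGraph.mem_neighborSet, hN']; simp
      have hnx : T.neighborSet x = {y} := hleaf x hyx hdx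
      have hnz : T.neighborSet z = {y} := hleaf z hyz hdz
      have hux : u' ≠ x := hxu.symm
      have huz : u' ≠ z := hzu.symm
      have huy : u' ≠ y := hyu.ne'
      have hxy : x ≠ y := hyx.ne'
      have hzy : z ≠ y := hyz.ne'
      set S : Set V := ({x, y, z} : Set V)ᶜ with hS
      haveI : Fintype ↥S := Fintype.ofFinite ↥S
      have hT' : (T.induce S).IsTree :=
        ⟨induce_connected_of_leaves hT hnx hnz hN' hux huy huz, isAcyclic_induce hT.2 S⟩
      have hxyz3 : ({x, y, z} : Set V).ncard = 3 := by
        rw [Set.ncard_insert_of_notMem (by simp [hxy, hxz]) (Set.toFinite _),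
          Set.ncard_pair (by simpa using hzy.symm)]
      have hcardS : Fintype.card ↥S = n - 3 := by
        have h1 := Set.ncard_add_ncard_compl ({x, y, z} : Set V) (Set.toFinite _) (Set.toFinite _)
        rw [hxyz3] at h1
        rw [← Nat.card_eq_fintype_card, Nat.card_coe_set_eq]
        have h2 : Nat.card V = n := by rw [Nat.card_eq_fintype_card, hcard]
        rw [Nat.card_eq_fintype_card] at h1
        rw [hS]
        omega
      -- the Finset C on the subtype
      set C' : Finset ↥S := Finset.univ.filter (fun v => (v : V) ∈ C) with hC'
      have hxC : x ∉ (↑C : Set V) := (hcross y x hyx).1 hyC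
      have hzC : z ∉ (↑C : Set V) := (hcross y z hyz).1 hyC
      have huC : u' ∉ (↑C : Set V) := (hcross y u' hyu).1 hyC
      have hgood' : (∀ c ∈ C', ((T.induce S).neighborSet c).ncard = 3) ∧
          (T.induce S).IsIndepSet' ↑C' ∧ (T.induce S).IsIndepSet' (↑C')ᶜ := by
        refine ⟨?_, ?_, ?_⟩
        · rintro ⟨v, hvS⟩ hc
          have hvC : v ∈ C := by
            simpa [hC'] using hc
          have hvS' := hvS
          simp only [hS, Set.mem_compl_iff, Set.mem_insert_iff, Set.mem_singleton_iff,
            not_or] at hvS'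
          obtain ⟨hvx, hvy, hvz⟩ := hvS'
          have hnb : ∀ w, T.Adj v w → w ∈ S := by
            intro w hvw
            simp only [hS, Set.mem_compl_iff, Set.mem_insert_iff, Set.mem_singleton_iff, not_or]
            refine ⟨?_, ?_, ?_⟩
            · rintro rfl
              have : v ∈ T.neighborSet w := hvw.symm
              rw [hnx, Set.mem_singleton_iff] at this
              exact hvy this
            · rintro rfl
              have : v ∈ T.neighborSet w := hvw.symm
              rw [hN'] at this
              rcases this with h | h | h
              · exact hvx h
              · exact hvz h
              · exact huC (h ▸ hvC)
            · rintro rfl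
              have : v ∈ T.neighborSet w := hvw.symm
              rw [hnz, Set.mem_singleton_iff] at this
              exact hvy this
          rw [ncard_neighborSet_induce hvS hnb]
          exact hdeg v hvC
        · rintro ⟨a, haS⟩ ha ⟨b, hbS⟩ hb hnab hadj
          have haC : a ∈ C := by simpa [hC'] using ha
          have hbC : b ∈ C := by simpa [hC'] using hb
          exact hCind (Finset.mem_coe.2 haC) (Finset.mem_coe.2 hbC)
            (fun h => hnab (Subtype.ext h)) hadj
        · rintro ⟨a, haS⟩ ha ⟨b, hbS⟩ hb hnab hadj
          have haC : a ∉ C := by simpa [hC'] using ha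
          have hbC : b ∉ C := by simpa [hC'] using hb
          exact hCcind haC hbC (fun h => hnab (Subtype.ext h)) hadj
      obtain ⟨W, G, hbuilt, ⟨e⟩⟩ :=
        ih (n - 3) (by omega) ↥S (T.induce S) hcardS hT' ⟨C', hgood'⟩
      have hu'S : u' ∈ S := by
        simp [hS, hux, huy, huz]
      refine ⟨W ⊕ Fin 3, attachP3 G (e ⟨u', hu'S⟩), BuiltByP3.step G _ hbuilt, ⟨?_⟩⟩
      exact (peelIso T x y z u' hnx hnz hN' hxz hux huy huz).trans (attachP3Iso e ⟨u', hu'S⟩)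
    have hperm132 : T.neighborSet y = {a₁, a₃, a₂} := by
      rw [hN]; ext v; simp; tauto
    have hperm231 : T.neighborSet y = {a₂, a₃, a₁} := by
      rw [hN]; ext v; simp; tauto
    rcases hdc a₁ hmem1 with h1 | h1 <;> rcases hdc a₂ hmem2 with h2 | h2 <;>
      rcases hdc a₃ hmem3 with h3 | h3
    · exact absurd (hpar a₁ hmem1 a₂ hmem2 h1 h2) h12
    · exact absurd (hpar a₁ hmem1 a₂ hmem2 h1 h2) h12
    · exact absurd (hpar a₁ hmem1 a₃ hmem3 h1 h3) h13
    · exact main a₂ a₃ a₁ hperm231 h23 h12.symm h13.symm h2 h3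
    · exact absurd (hpar a₂ hmem2 a₃ hmem3 h2 h3) h23
    · exact main a₁ a₃ a₂ hperm132 h13 h12 h23.symm h1 h3
    · exact main a₁ a₂ a₃ hN h12 h13 h23 h1 h2
    · exact main a₁ a₂ a₃ hN h12 h13 h23 h1 h2

theorem stmt14 {V : Type} [Fintype V] (T : SimpleGraph V) (hT : T.IsTree)
    (hsub : ∀ v : V, (T.neighborSet v).ncard ≤ 3) (n : ℕ)
    (hn : Fintype.card V = n) :
    3 * _root_.indepNum T = 2 * n + 1 ↔
      ∃ (W : Type) (G : SimpleGraph W), BuiltByP3 W G ∧ Nonempty (T ≃g G) := by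
  constructor
  · intro h
    exact build_of_good (Fintype.card V) V T rfl hT
      (good_of_count T hT hsub (by rw [hn]; exact h))
  · rintro ⟨W, G, hbuilt, ⟨e⟩⟩
    obtain ⟨hfin, hcard⟩ := built_finite_card hbuilt
    have hiso : _root_.indepNum T = _root_.indepNum G := indepNum_iso e
    have hn' : Nat.card W = n := by
      rw [← Nat.card_congr e.toEquiv, Nat.card_eq_fintype_card, hn]
    omega
end

section
/- If T is a subcubic tree of order n with independence number α, then the number of maximum independent sets of T is at most φ^(2n−3α+1), where φ = (1+√5)/2 is the golden ratio. -/
open SimpleGraph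

set_option linter.unusedSectionVars false

namespace MISAux

attribute [local instance] Classical.propDecidable

noncomputable def phi : ℝ := (1 + Real.sqrt 5) / 2

lemma phi_gt_one : 1 < phi := by
  have h : (1:ℝ) < Real.sqrt 5 := by
    rw [show (1:ℝ) = Real.sqrt 1 by simp]
    exact Real.sqrt_lt_sqrt (by norm_num) (by norm_num)
  unfold phi; linarith
lemma phi_pos : 0 < phi := lt_trans one_pos phi_gt_one
lemma phi_ne_zero : phi ≠ 0 := ne_of_gt phi_pos
lemma phi_sq : phi ^ (2:ℕ) = phi + 1 := by
  have h5 : Real.sqrt 5 ^ 2 = 5 := Real.sq_sqrt (by norm_num)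
  unfold phi; ring_nf; nlinarith [h5]
lemma phi_mono {a b : ℤ} (h : a ≤ b) : phi ^ a ≤ phi ^ b :=
  zpow_le_zpow_right₀ (le_of_lt phi_gt_one) h
lemma phi_fib (e : ℤ) : phi ^ (e-1) + phi ^ (e-2) ≤ phi ^ e := by
  have h : phi ^ e = phi ^ (e-2) * phi ^ (2:ℕ) := by
    rw [← zpow_natCast phi 2, ← zpow_add₀ phi_ne_zero]; ring_nf
  have h1 : phi ^ (e-1) = phi ^ (e-2) * phi := by
    rw [← zpow_add_one₀ phi_ne_zero]; ring_nf
  rw [h, h1, phi_sq]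
  ring_nf
  exact le_refl _
lemma phi_zpow_pos (e : ℤ) : (0:ℝ) < phi ^ e := zpow_pos phi_pos _
lemma phi_two_mul (e : ℤ) : 2 * phi ^ (e-2) ≤ phi ^ e := by
  have h : phi ^ e = phi ^ (e-2) * phi ^ (2:ℕ) := by
    rw [← zpow_natCast phi 2, ← zpow_add₀ phi_ne_zero]; ring_nf
  rw [h, phi_sq]
  have h2 : (0:ℝ) < phi ^ (e-2) := zpow_pos phi_pos _
  nlinarith [phi_gt_one]

variable {V : Type*} [Fintype V] (T : SimpleGraph V)

/-- independence predicate -/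
def Ind (A : Finset V) : Prop := ∀ u ∈ A, ∀ v ∈ A, ¬ T.Adj u v

/-- neighbors of a vertex within s -/
noncomputable def NbrS (s : Finset V) (v : V) : Finset V := s.filter (fun y => T.Adj v y)

/-- independence number within s -/
noncomputable def alph (s : Finset V) : ℕ := (s.powerset.filter (Ind T)).sup Finset.card

/-- the maximum independent sets within s -/
noncomputable def mis (s : Finset V) : Finset (Finset V) :=
  s.powerset.filter (fun A => Ind T A ∧ A.card = alph T s)

/-- edges inside s -/
noncomputable def edgesIn (s : Finset V) : Finset (Sym2 V) :=
  T.edgeFinset.filter (fun e => ∀ x ∈ e, x ∈ s)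

noncomputable def expn (s : Finset V) : ℤ :=
  3 * (s.card : ℤ) - 3 * (alph T s : ℤ) - ((edgesIn T s).card : ℤ)

variable {T}

lemma mem_nbrS {s : Finset V} {v y : V} : y ∈ NbrS T s v ↔ y ∈ s ∧ T.Adj v y := by
  simp [NbrS]

lemma ind_mono {A B : Finset V} (h : A ⊆ B) (hB : Ind T B) : Ind T A :=
  fun u hu v hv => hB u (h hu) v (h hv)

lemma mem_mis {s A : Finset V} : A ∈ mis T s ↔ A ⊆ s ∧ Ind T A ∧ A.card = alph T s := by
  simp only [mis, Finset.mem_filter, Finset.mem_powerset]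

lemma card_le_alph {s A : Finset V} (hA : A ⊆ s) (hI : Ind T A) : A.card ≤ alph T s := by
  exact Finset.le_sup (Finset.mem_filter.2 ⟨Finset.mem_powerset.2 hA, hI⟩)

lemma exists_mis (s : Finset V) : ∃ A, A ∈ mis T s := by
  have hne : (s.powerset.filter (Ind T)).Nonempty :=
    ⟨∅, Finset.mem_filter.2 ⟨Finset.mem_powerset.2 (Finset.empty_subset s),
      fun u hu => absurd hu (Finset.notMem_empty u)⟩⟩
  obtain ⟨A, hA, hcard⟩ := Finset.exists_mem_eq_sup _ hne Finset.card
  rw [Finset.mem_filter, Finset.mem_powerset] at hA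
  exact ⟨A, mem_mis.2 ⟨hA.1, hA.2, hcard.symm⟩⟩

/-- augmenting: if z can be added to an independent set, bound grows -/
lemma alph_lt {s A : Finset V} {z : V} (hA : A ⊆ s) (hI : Ind T A) (hz : z ∈ s)
    (hzA : z ∉ A) (hnb : ∀ y ∈ A, ¬ T.Adj z y) : A.card + 1 ≤ alph T s := by
  have hsub : insert z A ⊆ s := Finset.insert_subset hz hA
  have hind : Ind T (insert z A) := by
    intro u hu v hv hadj
    rcases Finset.mem_insert.1 hu with hu1 | hu1 <;> rcases Finset.mem_insert.1 hv with hv1 | hv1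
    · subst hu1; rw [hv1] at hadj; exact T.loopless.irrefl _ hadj
    · rw [hu1] at hadj; exact hnb v hv1 hadj
    · rw [hv1] at hadj; exact hnb u hu1 hadj.symm
    · exact hI u hu1 v hv1 hadj
  have := card_le_alph hsub hind
  rwa [Finset.card_insert_of_notMem hzA] at this

/-- every MIS contains z or one of its neighbors in s -/
lemma mis_hits {s A : Finset V} {z : V} (hz : z ∈ s) (hA : A ∈ mis T s) :
    z ∈ A ∨ ∃ y ∈ A, T.Adj z y := by
  by_contra h
  push_neg at h
  obtain ⟨hzA, hnb⟩ := h
  rcases mem_mis.1 hA with ⟨hAs, hI, hcard⟩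
  have := alph_lt hAs hI hz hzA (fun y hy hadj => hnb y hy hadj)
  omega


/-- The workhorse bijection: MIS's of `s` containing `z` correspond to MIS's of
`s` minus `z`'s closed neighborhood, provided the independence numbers match. -/
lemma count_eq {s t : Finset V} {z : V} (hz : z ∈ s)
    (ht : t = s \ insert z (NbrS T s z))
    (halph : alph T t + 1 = alph T s) :
    ((mis T s).filter (fun A => z ∈ A)).card = (mis T t).card := by
  subst ht
  set t := s \ insert z (NbrS T s z) with htdef
  refine Finset.card_bij' (fun A _ => A.erase z) (fun B _ => insert z B) ?_ ?_ ?_ ?_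
  · intro A hA
    rw [Finset.mem_filter] at hA
    obtain ⟨hAmis, hzA⟩ := hA
    rcases mem_mis.1 hAmis with ⟨hAs, hI, hcard⟩
    refine mem_mis.2 ⟨?_, ind_mono (Finset.erase_subset _ _) hI, ?_⟩
    · intro x hx
      have hxz : x ≠ z := Finset.ne_of_mem_erase hx
      have hxA : x ∈ A := Finset.mem_of_mem_erase hx
      rw [htdef, Finset.mem_sdiff]
      refine ⟨hAs hxA, ?_⟩
      intro hmem
      rcases Finset.mem_insert.1 hmem with h1 | h1
      · exact hxz h1
      · exact hI z hzA x hxA (mem_nbrS.1 h1).2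
    · rw [Finset.card_erase_of_mem hzA, hcard]; omega
  · intro B hB
    rcases mem_mis.1 hB with ⟨hBt, hI, hcard⟩
    have hzB : z ∉ B := by
      intro h
      have := hBt h
      rw [htdef, Finset.mem_sdiff] at this
      exact this.2 (Finset.mem_insert_self _ _)
    rw [Finset.mem_filter]
    constructor
    · refine mem_mis.2 ⟨?_, ?_, ?_⟩
      · intro x hx
        rcases Finset.mem_insert.1 hx with h1 | h1
        · rwa [h1]
        · have := hBt h1
          rw [htdef, Finset.mem_sdiff] at this
          exact this.1
      · intro a ha b hb hadj
        have key : ∀ y ∈ B, ¬ T.Adj z y := by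
          intro y hy hadj'
          have hyt := hBt hy
          rw [htdef, Finset.mem_sdiff] at hyt
          exact hyt.2 (Finset.mem_insert.2 (Or.inr (mem_nbrS.2 ⟨hyt.1, hadj'⟩)))
        rcases Finset.mem_insert.1 ha with ha1 | ha1 <;> rcases Finset.mem_insert.1 hb with hb1 | hb1
        · subst ha1; rw [hb1] at hadj; exact T.loopless.irrefl _ hadj
        · rw [ha1] at hadj; exact key b hb1 hadj
        · rw [hb1] at hadj; exact key a ha1 hadj.symm
        · exact hI a ha1 b hb1 hadj
      · rw [Finset.card_insert_of_notMem hzB, hcard, halph]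
    · exact Finset.mem_insert_self _ _
  · intro A hA
    rw [Finset.mem_filter] at hA
    exact Finset.insert_erase hA.2
  · intro B hB
    rcases mem_mis.1 hB with ⟨hBt, _, _⟩
    have hzB : z ∉ B := by
      intro h
      have := hBt h
      rw [Finset.mem_sdiff] at this
      exact this.2 (Finset.mem_insert_self _ _)
    exact Finset.erase_insert hzB

/-- splitting the MIS count at a leaf u with neighbor v -/
lemma mis_split {s : Finset V} {u v : V} (hu : u ∈ s) (hlu : NbrS T s u = {v}) :
    (mis T s).card = ((mis T s).filter (fun A => u ∈ A)).card
      + ((mis T s).filter (fun A => v ∈ A)).card := by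
  have hadj : T.Adj u v := (mem_nbrS.1 (hlu ▸ Finset.mem_singleton_self v)).2
  rw [← Finset.card_filter_add_card_filter_not (fun A => u ∈ A) (s := mis T s)]
  congr 1
  apply congrArg
  apply Finset.filter_congr
  intro A hA
  constructor
  · intro huA
    rcases mis_hits hu hA with h | ⟨y, hy, hadjy⟩
    · exact absurd h huA
    · have : y ∈ NbrS T s u := mem_nbrS.2 ⟨(mem_mis.1 hA).1 hy, hadjy⟩
      rw [hlu, Finset.mem_singleton] at this
      rwa [← this]
  · intro hvA huA
    exact (mem_mis.1 hA).2.1 u huA v hvA hadj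

lemma alph_succ_le {s t : Finset V} {u : V} (hu : u ∈ s) (hts : t ⊆ s) (hut : u ∉ t)
    (hnb : ∀ y ∈ NbrS T s u, y ∉ t) : alph T t + 1 ≤ alph T s := by
  obtain ⟨A, hA⟩ := exists_mis (T := T) t
  rcases mem_mis.1 hA with ⟨hAt, hI, hcard⟩
  have h := alph_lt (hAt.trans hts) hI hu (fun h => hut (hAt h)) ?_
  · omega
  · intro y hy hadj
    exact hnb y (mem_nbrS.2 ⟨hts (hAt hy), hadj⟩) (hAt hy)

lemma alph_sdiff_le {s R : Finset V} (hcap : ∀ A ∈ mis T s, (A ∩ R).card ≤ 1) :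
    alph T s ≤ alph T (s \ R) + 1 := by
  obtain ⟨A, hA⟩ := exists_mis (T := T) s
  rcases mem_mis.1 hA with ⟨hAs, hI, hcard⟩
  have hsub : A \ R ⊆ s \ R := fun x hx => by
    rw [Finset.mem_sdiff] at hx ⊢; exact ⟨hAs hx.1, hx.2⟩
  have h1 := card_le_alph hsub (ind_mono (Finset.sdiff_subset) hI)
  have h2 : (A ∩ R).card + (A \ R).card = A.card := Finset.card_inter_add_card_sdiff A R
  have := hcap A hA
  omega

lemma alph_isolated {s : Finset V} {z : V} (hz : z ∈ s) (hiso : NbrS T s z = ∅) :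
    alph T (s \ {z}) + 1 = alph T s := by
  apply le_antisymm
  · exact alph_succ_le hz (Finset.sdiff_subset)
      (by simp) (by rw [hiso]; intro y hy; exact absurd hy (Finset.notMem_empty y))
  · apply alph_sdiff_le
    intro A _
    calc (A ∩ {z}).card ≤ ({z} : Finset V).card := Finset.card_le_card (Finset.inter_subset_right)
    _ = 1 := Finset.card_singleton z

lemma alph_leaf {s : Finset V} {u v : V} (hu : u ∈ s) (hlu : NbrS T s u = {v}) :
    alph T (s \ {u, v}) + 1 = alph T s := by
  have hadj : T.Adj u v := (mem_nbrS.1 (hlu ▸ Finset.mem_singleton_self v)).2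
  apply le_antisymm
  · apply alph_succ_le hu (Finset.sdiff_subset)
    · simp
    · intro y hy
      rw [hlu, Finset.mem_singleton] at hy
      subst hy; simp
  · apply alph_sdiff_le
    intro A hA
    by_cases huA : u ∈ A
    · have hvA : v ∉ A := fun hvA => (mem_mis.1 hA).2.1 u huA v hvA hadj
      have : A ∩ {u, v} ⊆ {u} := by
        intro x hx
        rw [Finset.mem_inter, Finset.mem_insert, Finset.mem_singleton] at hx
        rcases hx.2 with h | h
        · simp [h]
        · exact absurd (h ▸ hx.1) hvA
      calc (A ∩ {u,v}).card ≤ ({u} : Finset V).card := Finset.card_le_card this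
      _ = 1 := Finset.card_singleton u
    · have : A ∩ {u, v} ⊆ {v} := by
        intro x hx
        rw [Finset.mem_inter, Finset.mem_insert, Finset.mem_singleton] at hx
        rcases hx.2 with h | h
        · exact absurd (h ▸ hx.1) huA
        · simp [h]
      calc (A ∩ {u,v}).card ≤ ({v} : Finset V).card := Finset.card_le_card this
      _ = 1 := Finset.card_singleton v

/-- if v has two distinct leaf neighbors, no MIS contains v -/
lemma v_not_in_mis {s : Finset V} {u x v : V} (hu : u ∈ s) (hx : x ∈ s) (hux : u ≠ x)
    (hlu : NbrS T s u = {v}) (hlx : NbrS T s x = {v}) (hnadj : ¬ T.Adj u x)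
    {A : Finset V} (hA : A ∈ mis T s) : v ∉ A := by
  intro hvA
  have hadju : T.Adj u v := (mem_nbrS.1 (hlu ▸ Finset.mem_singleton_self v)).2
  have hadjx : T.Adj x v := (mem_nbrS.1 (hlx ▸ Finset.mem_singleton_self v)).2
  rcases mem_mis.1 hA with ⟨hAs, hI, hcard⟩
  have huA : u ∉ A := fun h => hI u h v hvA hadju
  have hxA : x ∉ A := fun h => hI x h v hvA hadjx
  set B := insert u (insert x (A.erase v)) with hB
  have hcardB : B.card = A.card + 1 := by
    rw [hB, Finset.card_insert_of_notMem, Finset.card_insert_of_notMem,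
      Finset.card_erase_of_mem hvA]
    · have : 1 ≤ A.card := Finset.card_pos.2 ⟨v, hvA⟩
      omega
    · exact fun h => hxA (Finset.mem_of_mem_erase h)
    · rw [Finset.mem_insert]
      push_neg
      exact ⟨hux, fun h => huA (Finset.mem_of_mem_erase h)⟩
  have hBs : B ⊆ s := by
    rw [hB]
    apply Finset.insert_subset hu
    apply Finset.insert_subset hx
    exact (Finset.erase_subset _ _).trans hAs
  have hIB : Ind T B := by
    intro a ha b hb hadj
    have hmem : ∀ c, c ∈ B → c = u ∨ c = x ∨ (c ∈ A ∧ c ≠ v) := by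
      intro c hc
      rw [hB, Finset.mem_insert, Finset.mem_insert] at hc
      rcases hc with h | h | h
      · exact Or.inl h
      · exact Or.inr (Or.inl h)
      · exact Or.inr (Or.inr ⟨Finset.mem_of_mem_erase h, Finset.ne_of_mem_erase h⟩)
    have hvB : v ∉ B := by
      rw [hB, Finset.mem_insert, Finset.mem_insert]
      push_neg
      refine ⟨fun h => huA (h ▸ hvA), fun h => hxA (h ▸ hvA), by simp⟩
    rcases hmem a ha with ha1 | ha1 | ha1 <;> rcases hmem b hb with hb1 | hb1 | hb1
    · rw [ha1, hb1] at hadj; exact T.loopless.irrefl _ hadj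
    · rw [ha1, hb1] at hadj; exact hnadj hadj
    · rw [ha1] at hadj
      have : b ∈ NbrS T s u := mem_nbrS.2 ⟨hAs hb1.1, hadj⟩
      rw [hlu, Finset.mem_singleton] at this
      exact hb1.2 this
    · rw [ha1, hb1] at hadj; exact hnadj hadj.symm
    · rw [ha1, hb1] at hadj; exact T.loopless.irrefl _ hadj
    · rw [ha1] at hadj
      have : b ∈ NbrS T s x := mem_nbrS.2 ⟨hAs hb1.1, hadj⟩
      rw [hlx, Finset.mem_singleton] at this
      exact hb1.2 this
    · rw [hb1] at hadj
      have : a ∈ NbrS T s u := mem_nbrS.2 ⟨hAs ha1.1, hadj.symm⟩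
      rw [hlu, Finset.mem_singleton] at this
      exact ha1.2 this
    · rw [hb1] at hadj
      have : a ∈ NbrS T s x := mem_nbrS.2 ⟨hAs ha1.1, hadj.symm⟩
      rw [hlx, Finset.mem_singleton] at this
      exact ha1.2 this
    · exact hI a ha1.1 b hb1.1 hadj
  have := card_le_alph hBs hIB
  rw [hcardB, hcard] at this
  omega

lemma mem_edgesIn {s : Finset V} {e : Sym2 V} :
    e ∈ edgesIn T s ↔ e ∈ T.edgeSet ∧ ∀ x ∈ e, x ∈ s := by
  simp [edgesIn, SimpleGraph.mem_edgeFinset]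

lemma edge_eq {s : Finset V} {e : Sym2 V} (he : e ∈ edgesIn T s) {z : V} (hz : z ∈ e) :
    ∃ y ∈ NbrS T s z, e = s(z, y) := by
  rcases mem_edgesIn.1 he with ⟨hedge, hmem⟩
  induction e with
  | _ a b =>
    rw [SimpleGraph.mem_edgeSet] at hedge
    rcases Sym2.mem_iff.1 hz with rfl | rfl
    · exact ⟨b, mem_nbrS.2 ⟨hmem b (Sym2.mem_mk_right _ _), hedge⟩, rfl⟩
    · exact ⟨a, mem_nbrS.2 ⟨hmem a (Sym2.mem_mk_left _ _), hedge.symm⟩, Sym2.eq_swap⟩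

lemma nbrS_card_le3 (hdeg : ∀ z : V, T.degree z ≤ 3) (s : Finset V) (z : V) :
    (NbrS T s z).card ≤ 3 := by
  have hsub : NbrS T s z ⊆ T.neighborFinset z := by
    intro y hy
    rw [SimpleGraph.mem_neighborFinset]
    exact (mem_nbrS.1 hy).2
  calc (NbrS T s z).card ≤ (T.neighborFinset z).card := Finset.card_le_card hsub
  _ = T.degree z := rfl
  _ ≤ 3 := hdeg z

lemma edgesIn_card_le_leaf {s : Finset V} {u v : V} (hu : u ∈ s) (hlu : NbrS T s u = {v}) :
    (edgesIn T s).card ≤ (edgesIn T (s \ {u, v})).card + (NbrS T s v).card := by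
  have hadj : T.Adj u v := (mem_nbrS.1 (hlu ▸ Finset.mem_singleton_self v)).2
  have hv : v ∈ s := (mem_nbrS.1 (hlu ▸ Finset.mem_singleton_self v)).1
  have hsub : edgesIn T s ⊆ edgesIn T (s \ {u, v}) ∪ (NbrS T s v).image (fun y => s(v, y)) := by
    intro e he
    rw [Finset.mem_union]
    by_cases hcase : ∀ x ∈ e, x ∉ ({u, v} : Finset V)
    · left
      rcases mem_edgesIn.1 he with ⟨h1, h2⟩
      exact mem_edgesIn.2 ⟨h1, fun x hx => Finset.mem_sdiff.2 ⟨h2 x hx, hcase x hx⟩⟩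
    · right
      push_neg at hcase
      obtain ⟨z, hze, hzuv⟩ := hcase
      rw [Finset.mem_insert, Finset.mem_singleton] at hzuv
      rcases hzuv with rfl | rfl
      · obtain ⟨y, hy, hey⟩ := edge_eq he hze
        rw [hlu, Finset.mem_singleton] at hy
        subst hy
        rw [hey, Sym2.eq_swap]
        exact Finset.mem_image.2 ⟨z, mem_nbrS.2 ⟨hu, hadj.symm⟩, rfl⟩
      · obtain ⟨y, hy, hey⟩ := edge_eq he hze
        rw [hey]
        exact Finset.mem_image.2 ⟨y, hy, rfl⟩
  calc (edgesIn T s).card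
      ≤ (edgesIn T (s \ {u, v}) ∪ (NbrS T s v).image (fun y => s(v, y))).card :=
        Finset.card_le_card hsub
    _ ≤ (edgesIn T (s \ {u, v})).card + ((NbrS T s v).image (fun y => s(v, y))).card :=
        Finset.card_union_le _ _
    _ ≤ _ := by
        have := Finset.card_image_le (s := NbrS T s v) (f := fun y => s(v, y))
        omega

lemma edgesIn_card_le_three {s : Finset V} {u v w : V} (hu : u ∈ s)
    (hlu : NbrS T s u = {v}) (hlv : NbrS T s v = {u, w}) :
    (edgesIn T s).card ≤ (edgesIn T (s \ {u, v, w})).card + 1 + (NbrS T s w).card := by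
  have hadj : T.Adj u v := (mem_nbrS.1 (hlu ▸ Finset.mem_singleton_self v)).2
  have hw : w ∈ NbrS T s v := hlv ▸ Finset.mem_insert.2 (Or.inr (Finset.mem_singleton_self w))
  have hadjvw : T.Adj v w := (mem_nbrS.1 hw).2
  have hws : w ∈ s := (mem_nbrS.1 hw).1
  have hvs : v ∈ s := (mem_nbrS.1 (hlu ▸ Finset.mem_singleton_self v)).1
  have hsub : edgesIn T s ⊆ (edgesIn T (s \ {u, v, w}) ∪ {s(u, v)}) ∪
      (NbrS T s w).image (fun y => s(w, y)) := by
    intro e he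
    rw [Finset.mem_union, Finset.mem_union]
    by_cases hcase : ∀ x ∈ e, x ∉ ({u, v, w} : Finset V)
    · left; left
      rcases mem_edgesIn.1 he with ⟨h1, h2⟩
      exact mem_edgesIn.2 ⟨h1, fun x hx => Finset.mem_sdiff.2 ⟨h2 x hx, hcase x hx⟩⟩
    · push_neg at hcase
      obtain ⟨z, hze, hzuv⟩ := hcase
      rw [Finset.mem_insert, Finset.mem_insert, Finset.mem_singleton] at hzuv
      rcases hzuv with rfl | rfl | rfl
      · -- z = u
        obtain ⟨y, hy, hey⟩ := edge_eq he hze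
        rw [hlu, Finset.mem_singleton] at hy
        subst hy
        left; right
        rw [hey]
        exact Finset.mem_singleton_self _
      · -- z = v
        obtain ⟨y, hy, hey⟩ := edge_eq he hze
        rw [hlv, Finset.mem_insert, Finset.mem_singleton] at hy
        rcases hy with rfl | rfl
        · left; right
          rw [hey, Sym2.eq_swap]
          exact Finset.mem_singleton_self _
        · right
          rw [hey, Sym2.eq_swap]
          exact Finset.mem_image.2 ⟨z, mem_nbrS.2 ⟨hvs, hadjvw.symm⟩, rfl⟩
      · -- z = w
        obtain ⟨y, hy, hey⟩ := edge_eq he hze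
        right
        rw [hey]
        exact Finset.mem_image.2 ⟨y, hy, rfl⟩
  have h1 := Finset.card_le_card hsub
  have h2 := Finset.card_union_le (edgesIn T (s \ {u, v, w}) ∪ {s(u, v)})
    ((NbrS T s w).image (fun y => s(w, y)))
  have h3 := Finset.card_union_le (edgesIn T (s \ {u, v, w})) ({s(u, v)} : Finset (Sym2 V))
  have h4 := Finset.card_image_le (s := NbrS T s w) (f := fun y => s(w, y))
  have h5 : ({s(u, v)} : Finset (Sym2 V)).card = 1 := Finset.card_singleton _
  omega

open SimpleGraph.Walk in
/-- the head of a maximum-length path in s is a leaf (within s) -/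
lemma leaf_of_max_path (hac : T.IsAcyclic) {s : Finset V} {u v z : V}
    (h : T.Adj u v) (q : T.Walk v z) (hp : (Walk.cons h q).IsPath)
    (hsup : ∀ x ∈ (Walk.cons h q).support, x ∈ s)
    (hmax : ∀ (a b : V) (r : T.Walk a b), r.IsPath → (∀ x ∈ r.support, x ∈ s) →
      r.length ≤ q.length + 1) :
    NbrS T s u = {v} := by
  rw [Finset.eq_singleton_iff_unique_mem]
  constructor
  · exact mem_nbrS.2 ⟨hsup v (by simp [Walk.support_cons]), h⟩
  · intro y hy
    rcases mem_nbrS.1 hy with ⟨hys, hadjuy⟩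
    by_contra hyv
    have hyu : y ≠ u := fun hh => T.loopless.irrefl u (hh ▸ hadjuy)
    have hp' := hp
    rw [Walk.cons_isPath_iff] at hp'
    obtain ⟨hqp, hunq⟩ := hp'
    by_cases hsupp : y ∈ q.support
    · -- cycle contradiction
      have hP2 : (Walk.cons h (q.takeUntil y hsupp)).IsPath := by
        rw [Walk.cons_isPath_iff]
        exact ⟨hqp.takeUntil hsupp, fun hc => hunq (Walk.support_takeUntil_subset _ hsupp hc)⟩
      have := hac.path_unique ⟨Walk.cons h (q.takeUntil y hsupp), hP2⟩ (Path.singleton hadjuy)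
      have hlen := congrArg (fun p => p.1.length) this
      simp only [Path.singleton, Walk.length_cons, Walk.length_nil] at hlen
      have h0 : (q.takeUntil y hsupp).length = 0 := by omega
      exact hyv (Walk.eq_of_length_eq_zero h0).symm
    · -- extend the path, contradiction with maximality
      have hr : (Walk.cons hadjuy.symm (Walk.cons h q)).IsPath := by
        rw [Walk.cons_isPath_iff]
        refine ⟨hp, ?_⟩
        rw [Walk.support_cons]
        intro hc
        rcases List.mem_cons.1 hc with h1 | h1
        · exact hyu h1
        · exact hsupp h1
      have := hmax _ _ _ hr (by
        intro x hx
        rw [Walk.support_cons] at hx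
        rcases List.mem_cons.1 hx with h1 | h1
        · exact h1 ▸ hys
        · exact hsup x h1)
      simp only [Walk.length_cons] at this
      omega

open SimpleGraph.Walk in
lemma exists_structure (hac : T.IsAcyclic) {s : Finset V} (hne : s.Nonempty)
    (hnoiso : ∀ z ∈ s, (NbrS T s z).Nonempty) :
    ∃ u v, u ∈ s ∧ NbrS T s u = {v} ∧
      ((∃ x, x ∈ NbrS T s v ∧ x ≠ u ∧ NbrS T s x = {v}) ∨ (∃ w, NbrS T s v ⊆ {u, w})) := by
  classical
  set L : Set ℕ := {l | ∃ (a b : V) (r : T.Walk a b), r.IsPath ∧ (∀ x ∈ r.support, x ∈ s)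
    ∧ r.length = l} with hL
  have h1L : 1 ∈ L := by
    obtain ⟨a, ha⟩ := hne
    obtain ⟨y, hy⟩ := hnoiso a ha
    rcases mem_nbrS.1 hy with ⟨hys, hadj⟩
    refine ⟨a, y, Walk.cons hadj Walk.nil, (Path.singleton hadj).2, ?_, rfl⟩
    intro x hx
    simp only [Walk.support_cons, Walk.support_nil] at hx
    rcases List.mem_cons.1 hx with h1 | h1
    · exact h1 ▸ ha
    · rw [List.mem_singleton.1 h1]; exact hys
  have hLne : L.Nonempty := ⟨1, h1L⟩
  have hLbdd : BddAbove L := by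
    refine ⟨Fintype.card V, ?_⟩
    rintro l ⟨a, b, r, hp, _, hlen⟩
    exact hlen ▸ le_of_lt hp.length_lt
  obtain ⟨a, b, r, hpath, hsupp, hlen⟩ := Nat.sSup_mem hLne hLbdd
  have hone : 1 ≤ sSup L := le_csSup hLbdd h1L
  have hmem_le : ∀ (a' b' : V) (r' : T.Walk a' b'), r'.IsPath → (∀ x ∈ r'.support, x ∈ s) →
      r'.length ≤ sSup L := by
    intro a' b' r' hp' hs'
    exact le_csSup hLbdd ⟨a', b', r', hp', hs', rfl⟩
  cases r with
  | nil =>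
    simp only [Walk.length_nil] at hlen
    omega
  | @cons _ v _ h q =>
    rw [Walk.length_cons] at hlen
    have hmax : ∀ (a' b' : V) (r' : T.Walk a' b'), r'.IsPath → (∀ x ∈ r'.support, x ∈ s) →
        r'.length ≤ q.length + 1 := by
      intro a' b' r' hp' hs'
      have := hmem_le a' b' r' hp' hs'
      omega
    have hlu : NbrS T s a = {v} := leaf_of_max_path hac h q hpath hsupp hmax
    have has : a ∈ s := hsupp a (Walk.start_mem_support _)
    refine ⟨a, v, has, hlu, ?_⟩
    by_cases hcase : ∃ x, x ∈ NbrS T s v ∧ x ≠ a ∧ NbrS T s x = {v}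
    · exact Or.inl hcase
    · right
      push_neg at hcase
      cases q with
      | nil =>
        refine ⟨a, ?_⟩
        intro x hx
        rcases mem_nbrS.1 hx with ⟨hxs, hadjvx⟩
        rw [Finset.mem_insert, Finset.mem_singleton]
        left
        by_contra hxu
        have hxv : x ≠ b := fun hh => T.loopless.irrefl b (hh ▸ hadjvx)
        have hp1 : (Walk.cons h.symm Walk.nil : T.Walk b a).IsPath := (Path.singleton h.symm).2
        have hr2 : (Walk.cons hadjvx.symm (Walk.cons h.symm Walk.nil)).IsPath := by
          rw [Walk.cons_isPath_iff]
          refine ⟨hp1, ?_⟩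
          rw [Walk.support_cons, Walk.support_nil]
          intro hc
          rcases List.mem_cons.1 hc with h1 | h1
          · exact hxv h1
          · exact hxu (List.mem_singleton.1 h1)
        have := hmax _ _ _ hr2 (by
          intro y hy
          rw [Walk.support_cons, Walk.support_cons, Walk.support_nil] at hy
          rcases List.mem_cons.1 hy with h1 | h1
          · exact h1 ▸ hxs
          · rcases List.mem_cons.1 h1 with h2 | h2
            · exact h2 ▸ (hsupp b (by simp [Walk.support_cons]))
            · exact (List.mem_singleton.1 h2) ▸ has)
        simp only [Walk.length_cons, Walk.length_nil] at this ⊢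
        omega
      | @cons _ w _ h2 q2 =>
        refine ⟨w, ?_⟩
        intro x hx
        rcases mem_nbrS.1 hx with ⟨hxs, hadjvx⟩
        rw [Finset.mem_insert, Finset.mem_singleton]
        by_contra hmem
        push_neg at hmem
        obtain ⟨hxu, hxw⟩ := hmem
        have hxv : x ≠ v := fun hh => T.loopless.irrefl v (hh ▸ hadjvx)
        have hq : (Walk.cons h2 q2).IsPath := hpath.of_cons
        have hq2 : q2.IsPath := hq.of_cons
        have hvq2 : v ∉ q2.support := by
          have := hq
          rw [Walk.cons_isPath_iff] at this
          exact this.2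
        by_cases hsupx : x ∈ q2.support
        · have hP2 : (Walk.cons h2 (q2.takeUntil x hsupx)).IsPath := by
            rw [Walk.cons_isPath_iff]
            exact ⟨hq2.takeUntil hsupx,
              fun hc => hvq2 (Walk.support_takeUntil_subset _ hsupx hc)⟩
          have := hac.path_unique ⟨Walk.cons h2 (q2.takeUntil x hsupx), hP2⟩
            (Path.singleton hadjvx)
          have hlen2 := congrArg (fun p => p.1.length) this
          simp only [Path.singleton, Walk.length_cons, Walk.length_nil] at hlen2
          have h0 : (q2.takeUntil x hsupx).length = 0 := by omega
          exact hxw (Walk.eq_of_length_eq_zero h0).symm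
        · -- x is the head of another maximum path
          have hxq : x ∉ (Walk.cons h2 q2).support := by
            rw [Walk.support_cons]
            intro hc
            rcases List.mem_cons.1 hc with h1 | h1
            · exact hxv h1
            · exact hsupx h1
          have hr3 : (Walk.cons hadjvx.symm (Walk.cons h2 q2)).IsPath := by
            rw [Walk.cons_isPath_iff]
            exact ⟨hq, hxq⟩
          have hsup3 : ∀ y ∈ (Walk.cons hadjvx.symm (Walk.cons h2 q2)).support, y ∈ s := by
            intro y hy
            rw [Walk.support_cons] at hy
            rcases List.mem_cons.1 hy with h1 | h1
            · exact h1 ▸ hxs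
            · exact hsupp y (by rw [Walk.support_cons]; exact List.mem_cons_of_mem _ h1)
          have hmax3 : ∀ (a' b' : V) (r' : T.Walk a' b'), r'.IsPath →
              (∀ y ∈ r'.support, y ∈ s) → r'.length ≤ (Walk.cons h2 q2).length + 1 := by
            intro a' b' r' hp' hs'
            have := hmem_le a' b' r' hp' hs'
            rw [Walk.length_cons] at hlen ⊢
            omega
          have := leaf_of_max_path hac hadjvx.symm (Walk.cons h2 q2) hr3 hsup3 hmax3
          exact hcase x hx hxu this

lemma edgesIn_iso {s : Finset V} {z : V} (hziso : NbrS T s z = ∅) :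
    edgesIn T s ⊆ edgesIn T (s \ {z}) := by
  intro e he
  rcases mem_edgesIn.1 he with ⟨h1, h2⟩
  refine mem_edgesIn.2 ⟨h1, fun x hx => Finset.mem_sdiff.2 ⟨h2 x hx, ?_⟩⟩
  rw [Finset.mem_singleton]
  rintro rfl
  obtain ⟨y, hy, -⟩ := edge_eq he hx
  rw [hziso] at hy
  exact absurd hy (Finset.notMem_empty y)

theorem main (hac : T.IsAcyclic) (hdeg : ∀ z : V, T.degree z ≤ 3) (s : Finset V) :
    ((mis T s).card : ℝ) ≤ phi ^ (expn T s) := by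
  induction s using Finset.strongInductionOn with
  | _ s IH =>
  rcases Finset.eq_empty_or_nonempty s with rfl | hne
  · -- base case : empty set
    have halph : alph T (∅ : Finset V) = 0 := by
      obtain ⟨A, hA⟩ := exists_mis (T := T) (∅ : Finset V)
      rcases mem_mis.1 hA with ⟨hAs, -, hcard⟩
      rw [← hcard, Finset.card_eq_zero, ← Finset.subset_empty.1 hAs]
    have hmis : mis T (∅ : Finset V) = {∅} := by
      ext A
      rw [mem_mis, halph, Finset.mem_singleton]
      constructor
      · rintro ⟨hAs, -, -⟩; exact Finset.subset_empty.1 hAs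
      · rintro rfl
        exact ⟨Finset.Subset.refl _, fun a ha => absurd ha (Finset.notMem_empty a), rfl⟩
    have hedges : edgesIn T (∅ : Finset V) = ∅ := by
      rw [Finset.eq_empty_iff_forall_notMem]
      intro e he
      induction e with
      | _ a b =>
        exact absurd ((mem_edgesIn.1 he).2 a (Sym2.mem_mk_left a b)) (Finset.notMem_empty a)
    have hexp : expn T (∅ : Finset V) = 0 := by
      unfold expn; rw [halph, hedges]; simp
    rw [hmis, hexp, Finset.card_singleton]
    simp
  by_cases hiso : ∃ z ∈ s, NbrS T s z = ∅
  · -- isolated vertex case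
    obtain ⟨z, hz, hziso⟩ := hiso
    set t := s \ {z} with htdef
    have halph : alph T t + 1 = alph T s := alph_isolated hz hziso
    have hfilter : (mis T s).filter (fun A => z ∈ A) = mis T s := by
      apply Finset.filter_true_of_mem
      intro A hA
      rcases mis_hits hz hA with h | ⟨y, hy, hadj⟩
      · exact h
      · exfalso
        have : y ∈ NbrS T s z := mem_nbrS.2 ⟨(mem_mis.1 hA).1 hy, hadj⟩
        rw [hziso] at this
        exact absurd this (Finset.notMem_empty y)
    have hcount : (mis T s).card = (mis T t).card := by
      rw [← hfilter]
      exact count_eq hz (by rw [hziso]; rfl) halph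
    have htss : t ⊂ s := Finset.sdiff_ssubset (Finset.singleton_subset_iff.2 hz)
      (Finset.singleton_nonempty z)
    have hcardt : t.card + 1 = s.card := by
      rw [htdef, Finset.card_sdiff_of_subset (Finset.singleton_subset_iff.2 hz), Finset.card_singleton]
      have : 1 ≤ s.card := Finset.card_pos.2 ⟨z, hz⟩
      omega
    have hedge : (edgesIn T s).card ≤ (edgesIn T t).card :=
      Finset.card_le_card (edgesIn_iso hziso)
    have hexp : expn T t ≤ expn T s := by
      unfold expn; push_cast; omega
    calc ((mis T s).card : ℝ) = ((mis T t).card : ℝ) := by rw [hcount]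
    _ ≤ phi ^ (expn T t) := IH t htss
    _ ≤ phi ^ (expn T s) := phi_mono hexp
  · -- no isolated vertices
    push_neg at hiso
    have hnoiso : ∀ z ∈ s, (NbrS T s z).Nonempty :=
      fun z hz => hiso z hz
    obtain ⟨u, v, hu, hlu, hstruct⟩ := exists_structure hac hne hnoiso
    have hadj : T.Adj u v := (mem_nbrS.1 (hlu ▸ Finset.mem_singleton_self v)).2
    have hv : v ∈ s := (mem_nbrS.1 (hlu ▸ Finset.mem_singleton_self v)).1
    have huv : u ≠ v := hadj.ne
    set t1 := s \ {u, v} with ht1def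
    have hsub2 : ({u, v} : Finset V) ⊆ s := by
      intro x hx
      rcases Finset.mem_insert.1 hx with rfl | hx
      · exact hu
      · exact (Finset.mem_singleton.1 hx) ▸ hv
    have halph1 : alph T t1 + 1 = alph T s := alph_leaf hu hlu
    have ht1ss : t1 ⊂ s := Finset.sdiff_ssubset hsub2 ⟨u, Finset.mem_insert_self u {v}⟩
    have hcard1 : t1.card + 2 = s.card := by
      rw [ht1def, Finset.card_sdiff_of_subset hsub2, Finset.card_pair huv]
      have := Finset.card_le_card hsub2
      rw [Finset.card_pair huv] at this
      omega
    have hcountu : ((mis T s).filter (fun A => u ∈ A)).card = (mis T t1).card :=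
      count_eq hu (by rw [hlu]) halph1
    have hsplit := mis_split hu hlu
    have hnbrv3 : (NbrS T s v).card ≤ 3 := nbrS_card_le3 hdeg s v
    have hedge1 : (edgesIn T s).card ≤ (edgesIn T t1).card + (NbrS T s v).card :=
      edgesIn_card_le_leaf hu hlu
    rcases hstruct with ⟨x, hxnbr, hxu, hlx⟩ | ⟨w, hwsub⟩
    · -- case A : v has a second leaf neighbor x; no MIS contains v
      have hadjvx : T.Adj v x := (mem_nbrS.1 hxnbr).2
      have hxs : x ∈ s := (mem_nbrS.1 hxnbr).1
      have hnadjux : ¬ T.Adj u x := by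
        intro hux
        have hP2 : (Walk.cons hadj (Walk.cons hadjvx Walk.nil)).IsPath := by
          rw [SimpleGraph.Walk.cons_isPath_iff]
          refine ⟨(Path.singleton hadjvx).2, ?_⟩
          rw [SimpleGraph.Walk.support_cons, SimpleGraph.Walk.support_nil]
          intro hc
          rcases List.mem_cons.1 hc with h1 | h1
          · exact huv h1
          · exact hxu (List.mem_singleton.1 h1).symm
        have := hac.path_unique ⟨_, hP2⟩ (Path.singleton hux)
        have hlen2 := congrArg (fun p => p.1.length) this
        simp [Path.singleton] at hlen2
      have hfv : (mis T s).filter (fun A => v ∈ A) = ∅ := by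
        rw [Finset.eq_empty_iff_forall_notMem]
        intro A hA
        rw [Finset.mem_filter] at hA
        exact v_not_in_mis hu hxs (fun hh => hxu hh.symm) hlu hlx hnadjux hA.1 hA.2
      have hexp : expn T t1 ≤ expn T s := by
        unfold expn; push_cast; omega
      calc ((mis T s).card : ℝ) = ((mis T t1).card : ℝ) := by
            rw [hsplit, hfv, hcountu, Finset.card_empty]; norm_num
      _ ≤ phi ^ (expn T t1) := IH t1 ht1ss
      _ ≤ phi ^ (expn T s) := phi_mono hexp
    · by_cases hvleaf : NbrS T s v = {u}
      · -- case P2 : component {u, v}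
        have hcountv : ((mis T s).filter (fun A => v ∈ A)).card = (mis T t1).card := by
          have h := count_eq hv (t := t1) (by rw [hvleaf, ht1def, Finset.pair_comm]) ?_
          · exact h
          · have := alph_leaf hv hvleaf
            rwa [Finset.pair_comm v u, ← ht1def] at this
        have hedge1' : (edgesIn T s).card ≤ (edgesIn T t1).card + 1 := by
          have := hedge1
          rw [hvleaf, Finset.card_singleton] at this
          omega
        have hexp : expn T t1 ≤ expn T s - 2 := by
          unfold expn; push_cast; omega
        calc ((mis T s).card : ℝ) = 2 * ((mis T t1).card : ℝ) := by
              rw [hsplit, hcountu, hcountv]; push_cast; ring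
        _ ≤ 2 * phi ^ (expn T t1) := by
              have := IH t1 ht1ss
              nlinarith [phi_zpow_pos (expn T t1)]
        _ ≤ 2 * phi ^ (expn T s - 2) := by
              have := phi_mono hexp
              nlinarith [phi_zpow_pos (expn T s - 2)]
        _ ≤ phi ^ (expn T s) := phi_two_mul _
      · -- case B : NbrS s v = {u, w} with w ≠ u
        have husubv : u ∈ NbrS T s v := mem_nbrS.2 ⟨hu, hadj.symm⟩
        have hwmem : w ∈ NbrS T s v := by
          by_contra hwmem
          apply hvleaf
          apply Finset.Subset.antisymm
          · intro y hy
            rcases Finset.mem_insert.1 (hwsub hy) with h1 | h1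
            · exact h1 ▸ Finset.mem_singleton_self u
            · exact absurd ((Finset.mem_singleton.1 h1) ▸ hy) hwmem
          · exact Finset.singleton_subset_iff.2 husubv
        have hlv : NbrS T s v = {u, w} := by
          apply Finset.Subset.antisymm hwsub
          intro y hy
          rcases Finset.mem_insert.1 hy with rfl | h1
          · exact husubv
          · exact (Finset.mem_singleton.1 h1) ▸ hwmem
        have huw : u ≠ w := by
          rintro rfl
          apply hvleaf
          apply Finset.Subset.antisymm
          · intro y hy
            rcases Finset.mem_insert.1 (hwsub hy) with h1 | h1
            · exact h1 ▸ Finset.mem_singleton_self u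
            · exact (Finset.mem_singleton.1 h1) ▸ Finset.mem_singleton_self u
          · exact Finset.singleton_subset_iff.2 husubv
        have hadjvw : T.Adj v w := (mem_nbrS.1 hwmem).2
        have hws : w ∈ s := (mem_nbrS.1 hwmem).1
        have hvw : v ≠ w := hadjvw.ne
        set t2 := s \ {u, v, w} with ht2def
        have ht2eq : t2 = s \ insert v (NbrS T s v) := by
          rw [hlv, ht2def]
          congr 1
          ext y
          simp only [Finset.mem_insert, Finset.mem_singleton]
          tauto
        have ht2sub : t2 ⊆ s := Finset.sdiff_subset
        have hvt2 : v ∉ t2 := by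
          rw [ht2def]
          simp
        have hut2 : u ∉ t2 := by
          rw [ht2def]; simp
        have hsub3 : ({u, v, w} : Finset V) ⊆ s := by
          intro y hy
          rcases Finset.mem_insert.1 hy with rfl | hy
          · exact hu
          · rcases Finset.mem_insert.1 hy with rfl | hy
            · exact hv
            · exact (Finset.mem_singleton.1 hy) ▸ hws
        have hcard3 : ({u, v, w} : Finset V).card = 3 :=
          Finset.card_eq_three.2 ⟨u, v, w, huv, huw, hvw, rfl⟩
        have hcard2 : t2.card + 3 = s.card := by
          rw [ht2def, Finset.card_sdiff_of_subset hsub3, hcard3]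
          have := Finset.card_le_card hsub3
          rw [hcard3] at this
          omega
        have ht2ss : t2 ⊂ s := Finset.sdiff_ssubset hsub3 ⟨u, Finset.mem_insert_self _ _⟩
        have hedge1' : (edgesIn T s).card ≤ (edgesIn T t1).card + 2 := by
          have := hedge1
          rw [hlv, Finset.card_pair huw] at this
          omega
        have hedge2 : (edgesIn T s).card ≤ (edgesIn T t2).card + 4 := by
          have h3 := edgesIn_card_le_three hu hlu hlv
          have h4 := nbrS_card_le3 hdeg s w
          rw [← ht2def] at h3
          omega
        have hexp1 : expn T t1 ≤ expn T s - 1 := by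
          unfold expn; push_cast; omega
        -- now split on whether alph T t2 + 1 = alph T s
        by_cases halph2 : alph T t2 + 1 = alph T s
        · have hcountv : ((mis T s).filter (fun A => v ∈ A)).card = (mis T t2).card :=
            count_eq hv ht2eq halph2
          have hexp2 : expn T t2 ≤ expn T s - 2 := by
            unfold expn; push_cast; omega
          calc ((mis T s).card : ℝ)
              = ((mis T t1).card : ℝ) + ((mis T t2).card : ℝ) := by
                rw [hsplit, hcountu, hcountv]; push_cast; ring
          _ ≤ phi ^ (expn T t1) + phi ^ (expn T t2) :=
                add_le_add (IH t1 ht1ss) (IH t2 ht2ss)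
          _ ≤ phi ^ (expn T s - 1) + phi ^ (expn T s - 2) :=
                add_le_add (phi_mono hexp1) (phi_mono hexp2)
          _ ≤ phi ^ (expn T s) := phi_fib _
        · -- no MIS contains v
          have hfv : (mis T s).filter (fun A => v ∈ A) = ∅ := by
            rw [Finset.eq_empty_iff_forall_notMem]
            intro A hA
            rw [Finset.mem_filter] at hA
            obtain ⟨hAmis, hvA⟩ := hA
            rcases mem_mis.1 hAmis with ⟨hAs, hI, hcard⟩
            apply halph2
            apply le_antisymm
            · exact alph_succ_le hu ht2sub hut2 (by
                intro y hy
                rw [hlu, Finset.mem_singleton] at hy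
                exact hy ▸ hvt2)
            · -- A.erase v ⊆ t2 witnesses alph t2 ≥ alph s - 1
              have hBsub : A.erase v ⊆ t2 := by
                intro y hy
                have hyv : y ≠ v := Finset.ne_of_mem_erase hy
                have hyA : y ∈ A := Finset.mem_of_mem_erase hy
                rw [ht2eq, Finset.mem_sdiff]
                refine ⟨hAs hyA, ?_⟩
                intro hc
                rcases Finset.mem_insert.1 hc with h1 | h1
                · exact hyv h1
                · exact hI v hvA y hyA (mem_nbrS.1 h1).2
              have := card_le_alph hBsub (ind_mono (Finset.erase_subset _ _) hI)
              rw [Finset.card_erase_of_mem hvA, hcard] at this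
              have hpos : 1 ≤ alph T s := by
                rw [← hcard]
                exact Finset.card_pos.2 ⟨v, hvA⟩
              omega
          have hexp : expn T t1 ≤ expn T s := by omega
          calc ((mis T s).card : ℝ) = ((mis T t1).card : ℝ) := by
                rw [hsplit, hfv, hcountu, Finset.card_empty]; norm_num
          _ ≤ phi ^ (expn T t1) := IH t1 ht1ss
          _ ≤ phi ^ (expn T s) := phi_mono hexp

lemma ind_iff {A : Finset V} : T.IsIndepSet' (↑A : Set V) ↔ Ind T A := by
  constructor
  · intro h u hu v hv hadj
    by_cases huv : u = v
    · exact T.loopless.irrefl v (huv ▸ hadj)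
    · exact h (Finset.mem_coe.2 hu) (Finset.mem_coe.2 hv) huv hadj
  · intro h u hu v hv _ hadj
    exact h u (Finset.mem_coe.1 hu) v (Finset.mem_coe.1 hv) hadj

lemma indepNum_eq : _root_.indepNum T = alph T Finset.univ := by
  have hbdd : ∀ k ∈ {k | ∃ A : Finset V, T.IsIndepSet' ↑A ∧ A.card = k},
      k ≤ alph T Finset.univ := by
    rintro k ⟨A, hA, rfl⟩
    exact card_le_alph (Finset.subset_univ A) (ind_iff.1 hA)
  apply le_antisymm
  · apply csSup_le
    · exact ⟨0, ∅, by
        constructor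
        · intro a ha; exact absurd ha (by simp)
        · exact Finset.card_empty⟩
    · exact hbdd
  · apply le_csSup ⟨alph T Finset.univ, hbdd⟩
    obtain ⟨A, hA⟩ := exists_mis (T := T) Finset.univ
    rcases mem_mis.1 hA with ⟨-, hI, hcard⟩
    exact ⟨A, ind_iff.2 hI, hcard⟩

lemma numMaxIndep_eq : numMaxIndep T = (mis T Finset.univ).card := by
  have hset : {A : Finset V | T.IsIndepSet' ↑A ∧ A.card = _root_.indepNum T}
      = (↑(mis T Finset.univ) : Set (Finset V)) := by
    ext A
    simp only [Set.mem_setOf_eq, Finset.mem_coe, mem_mis, indepNum_eq, ind_iff]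
    constructor
    · rintro ⟨h1, h2⟩; exact ⟨Finset.subset_univ A, h1, h2⟩
    · rintro ⟨-, h1, h2⟩; exact ⟨h1, h2⟩
  rw [numMaxIndep, hset, Set.ncard_coe_finset]

lemma edgesIn_univ : edgesIn T Finset.univ = T.edgeFinset := by
  apply Finset.filter_true_of_mem
  intro e _ x _
  exact Finset.mem_univ x

end MISAux

theorem stmt15 {V : Type*} [Fintype V] (T : SimpleGraph V) (hT : T.IsTree)
    (hsub : ∀ v : V, (T.neighborSet v).ncard ≤ 3) (n α : ℕ)
    (hn : Fintype.card V = n) (hα : _root_.indepNum T = α) :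
    (numMaxIndep T : ℝ) ≤ ((1 + Real.sqrt 5) / 2) ^ (2 * (n : ℤ) - 3 * (α : ℤ) + 1) := by
  classical
  have hdeg : ∀ z : V, T.degree z ≤ 3 := by
    intro z
    have h := hsub z
    rw [Set.ncard_eq_toFinset_card'] at h
    rwa [SimpleGraph.degree, SimpleGraph.neighborFinset_def]
  have hmain := MISAux.main (T := T) hT.IsAcyclic hdeg Finset.univ
  have hedge : T.edgeFinset.card + 1 = Fintype.card V := hT.card_edgeFinset
  have hαeq : MISAux.alph T Finset.univ = α := by rw [← MISAux.indepNum_eq, hα]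
  have hexp : MISAux.expn T Finset.univ = 2 * (n : ℤ) - 3 * (α : ℤ) + 1 := by
    unfold MISAux.expn
    rw [MISAux.edgesIn_univ, hαeq, Finset.card_univ, hn]
    have hn1 : 1 ≤ n := by
      have := Fintype.card_pos_iff.2 hT.isConnected.nonempty
      omega
    rw [hn] at hedge
    push_cast
    omega
  rw [MISAux.numMaxIndep_eq]
  have hphi : MISAux.phi = (1 + Real.sqrt 5) / 2 := rfl
  rw [← hphi, ← hexp]
  exact hmain
end
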